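/- arXiv:1510.01286 — 9 statements merged into one kernel-verified Lean document; each statement's English description precedes it below -/
import Mathlib

section
/- Let p ≥ 3 be an integer and set r₋ = p(2p−1), r₊ = p(2p+1). Then: (1) a natural number x with x ≤ (p−1)r₊ lies in S(r₋,r₊) if and only if x = a·r₋ + b·r₊ for some integers a,b ≥ 0 with a+b ≤ p−1, and this representation is unique; (2) for nonnegative integers a,b,c,d with a+b ≤ p−1 and c+d ≤ p−1, one has a·r₋ + b·r₊ < c·r₋ + d·r₊ if and only if either a+b < c+d, or a+b = c+d and b < d. In particular, as an ordered set, S(r₋,r₊) ∩ [0,(p−1)r₊] is {0; r₋, r₊; 2r₋, r₋+r₊, 2r₊; … ; (p−1)r₋, (p−2)r₋+r₊, …, (p−1)r₊}. -/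
private lemma val_eq' (p a b : ℕ) (hp : 3 ≤ p) :
    a * (p * (2 * p - 1)) + b * (p * (2 * p + 1)) =
      (a + b) * (p * (2 * p - 1)) + b * (2 * p) := by
  have h : 2 * p + 1 = (2 * p - 1) + 2 := by omega
  rw [h]; ring

private lemma rem_lt' (p b : ℕ) (hp : 3 ≤ p) (hb : b + 1 ≤ p) :
    b * (2 * p) < p * (2 * p - 1) := by
  set q := 2 * p - 1 with hq
  have h2 : 2 * p = q + 1 := by omega
  have hpq : p + 2 ≤ q := by omega
  rw [h2]
  calc b * (q + 1) = b * q + b := by ring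
    _ < b * q + q := by omega
    _ ≤ (b + 1) * q := by ring_nf; omega
    _ ≤ p * q := Nat.mul_le_mul_right q hb

private lemma split_eq' (r s t x y : ℕ) (hx : x < r) (hy : y < r)
    (h : s * r + x = t * r + y) : s = t ∧ x = y := by
  have hx' : (s * r + x) % r = x := by
    rw [Nat.add_comm, Nat.add_mul_mod_self_right]; exact Nat.mod_eq_of_lt hx
  have hy' : (t * r + y) % r = y := by
    rw [Nat.add_comm, Nat.add_mul_mod_self_right]; exact Nat.mod_eq_of_lt hy
  have hxy : x = y := by rw [← hx', ← hy', h]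
  constructor
  · have : s * r = t * r := by omega
    exact Nat.eq_of_mul_eq_mul_right (by omega) this
  · exact hxy

/-- structure of the semigroup `S(r₋, r₊)` with `r₋ = p(2p-1)`, `r₊ = p(2p+1)`
in the range `[0, (p-1)r₊]`: membership characterization, uniqueness of the representation,
and the ordering of the elements `a·r₋ + b·r₊`. -/
theorem stmt_1 (p : ℕ) (hp : 3 ≤ p) :
    (∀ x : ℕ, x ≤ (p - 1) * (p * (2 * p + 1)) →
      (x ∈ AddSubmonoid.closure ({p * (2 * p - 1), p * (2 * p + 1)} : Set ℕ) ↔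
        ∃ a b : ℕ, a + b ≤ p - 1 ∧ x = a * (p * (2 * p - 1)) + b * (p * (2 * p + 1)))) ∧
    (∀ a b c d : ℕ, a + b ≤ p - 1 → c + d ≤ p - 1 →
      a * (p * (2 * p - 1)) + b * (p * (2 * p + 1)) =
        c * (p * (2 * p - 1)) + d * (p * (2 * p + 1)) →
      a = c ∧ b = d) ∧
    (∀ a b c d : ℕ, a + b ≤ p - 1 → c + d ≤ p - 1 →
      (a * (p * (2 * p - 1)) + b * (p * (2 * p + 1)) <
          c * (p * (2 * p - 1)) + d * (p * (2 * p + 1)) ↔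
        a + b < c + d ∨ (a + b = c + d ∧ b < d))) := by
  set r := p * (2 * p - 1) with hr
  have hrpos : 0 < r := by
    have : 1 ≤ 2 * p - 1 := by omega
    exact Nat.mul_pos (by omega) this
  refine ⟨?_, ?_, ?_⟩
  · intro x hx
    constructor
    · intro hmem
      rw [AddSubmonoid.mem_closure_pair] at hmem
      obtain ⟨u, v, huv⟩ := hmem
      simp only [smul_eq_mul] at huv
      refine ⟨u, v, ?_, huv.symm⟩
      by_contra hcon
      push_neg at hcon
      have h1 : p ≤ u + v := by omega
      have h2 : x = (u + v) * r + v * (2 * p) := by rw [← huv]; exact val_eq' p u v hp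
      have h3 : p * r ≤ (u + v) * r := Nat.mul_le_mul_right r h1
      -- p * r = (p-1) * r₊ + p
      have h4 : (p - 1) * (p * (2 * p + 1)) + p = p * r := by
        have e1 : 2 * p - 1 = 2 * p - 1 := rfl
        obtain ⟨m, rfl⟩ : ∃ m, p = m + 3 := ⟨p - 3, by omega⟩
        have e2 : 2 * (m + 3) - 1 = 2 * m + 5 := by omega
        have e3 : (m + 3) - 1 = m + 2 := by omega
        rw [hr, e2, e3]; ring
      omega
    · rintro ⟨a, b, hab, rfl⟩
      rw [AddSubmonoid.mem_closure_pair]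
      exact ⟨a, b, by simp [smul_eq_mul]⟩
  · intro a b c d hab hcd h
    rw [val_eq' p a b hp, val_eq' p c d hp, ← hr] at h
    have h1 := split_eq' r (a + b) (c + d) (b * (2 * p)) (d * (2 * p))
      (rem_lt' p b hp (by omega)) (rem_lt' p d hp (by omega)) h
    have hbd : b = d := Nat.eq_of_mul_eq_mul_right (by omega) h1.2
    omega
  · intro a b c d hab hcd
    rw [val_eq' p a b hp, val_eq' p c d hp, ← hr]
    have hb : b * (2 * p) < r := rem_lt' p b hp (by omega)
    have hd : d * (2 * p) < r := rem_lt' p d hp (by omega)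
    constructor
    · intro h
      rcases Nat.lt_trichotomy (a + b) (c + d) with h1 | h1 | h1
      · exact Or.inl h1
      · refine Or.inr ⟨h1, ?_⟩
        rw [h1] at h
        have : b * (2 * p) < d * (2 * p) := by omega
        exact Nat.lt_of_mul_lt_mul_right this
      · exfalso
        have h2 : (c + d + 1) * r ≤ (a + b) * r := Nat.mul_le_mul_right r (by omega)
        have h3 : (c + d + 1) * r = (c + d) * r + r := by ring
        omega
    · rintro (h | ⟨h1, h2⟩)
      · have h2 : (a + b + 1) * r ≤ (c + d) * r := Nat.mul_le_mul_right r (by omega)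
        have h3 : (a + b + 1) * r = (a + b) * r + r := by ring
        omega
      · have h3 : b * (2 * p) < d * (2 * p) :=
          Nat.mul_lt_mul_of_pos_right h2 (by omega)
        rw [h1]; omega
end

section
/- Let p ≥ 3 be an integer, r₋ = p(2p−1), r₊ = p(2p+1), w = (2p−1)(2p+1), N_p = p(2p−1)(2p+1) − p(2p−1) − p(2p+1) − (2p−1)(2p+1), and S_{Y_p} = S(r₋,r₊,w) ∩ [0,N_p]. If a,b ≥ 0 are integers and x := a·r₋ + b·r₊ satisfies x ≤ 2r₋ + (p−3)r₊, then (as integers) x < N_p − (p−a−1)r₋ − (p−b−3)r₊, and moreover N_p − (p−a−1)r₋ − (p−b−3)r₊ < y for every y ∈ S_{Y_p} with y > x (i.e., the integer N_p − (p−a−1)r₋ − (p−b−3)r₊ lies strictly between x and the positive successor of x in S_{Y_p}). -/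
lemma mem_closure_triple {x1 x2 x3 y : ℤ}
    (h : y ∈ AddSubmonoid.closure ({x1, x2, x3} : Set ℤ)) :
    ∃ c d e : ℕ, y = (c:ℤ) * x1 + d * x2 + e * x3 := by
  induction h using AddSubmonoid.closure_induction with
  | mem z hz =>
    rcases hz with rfl | rfl | rfl
    · exact ⟨1, 0, 0, by push_cast; ring⟩
    · exact ⟨0, 1, 0, by push_cast; ring⟩
    · exact ⟨0, 0, 1, by push_cast; ring⟩
  | zero => exact ⟨0, 0, 0, by push_cast; ring⟩
  | add y z _ _ hy hz =>
    obtain ⟨c1, d1, e1, rfl⟩ := hy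
    obtain ⟨c2, d2, e2, rfl⟩ := hz
    exact ⟨c1+c2, d1+d2, e1+e2, by push_cast; ring⟩

/-- for `p ≥ 3`, `r₋ = p(2p-1)`, `r₊ = p(2p+1)`, `w = (2p-1)(2p+1)`,
`N_p = p(2p-1)(2p+1) - p(2p-1) - p(2p+1) - (2p-1)(2p+1)`, and `x = a·r₋ + b·r₊ ≤ 2r₋ + (p-3)r₊`
with `a, b ≥ 0`, the integer `N_p - (p-a-1)r₋ - (p-b-3)r₊` lies strictly between `x` and
every element of `S_{Y_p} = S(r₋,r₊,w) ∩ [0,N_p]` strictly greater than `x`. -/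
theorem stmt_2 (p : ℤ) (hp : 3 ≤ p) (a b : ℤ) (ha : 0 ≤ a) (hb : 0 ≤ b)
    (hx : a * (p * (2*p - 1)) + b * (p * (2*p + 1)) ≤
        2 * (p * (2*p - 1)) + (p - 3) * (p * (2*p + 1))) :
    a * (p * (2*p - 1)) + b * (p * (2*p + 1)) <
      (p * (2*p - 1) * (2*p + 1) - p * (2*p - 1) - p * (2*p + 1) - (2*p - 1) * (2*p + 1))
        - (p - a - 1) * (p * (2*p - 1)) - (p - b - 3) * (p * (2*p + 1)) ∧
    ∀ y : ℤ,
      y ∈ AddSubmonoid.closure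
          ({p * (2*p - 1), p * (2*p + 1), (2*p - 1) * (2*p + 1)} : Set ℤ) →
      y ≤ p * (2*p - 1) * (2*p + 1) - p * (2*p - 1) - p * (2*p + 1) - (2*p - 1) * (2*p + 1) →
      a * (p * (2*p - 1)) + b * (p * (2*p + 1)) < y →
      (p * (2*p - 1) * (2*p + 1) - p * (2*p - 1) - p * (2*p + 1) - (2*p - 1) * (2*p + 1))
        - (p - a - 1) * (p * (2*p - 1)) - (p - b - 3) * (p * (2*p + 1)) < y := by
  have hT : (p * (2*p - 1) * (2*p + 1) - p * (2*p - 1) - p * (2*p + 1) - (2*p - 1) * (2*p + 1))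
        - (p - a - 1) * (p * (2*p - 1)) - (p - b - 3) * (p * (2*p + 1))
      = a * (p * (2*p - 1)) + b * (p * (2*p + 1)) + (p + 1) := by ring
  constructor
  · rw [hT]; linarith
  · intro y hy hyN hxy
    obtain ⟨c, d, e, rfl⟩ := mem_closure_triple hy
    rw [hT]
    by_contra hcon
    push_neg at hcon
    clear hy hT
    obtain ⟨C, hC0, hCe⟩ : ∃ C : ℤ, 0 ≤ C ∧ (c:ℤ) = C := ⟨c, Int.natCast_nonneg c, rfl⟩
    obtain ⟨D, hD0, hDe⟩ : ∃ D : ℤ, 0 ≤ D ∧ (d:ℤ) = D := ⟨d, Int.natCast_nonneg d, rfl⟩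
    obtain ⟨E, hE0, hEe⟩ : ∃ E : ℤ, 0 ≤ E ∧ (e:ℤ) = E := ⟨e, Int.natCast_nonneg e, rfl⟩
    rw [hCe, hDe, hEe] at hyN hxy hcon
    clear hCe hDe hEe
    -- bounds on a, b
    have ha' : a ≤ p - 1 := by
      by_contra h
      push_neg at h
      have h1 : p * (p * (2*p - 1)) ≤ a * (p * (2*p - 1)) :=
        mul_le_mul_of_nonneg_right (by linarith) (by nlinarith)
      have h2 : 0 ≤ b * (p * (2*p + 1)) := mul_nonneg hb (by nlinarith)
      nlinarith
    have hb' : b ≤ p - 2 := by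
      by_contra h
      push_neg at h
      have h1 : (p - 1) * (p * (2*p + 1)) ≤ b * (p * (2*p + 1)) :=
        mul_le_mul_of_nonneg_right (by linarith) (by nlinarith)
      have h2 : 0 ≤ a * (p * (2*p - 1)) := mul_nonneg ha (by nlinarith)
      nlinarith
    -- bound on E
    have hE3 : E ≤ p - 3 := by
      by_contra h
      push_neg at h
      have h1 : (p - 2) * ((2*p - 1) * (2*p + 1)) ≤ E * ((2*p - 1) * (2*p + 1)) :=
        mul_le_mul_of_nonneg_right (by linarith) (by nlinarith)
      have h2 : 0 ≤ C * (p * (2*p - 1)) := mul_nonneg hC0 (by nlinarith)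
      have h3 : 0 ≤ D * (p * (2*p + 1)) := mul_nonneg hD0 (by nlinarith)
      nlinarith
    -- K with s + E = p * K
    obtain ⟨K, hK⟩ : ∃ K : ℤ,
        (C * (p * (2*p - 1)) + D * (p * (2*p + 1)) + E * ((2*p - 1) * (2*p + 1))
          - (a * (p * (2*p - 1)) + b * (p * (2*p + 1)))) + E = p * K :=
      ⟨(C - a) * (2*p - 1) + (D - b) * (2*p + 1) + 4*p*E, by ring⟩
    have hK1 : K = 1 := by
      have h1 : 1 ≤ K := by
        by_contra h
        push_neg at h
        have : p * K ≤ 0 := mul_nonpos_of_nonneg_of_nonpos (by linarith) (by linarith)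
        linarith
      have h2 : K ≤ 1 := by
        by_contra h
        push_neg at h
        have : p * 2 ≤ p * K := mul_le_mul_of_nonneg_left (by linarith) (by linarith)
        linarith
      omega
    rw [hK1, mul_one] at hK
    -- hK : (y - x) + E = p
    obtain ⟨k, hkdef⟩ : ∃ k : ℤ, k = 2*((C * (p * (2*p - 1)) + D * (p * (2*p + 1))
        + E * ((2*p - 1) * (2*p + 1)) - (a * (p * (2*p - 1)) + b * (p * (2*p + 1)))) - p)
        - (C - a) - (D - b) := ⟨_, rfl⟩
    have key : p * (((D - b) - (C - a)) - 1 - 2*(p*k)) = 0 := by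
      rw [hkdef]
      linear_combination (-(4*p^2 - 1)) * hK
    have hvu : (D - b) - (C - a) = 1 + 2*(p*k) := by
      rcases mul_eq_zero.mp key with h | h
      · linarith
      · linarith
    -- extract q = p*k as an atom
    obtain ⟨q, hq⟩ : ∃ q : ℤ, p * k = q := ⟨_, rfl⟩
    rw [hq] at hvu
    -- k is odd
    have hkodd : k % 2 = 1 := by omega
    -- m ≤ 0 translations:
    have hk0 : 0 ≤ k := by
      by_contra h
      push_neg at h
      have hkle : k ≤ -1 := by omega
      have hmul : (2*p - 1) * k ≤ (2*p - 1) * (-1) :=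
        mul_le_mul_of_nonneg_left hkle (by linarith)
      -- (2p-1)*k = 2q - k ; 2q = (D-b)-(C-a)-1 ; k = 2m - u - v
      linarith [hmul, hq, hvu, hkdef, hK, hb', hD0]
    have hk1 : 1 ≤ k := by omega
    have hmul2 : (2*p + 1) * 1 ≤ (2*p + 1) * k :=
      mul_le_mul_of_nonneg_left hk1 (by linarith)
    linarith [hmul2, hq, hvu, hkdef, hK, ha', hC0]
end

section
/- Let p ≥ 3 be an integer, with r₋ = p(2p−1), r₊ = p(2p+1), w = (2p−1)(2p+1), N_p = 4p³ − 8p² − p + 1, and let (X̃_{Y_p}, Δ̃_{Y_p}) be the reduced form of the abstract delta sequence (X_{Y_p}, Δ_{Y_p}) of Σ(p,2p−1,2p+1). Write S̃ for the set of elements of X̃_{Y_p} on which Δ̃_{Y_p} is positive. Then: (i) S̃ ∩ [0, 2r₋+(p−3)r₊] = (S(r₋,r₊) ∩ [0, 2r₋+(p−3)r₊]) ∖ {(p−2)r₊}; (ii) if x = a·r₋ + b·r₊ with a,b ≥ 0 lies in S̃ ∩ [0, 2r₋+(p−3)r₊] and x ∉ {(p−2)r₊, (p−1)r₋}, then Δ̃_{Y_p}(x)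 = min{a,b} + 1, while Δ̃_{Y_p}((p−1)r₋) = 2. -/
/-! Abstract delta sequences, their reduced forms, and the sinking condition,
following Stoffregen (after Hom–Karakurt–Lidman and Can–Karakurt). An abstract delta
sequence is a function `Δ : α → ℤ` (nonzero on a finite linearly ordered set `X`,
positive at the minimum of `X`).

`dsRun X Δ x` is the (maximal) run of `x` in `X`: all `y ∈ X` such that every element of
`X` lying (inclusively) between `x` and `y` has the same sign of `Δ` as `x`.

`redSet X Δ` is the underlying set of the reduced form of `(X, Δ)`: for each maximal run
of constant sign it keeps the largest element if the sign is positive and the smallest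
element if the sign is negative.

`redDelta X Δ x` is the value of the reduced delta sequence at `x`: the sum of `Δ` over
the run of `x`. -/

open Classical in
noncomputable def dsRun {α : Type*} [LinearOrder α] (X : Finset α) (Δ : α → ℤ) (x : α) :
    Finset α :=
  X.filter (fun y => ∀ z ∈ X, min x y ≤ z → z ≤ max x y → (0 < Δ z ↔ 0 < Δ x))

open Classical in
noncomputable def redSet {α : Type*} [LinearOrder α] (X : Finset α) (Δ : α → ℤ) : Finset α :=
  X.filter (fun x =>
    (0 < Δ x ∧ ∀ y ∈ dsRun X Δ x, y ≤ x) ∨ (Δ x < 0 ∧ ∀ y ∈ dsRun X Δ x, x ≤ y))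

noncomputable def redDelta {α : Type*} [LinearOrder α] (X : Finset α) (Δ : α → ℤ) (x : α) :
    ℤ :=
  ∑ y ∈ dsRun X Δ x, Δ y

/-- A delta sequence `(X, Δ)` is sinking if: (i) `Δ` is negative at the maximum of `X`;
(ii) each positive value of the reduced sequence is at most the absolute value of the next
negative value of the reduced sequence; (iii) the last positive value of the reduced
sequence is strictly less than the absolute value of its final value. -/
def IsSinking {α : Type*} [LinearOrder α] (X : Finset α) (Δ : α → ℤ) : Prop :=
  (∀ m ∈ X, (∀ x ∈ X, x ≤ m) → Δ m < 0) ∧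
  (∀ x ∈ redSet X Δ, 0 < redDelta X Δ x →
    ∀ y ∈ redSet X Δ, x < y → redDelta X Δ y < 0 →
      (∀ z ∈ redSet X Δ, x < z → redDelta X Δ z < 0 → y ≤ z) →
      redDelta X Δ x ≤ -redDelta X Δ y) ∧
  (∀ x ∈ redSet X Δ, 0 < redDelta X Δ x →
    (∀ z ∈ redSet X Δ, 0 < redDelta X Δ z → z ≤ x) →
    ∀ m ∈ redSet X Δ, (∀ z ∈ redSet X Δ, z ≤ m) →
      redDelta X Δ x < -redDelta X Δ m)

/-! The abstract delta sequence of the Brieskorn sphere `Y_p = Σ(p, 2p-1, 2p+1)`: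
`r₋ = p(2p-1)`, `r₊ = p(2p+1)`, `w = (2p-1)(2p+1)`, `N_p = 4p³ - 8p² - p + 1`,
`S_{Y_p} = S(r₋, r₊, w) ∩ [0, N_p]`, `Q_{Y_p} = {N_p - s : s ∈ S_{Y_p}}`,
`X_{Y_p} = S_{Y_p} ∪ Q_{Y_p}` and `Δ_{Y_p} = +1` on `S_{Y_p}`, `-1` on `Q_{Y_p}`. -/

def rMinus (p : ℕ) : ℕ := p * (2*p - 1)

def rPlus (p : ℕ) : ℕ := p * (2*p + 1)

def wP (p : ℕ) : ℕ := (2*p - 1) * (2*p + 1)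

def NP (p : ℕ) : ℕ := 4*p^3 - 8*p^2 - p + 1

open Classical in
noncomputable def SYp (p : ℕ) : Finset ℕ :=
  (Finset.range (NP p + 1)).filter
    (fun x => x ∈ AddSubmonoid.closure ({rMinus p, rPlus p, wP p} : Set ℕ))

noncomputable def QYp (p : ℕ) : Finset ℕ := (SYp p).image (fun s => NP p - s)

noncomputable def XYp (p : ℕ) : Finset ℕ := SYp p ∪ QYp p

noncomputable def ΔYp (p : ℕ) : ℕ → ℤ := fun x => if x ∈ SYp p then 1 else -1

namespace S4

lemma mem_closure_triple {r s w x : ℕ} :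
    x ∈ AddSubmonoid.closure ({r, s, w} : Set ℕ) ↔ ∃ α β γ : ℕ, x = α*r + β*s + γ*w := by
  constructor
  · intro h
    induction h using AddSubmonoid.closure_induction with
    | mem g hg =>
      simp only [Set.mem_insert_iff, Set.mem_singleton_iff] at hg
      rcases hg with rfl | rfl | rfl
      · exact ⟨1, 0, 0, by ring⟩
      · exact ⟨0, 1, 0, by ring⟩
      · exact ⟨0, 0, 1, by ring⟩
    | zero => exact ⟨0, 0, 0, by ring⟩
    | add x y hx hy ihx ihy =>
      obtain ⟨a1, b1, c1, rfl⟩ := ihx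
      obtain ⟨a2, b2, c2, rfl⟩ := ihy
      exact ⟨a1+a2, b1+b2, c1+c2, by ring⟩
  · rintro ⟨α, β, γ, rfl⟩
    have hr : r ∈ AddSubmonoid.closure ({r, s, w} : Set ℕ) :=
      AddSubmonoid.subset_closure (by simp)
    have hs : s ∈ AddSubmonoid.closure ({r, s, w} : Set ℕ) :=
      AddSubmonoid.subset_closure (by simp)
    have hw : w ∈ AddSubmonoid.closure ({r, s, w} : Set ℕ) :=
      AddSubmonoid.subset_closure (by simp)
    have h1 : α * r = α • r := by simp
    have h2 : β * s = β • s := by simp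
    have h3 : γ * w = γ • w := by simp
    exact add_mem (add_mem (h1 ▸ nsmul_mem hr α) (h2 ▸ nsmul_mem hs β))
      (h3 ▸ nsmul_mem hw γ)

lemma mem_closure_pair {r s x : ℕ} :
    x ∈ AddSubmonoid.closure ({r, s} : Set ℕ) ↔ ∃ α β : ℕ, x = α*r + β*s := by
  constructor
  · intro h
    induction h using AddSubmonoid.closure_induction with
    | mem g hg =>
      simp only [Set.mem_insert_iff, Set.mem_singleton_iff] at hg
      rcases hg with rfl | rfl
      · exact ⟨1, 0, by ring⟩
      · exact ⟨0, 1, by ring⟩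
    | zero => exact ⟨0, 0, by ring⟩
    | add x y hx hy ihx ihy =>
      obtain ⟨a1, b1, rfl⟩ := ihx
      obtain ⟨a2, b2, rfl⟩ := ihy
      exact ⟨a1+a2, b1+b2, by ring⟩
  · rintro ⟨α, β, rfl⟩
    have hr : r ∈ AddSubmonoid.closure ({r, s} : Set ℕ) :=
      AddSubmonoid.subset_closure (by simp)
    have hs : s ∈ AddSubmonoid.closure ({r, s} : Set ℕ) :=
      AddSubmonoid.subset_closure (by simp)
    have h1 : α * r = α • r := by simp
    have h2 : β * s = β • s := by simp
    exact add_mem (h1 ▸ nsmul_mem hr α) (h2 ▸ nsmul_mem hs β)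

lemma mem_SYp {p x : ℕ} :
    x ∈ SYp p ↔ x ≤ NP p ∧ ∃ α β γ : ℕ, x = α * rMinus p + β * rPlus p + γ * wP p := by
  simp [SYp, Finset.mem_filter, Finset.mem_range, Nat.lt_succ_iff, mem_closure_triple]

lemma mem_QYp {p x : ℕ} :
    x ∈ QYp p ↔ ∃ s ∈ SYp p, NP p - s = x := by
  simp [QYp, Finset.mem_image]

lemma mem_XYp {p x : ℕ} :
    x ∈ XYp p ↔ x ∈ SYp p ∨ x ∈ QYp p := by
  simp [XYp, Finset.mem_union]

end S4
namespace S4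

lemma rM_eq (q : ℕ) : rMinus (3+q) = 2*q^2+11*q+15 := by
  show (3+q) * (2*(3+q)-1) = _
  have h : 2*(3+q)-1 = 2*q+5 := by omega
  rw [h]; ring

lemma rP_eq (q : ℕ) : rPlus (3+q) = 2*q^2+13*q+21 := by
  show (3+q) * (2*(3+q)+1) = _
  ring

lemma wP_eq (q : ℕ) : wP (3+q) = 4*q^2+24*q+35 := by
  show (2*(3+q)-1) * (2*(3+q)+1) = _
  have h : 2*(3+q)-1 = 2*q+5 := by omega
  rw [h]; ring

lemma NP_eq (q : ℕ) : NP (3+q) = 4*q^3+28*q^2+59*q+34 := by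
  show 4*(3+q)^3 - 8*(3+q)^2 - (3+q) + 1 = _
  rw [Nat.sub_sub]
  have h : 4*(3+q)^3 = (4*q^3+28*q^2+59*q+33) + (8*(3+q)^2 + (3+q)) := by ring
  rw [Nat.sub_eq_of_eq_add h]

lemma Srep (q : ℕ) {x a b c : ℕ} (hca : c ≤ a) (hcb : c ≤ b)
    (hx : x + c = a * rMinus (3+q) + b * rPlus (3+q)) (hN : x ≤ NP (3+q)) :
    x ∈ SYp (3+q) := by
  obtain ⟨a', rfl⟩ : ∃ a', a = c + a' := ⟨a - c, by omega⟩
  obtain ⟨b', rfl⟩ : ∃ b', b = c + b' := ⟨b - c, by omega⟩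
  have key : x = a' * rMinus (3+q) + b' * rPlus (3+q) + c * wP (3+q) := by
    have h : x + c = (a' * rMinus (3+q) + b' * rPlus (3+q) + c * wP (3+q)) + c := by
      rw [hx, rM_eq, rP_eq, wP_eq]; ring
    omega
  exact mem_SYp.mpr ⟨hN, a', b', c, key⟩

lemma SE (q : ℕ) {x : ℕ} (hx : x ∈ SYp (3+q))
    (hrange : x ≤ 2*rMinus (3+q) + q*rPlus (3+q) + 2*(3+q)) :
    ∃ a b c : ℕ, c ≤ a ∧ c ≤ b ∧ a + b ≤ q+2 ∧ b ≤ q+1 ∧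
      x + c = a * rMinus (3+q) + b * rPlus (3+q) := by
  obtain ⟨hN, α, β, γ, rfl⟩ := mem_SYp.mp hx
  refine ⟨α+γ, β+γ, γ, by omega, by omega, ?_, ?_, ?_⟩
  · -- a+b ≤ q+2
    by_contra hcon
    push_neg at hcon
    rw [rM_eq, rP_eq, wP_eq] at hrange
    nlinarith [hrange, hcon, sq_nonneg q, Nat.zero_le γ,
      Nat.mul_le_mul_right (2*q^2+11*q+15) (le_of_lt hcon)]
  · -- b ≤ q+1
    by_contra hcon
    push_neg at hcon
    rw [rM_eq, rP_eq, wP_eq] at hrange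
    nlinarith [hrange, hcon, Nat.mul_le_mul_right (2*q^2+13*q+21) hcon]
  · rw [rM_eq, rP_eq, wP_eq]; ring

lemma sep (q : ℕ) {a1 b1 a2 b2 : ℕ} (h1 : a1+b1 ≤ q+2) (hb1 : b1 ≤ q+1)
    (h2 : a2+b2 ≤ q+2) (hb2 : b2 ≤ q+1)
    (hlt : a1*rMinus (3+q)+b1*rPlus (3+q) < a2*rMinus (3+q)+b2*rPlus (3+q)) :
    a1*rMinus (3+q)+b1*rPlus (3+q) + 2*(3+q) ≤ a2*rMinus (3+q)+b2*rPlus (3+q) := by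
  rw [rM_eq, rP_eq] at *
  zify at *
  set A1 := (a1 : ℤ); set B1 := (b1 : ℤ); set A2 := (a2 : ℤ); set B2 := (b2 : ℤ)
  set Q := (q : ℤ) with hQ
  have hQ0 : 0 ≤ Q := Int.natCast_nonneg q
  have key : (A2*(2*Q^2+11*Q+15)+B2*(2*Q^2+13*Q+21)) - (A1*(2*Q^2+11*Q+15)+B1*(2*Q^2+13*Q+21))
      = (3+Q) * ( (A2+B2-(A1+B1))*(2*Q+5) + 2*(B2-B1) ) := by ring
  set T := A2+B2-(A1+B1) with hT
  set D := B2 - B1 with hD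
  have hE1 : 1 ≤ T*(2*Q+5) + 2*D := by
    nlinarith [key, hlt]
  have hE2 : T*(2*Q+5) + 2*D ≠ 1 := by
    intro hE
    rcases lt_trichotomy T 0 with hT0 | hT0 | hT0
    · have hT1 : T ≤ -1 := by omega
      have hDb : D ≤ Q + 1 := by simp only [hD]; omega
      nlinarith [hE, hT1, hDb]
    · rw [hT0] at hE; omega
    · have hT1 : 1 ≤ T := by omega
      have hDb : -(Q+1) ≤ D := by simp only [hD]; omega
      nlinarith [hE, hT1, hDb]
  have hE3 : 2 ≤ T*(2*Q+5) + 2*D := by omega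
  nlinarith [key, hE3]

lemma uniq (q : ℕ) {a1 b1 a2 b2 : ℕ} (h1 : a1+b1 ≤ q+2) (hb1 : b1 ≤ q+1)
    (h2 : a2+b2 ≤ q+2) (hb2 : b2 ≤ q+1)
    (heq : a1*rMinus (3+q)+b1*rPlus (3+q) = a2*rMinus (3+q)+b2*rPlus (3+q)) :
    a1 = a2 ∧ b1 = b2 := by
  rw [rM_eq, rP_eq] at heq
  zify at *
  set A1 := (a1 : ℤ); set B1 := (b1 : ℤ); set A2 := (a2 : ℤ); set B2 := (b2 : ℤ)
  set Q := (q : ℤ) with hQ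
  have hQ0 : 0 ≤ Q := Int.natCast_nonneg q
  have key : (0:ℤ)
      = (3+Q) * ( (A2+B2-(A1+B1))*(2*Q+5) + 2*(B2-B1) ) := by
    nlinarith [heq]
  set T := A2+B2-(A1+B1) with hT
  set D := B2 - B1 with hD
  have hE : T*(2*Q+5) + 2*D = 0 := by
    rcases lt_trichotomy (T*(2*Q+5) + 2*D) 0 with h | h | h
    · nlinarith [key]
    · exact h
    · nlinarith [key]
  have hT0 : T = 0 := by
    rcases lt_trichotomy T 0 with h | h | h
    · have : T ≤ -1 := by omega
      have hDb : D ≤ Q + 1 := by simp only [hD]; omega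
      nlinarith [hE, this, hDb]
    · exact h
    · have : 1 ≤ T := by omega
      have hDb : -(Q+1) ≤ D := by simp only [hD]; omega
      nlinarith [hE, this, hDb]
  have hD0 : D = 0 := by rw [hT0] at hE; omega
  constructor <;> [skip; omega]
  omega

end S4
namespace S4

lemma SrepUp (q : ℕ) {s : ℕ} (hs : s ∈ SYp (3+q)) :
    ∃ A B γ : ℕ, γ ≤ A ∧ γ ≤ B ∧ s + γ = A * rMinus (3+q) + B * rPlus (3+q) ∧
      γ ≤ q+1 ∧ A ≤ 2*q+3 ∧ B ≤ 2*q+3 ∧ s ≤ NP (3+q) := by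
  obtain ⟨hN, α, β, γ, rfl⟩ := mem_SYp.mp hs
  rw [NP_eq] at hN
  rw [rM_eq, rP_eq, wP_eq] at *
  have hγ : γ ≤ q+1 := by
    by_contra hcon
    push_neg at hcon
    nlinarith [hN, Nat.mul_le_mul_right (4*q^2+24*q+35) hcon]
  have hA : α + γ ≤ 2*q+3 := by
    by_contra hcon
    push_neg at hcon
    nlinarith [hN, hγ, Nat.mul_le_mul_right (2*q^2+11*q+15) hcon]
  have hB : β + γ ≤ 2*q+3 := by
    by_contra hcon
    push_neg at hcon
    nlinarith [hN, hγ, Nat.mul_le_mul_right (2*q^2+13*q+21) hcon]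
  exact ⟨α+γ, β+γ, γ, by omega, by omega, by ring, hγ, hA, hB,
    by rw [NP_eq]; exact hN⟩

lemma notS_above (q : ℕ) {a b y : ℕ} (hab : a+b ≤ q+2) (hb : b ≤ q+1)
    (hvB : a*rMinus (3+q)+b*rPlus (3+q) ≤ 2*rMinus (3+q) + q*rPlus (3+q))
    (hy : y ∈ SYp (3+q)) (hlt : a*rMinus (3+q)+b*rPlus (3+q) < y) :
    a*rMinus (3+q)+b*rPlus (3+q) + (q+5) ≤ y := by
  rcases le_or_gt y (2*rMinus (3+q) + q*rPlus (3+q) + 2*(3+q)) with hr | hr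
  · obtain ⟨a2, b2, c, hca, hcb, hab2, hb2, hrep⟩ := SE q hy hr
    have hc : c ≤ q+1 := by omega
    have hgt : a*rMinus (3+q)+b*rPlus (3+q) < a2*rMinus (3+q)+b2*rPlus (3+q) := by omega
    have := sep q hab hb hab2 hb2 hgt
    omega
  · omega

lemma notS_below (q : ℕ) {a b y : ℕ} (hab : a+b ≤ q+2) (hb : b ≤ q+1)
    (hvB : a*rMinus (3+q)+b*rPlus (3+q) ≤ 2*rMinus (3+q) + q*rPlus (3+q))
    (hy : y ∈ SYp (3+q)) (hlt : y + min a b < a*rMinus (3+q)+b*rPlus (3+q)) :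
    y + 2*(3+q) ≤ a*rMinus (3+q)+b*rPlus (3+q) := by
  have hyr : y ≤ 2*rMinus (3+q) + q*rPlus (3+q) + 2*(3+q) := by omega
  obtain ⟨a2, b2, c, hca, hcb, hab2, hb2, hrep⟩ := SE q hy hyr
  have hc : c ≤ q+1 := by omega
  rcases lt_trichotomy (a2*rMinus (3+q)+b2*rPlus (3+q)) (a*rMinus (3+q)+b*rPlus (3+q))
    with h | h | h
  · have := sep q hab2 hb2 hab hb h
    omega
  · obtain ⟨ha', hb'⟩ := uniq q hab2 hb2 hab hb h
    subst ha'; subst hb'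
    have : c ≤ min a2 b2 := by omega
    omega
  · have := sep q hab hb hab2 hb2 h
    omega

lemma Wup (q : ℕ) {a b : ℕ} (ha : a ≤ q+2) (hb : b ≤ q) :
    a*rMinus (3+q) + b*rPlus (3+q) + (q+4) ∈ QYp (3+q) := by
  obtain ⟨a', ha'⟩ : ∃ a', a + a' = q+2 := ⟨q+2-a, by omega⟩
  obtain ⟨b', hb'⟩ : ∃ b', b + b' = q := ⟨q-b, by omega⟩
  have hid : (a*rMinus (3+q) + b*rPlus (3+q) + (q+4)) + (a'*rMinus (3+q) + b'*rPlus (3+q))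
      = NP (3+q) := by
    have hNP : NP (3+q) = (a+a')*rMinus (3+q) + (b+b')*rPlus (3+q) + (q+4) := by
      rw [ha', hb', NP_eq, rM_eq, rP_eq]; ring
    rw [hNP]; ring
  have hs : a'*rMinus (3+q) + b'*rPlus (3+q) ∈ SYp (3+q) :=
    Srep q (a := a') (b := b') (c := 0) (Nat.zero_le _) (Nat.zero_le _) (by ring) (by omega)
  exact mem_QYp.mpr ⟨_, hs, by omega⟩

lemma Wdown (q : ℕ) {a b : ℕ} (ha : a ≤ q+1) (hb : b ≤ q+1) (hab1 : 1 ≤ a+b) :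
    ∃ t, t + (q+2) = a*rMinus (3+q) + b*rPlus (3+q) ∧ t ∈ QYp (3+q) := by
  obtain ⟨a', ha'⟩ : ∃ a', a + a' = q+1 := ⟨q+1-a, by omega⟩
  obtain ⟨b', hb'⟩ : ∃ b', b + b' = q+1 := ⟨q+1-b, by omega⟩
  have hv : q+2 ≤ a*rMinus (3+q) + b*rPlus (3+q) := by
    rw [rM_eq, rP_eq]
    rcases Nat.eq_zero_or_pos a with rfl | hpos
    · have hb1 : 1 ≤ b := by omega
      have : 1*(2*q^2+13*q+21) ≤ b * (2*q^2+13*q+21) :=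
        Nat.mul_le_mul_right _ hb1
      nlinarith
    · have : 1*(2*q^2+11*q+15) ≤ a * (2*q^2+11*q+15) :=
        Nat.mul_le_mul_right _ hpos
      nlinarith
  have hid : (a*rMinus (3+q) + b*rPlus (3+q)) + (a'*rMinus (3+q) + b'*rPlus (3+q))
      = NP (3+q) + (q+2) := by
    have hNP : NP (3+q) + (q+2) = (a+a')*rMinus (3+q) + (b+b')*rPlus (3+q) := by
      rw [ha', hb', NP_eq, rM_eq, rP_eq]; ring
    rw [hNP]; ring
  have hs : a'*rMinus (3+q) + b'*rPlus (3+q) ∈ SYp (3+q) :=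
    Srep q (a := a') (b := b') (c := 0) (Nat.zero_le _) (Nat.zero_le _) (by ring) (by omega)
  exact ⟨a*rMinus (3+q) + b*rPlus (3+q) - (q+2), by omega, mem_QYp.mpr ⟨_, hs, by omega⟩⟩

end S4
namespace S4

lemma mod_step (n L R c1 c2 : ℕ) (heq : n*L + c1 = n*R + c2) (h1 : c1 < n) :
    ∃ K, c2 = c1 + n*K := by
  have e : c1 % n = c2 % n := by
    rw [← Nat.mul_add_mod n L c1, ← Nat.mul_add_mod n R c2, heq]
  have e1 : c1 = c2 % n := by rw [← e]; exact (Nat.mod_eq_of_lt h1).symm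
  refine ⟨c2 / n, ?_⟩
  rw [e1]
  exact (Nat.mod_add_div c2 n).symm

/-- key uniqueness at level (q+1, q+1) with wide bounds -/
lemma uniq2 (q : ℕ) {A B : ℕ} (hA : A ≤ 3*q+5) (hB : B ≤ 3*q+5)
    (heq : A*rMinus (3+q) + B*rPlus (3+q) = (q+1)*rMinus (3+q) + (q+1)*rPlus (3+q)) :
    A = q+1 ∧ B = q+1 := by
  rw [rM_eq, rP_eq] at heq
  zify at *
  set Q := (q : ℤ) with hQ
  have hQ0 : 0 ≤ Q := Int.natCast_nonneg q
  set X := (A : ℤ) - (Q+1) with hX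
  set Y := (Q+1) - (B : ℤ) with hY
  have key : X * (2*Q+5) = Y * (2*Q+7) := by
    simp only [hX, hY]; nlinarith [heq]
  have key2 : (X - Y) * (2*Q+7) = 2*X := by nlinarith [key]
  have hXb : -(Q+1) ≤ X ∧ X ≤ 2*Q+4 := by constructor <;> omega
  have hZ : -1 ≤ X - Y ∧ X - Y ≤ 1 := by
    constructor
    · nlinarith [key2, hXb.1, hXb.2]
    · nlinarith [key2, hXb.1, hXb.2]
  have hX0 : X = 0 := by
    rcases lt_trichotomy (X - Y) 0 with h | h | h
    · have : X - Y = -1 := by omega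
      rw [this] at key2; omega
    · rw [h] at key2; omega
    · have : X - Y = 1 := by omega
      rw [this] at key2; omega
  have hY0 : Y = 0 := by
    rw [hX0] at key
    have h0 : Y * (2*Q+7) = 0 := by linarith
    rcases mul_eq_zero.mp h0 with h | h
    · exact h
    · omega
  omega

lemma QE (q : ℕ) {a b j x : ℕ} (hab : a+b ≤ q+2) (hj : j ≤ max a b)
    (hx : x + j = a*rMinus (3+q) + b*rPlus (3+q)) : x ∉ QYp (3+q) := by
  intro hq
  obtain ⟨s, hs, hNs⟩ := mem_QYp.mp hq
  obtain ⟨A, B, γ, hγA, hγB, hrep, hγ, hA, hB, hsN⟩ := SrepUp q hs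
  have hxs : x + s = NP (3+q) := by omega
  clear hq hs hNs
  -- main equation
  have heq : (a+A)*rMinus (3+q) + (b+B)*rPlus (3+q) + (q+2)
      = (q+1)*rMinus (3+q) + (q+1)*rPlus (3+q) + (j+γ) := by
    have hNid : NP (3+q) + (q+2) = (q+1)*rMinus (3+q) + (q+1)*rPlus (3+q) := by
      rw [NP_eq, rM_eq, rP_eq]; ring
    have h2 : (a+A)*rMinus (3+q) + (b+B)*rPlus (3+q)
        = (a*rMinus (3+q) + b*rPlus (3+q)) + (A*rMinus (3+q) + B*rPlus (3+q)) := by ring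
    omega
  -- mod p : j + γ = q + 2
  have hjγ : j + γ = q+2 := by
    have hL : (a+A)*rMinus (3+q) + (b+B)*rPlus (3+q)
        = (3+q) * ((a+A)*(2*q+5) + (b+B)*(2*q+7)) := by rw [rM_eq, rP_eq]; ring
    have hR : (q+1)*rMinus (3+q) + (q+1)*rPlus (3+q)
        = (3+q) * ((q+1)*(2*q+5) + (q+1)*(2*q+7)) := by rw [rM_eq, rP_eq]; ring
    rw [hL, hR] at heq
    obtain ⟨K, hK⟩ := mod_step (3+q) _ _ (q+2) (j+γ) heq (by omega)
    have hjb : j + γ ≤ 2*q+3 := by omega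
    rcases Nat.eq_zero_or_pos K with rfl | hpos
    · omega
    · have : 3+q ≤ (3+q)*K := Nat.le_mul_of_pos_right _ hpos
      omega
  -- cancel
  have heq2 : (a+A)*rMinus (3+q) + (b+B)*rPlus (3+q)
      = (q+1)*rMinus (3+q) + (q+1)*rPlus (3+q) := by omega
  obtain ⟨hA1, hB1⟩ := uniq2 q (by omega) (by omega) heq2
  -- contradiction : γ ≤ min(A,B) = q+1 - max a b, j ≤ max a b, j+γ = q+2
  omega


lemma QE2 (q : ℕ) {i : ℕ} (h1 : 1 ≤ i) (h2 : i ≤ 3*q+8) :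
    ((q+1)*rPlus (3+q) + i) ∉ QYp (3+q) := by
  intro hq
  obtain ⟨s, hs, hNs⟩ := mem_QYp.mp hq
  obtain ⟨A, B, γ, hγA, hγB, hrep, hγ, hA, hB, hsN⟩ := SrepUp q hs
  have hxs : (q+1)*rPlus (3+q) + i + s = NP (3+q) := by omega
  clear hq hs hNs
  -- main equation : A r₋ + B r₊ + (i + (q+2)) = (q+1) r₋ + γ
  have heq : A*rMinus (3+q) + B*rPlus (3+q) + (i + (q+2)) = (q+1)*rMinus (3+q) + γ := by
    have hNid : NP (3+q) + (q+2) = (q+1)*rMinus (3+q) + (q+1)*rPlus (3+q) := by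
      rw [NP_eq, rM_eq, rP_eq]; ring
    omega
  have hL : A*rMinus (3+q) + B*rPlus (3+q) = (3+q) * (A*(2*q+5) + B*(2*q+7)) := by
    rw [rM_eq, rP_eq]; ring
  have hR : (q+1)*rMinus (3+q) = (3+q) * ((q+1)*(2*q+5)) := by rw [rM_eq]; ring
  rw [hL, hR] at heq
  have heq' : (3+q) * ((q+1)*(2*q+5)) + γ = (3+q) * (A*(2*q+5) + B*(2*q+7)) + (i + (q+2)) := by
    omega
  obtain ⟨K, hK⟩ := mod_step (3+q) _ _ γ (i + (q+2)) heq' (by omega)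
  have hK1 : 1 ≤ K := by
    rcases Nat.eq_zero_or_pos K with rfl | hpos
    · omega
    · exact hpos
  have hK3 : K ≤ 3 := by
    by_contra hcon
    push_neg at hcon
    have : (3+q)*4 ≤ (3+q)*K := Nat.mul_le_mul_left _ (by omega)
    omega
  -- divided equation : A(2q+5) + B(2q+7) + K = (q+1)(2q+5)
  have hdiv : A*(2*q+5) + B*(2*q+7) + K = (q+1)*(2*q+5) := by
    have hmul : (3+q) * (A*(2*q+5) + B*(2*q+7) + K)
        = (3+q) * ((q+1)*(2*q+5)) := by
      have e : (3+q) * (A*(2*q+5) + B*(2*q+7) + K)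
          = (3+q) * (A*(2*q+5) + B*(2*q+7)) + (3+q)*K := by ring
      omega
    exact Nat.eq_of_mul_eq_mul_left (by omega) hmul
  -- endgame, pure ℕ
  have hA1 : A < q+1 := by
    have h5 : 0 < 2*q+5 := by omega
    have : A*(2*q+5) < (q+1)*(2*q+5) := by omega
    exact (Nat.mul_lt_mul_right h5).mp this
  obtain ⟨t, ht⟩ : ∃ t, A + t = q+1 := ⟨q+1-A, by omega⟩
  have ht1 : 1 ≤ t := by omega
  have hexp1 : (A+t)*(2*q+5) = A*(2*q+5) + t*(2*q+5) := by ring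
  rw [ht] at hexp1
  have heqt : B*(2*q+7) + K = t*(2*q+5) := by omega
  have hBt : B < t := by
    have h5 : 0 < 2*q+5 := by omega
    have hle : B*(2*q+5) ≤ B*(2*q+7) := Nat.mul_le_mul_left _ (by omega)
    have : B*(2*q+5) < t*(2*q+5) := by omega
    exact (Nat.mul_lt_mul_right h5).mp this
  obtain ⟨m, hmt⟩ : ∃ m, B + m = t := ⟨t-B, by omega⟩
  have hm1 : 1 ≤ m := by omega
  have hexp2 : (B+m)*(2*q+5) = B*(2*q+5) + m*(2*q+5) := by ring
  rw [hmt] at hexp2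
  have hexp3 : B*(2*q+7) = B*(2*q+5) + 2*B := by ring
  -- 2B + K = m(2q+5)
  have hkey : 2*B + K = m*(2*q+5) := by omega
  have hBq : B ≤ q := by omega
  have hmone : m = 1 := by
    by_contra hc
    have hm2 : 2 ≤ m := by omega
    have : 2*(2*q+5) ≤ m*(2*q+5) := Nat.mul_le_mul_right _ hm2
    omega
  rw [hmone] at hkey
  omega

end S4
namespace S4

lemma mem_dsRun {α : Type*} [LinearOrder α] {X : Finset α} {Δ : α → ℤ} {x y : α} :
    y ∈ dsRun X Δ x ↔ y ∈ X ∧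
      ∀ z ∈ X, min x y ≤ z → z ≤ max x y → (0 < Δ z ↔ 0 < Δ x) := by
  simp [dsRun, Finset.mem_filter]

lemma delta_pos {p x : ℕ} (h : x ∈ SYp p) : ΔYp p x = 1 := if_pos h
lemma delta_neg {p x : ℕ} (h : x ∉ SYp p) : ΔYp p x = -1 := if_neg h

lemma S_sub_X {p x : ℕ} (h : x ∈ SYp p) : x ∈ XYp p := mem_XYp.mpr (Or.inl h)
lemma Q_sub_X {p x : ℕ} (h : x ∈ QYp p) : x ∈ XYp p := mem_XYp.mpr (Or.inr h)

lemma B_le_NP (q : ℕ) :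
    2*rMinus (3+q) + q*rPlus (3+q) + (2*q^3+11*q^2+16*q+4) = NP (3+q) := by
  rw [rM_eq, rP_eq, NP_eq]; ring

/-- v ≤ B for blocks with a+b ≤ q+2, b ≤ q -/
lemma v_le_B (q : ℕ) {a b : ℕ} (hab : a+b ≤ q+2) (hb : b ≤ q) :
    a*rMinus (3+q) + b*rPlus (3+q) ≤ 2*rMinus (3+q) + q*rPlus (3+q) := by
  have hsplit : a*rMinus (3+q) + b*rPlus (3+q)
      = (a+b)*rMinus (3+q) + b*(2*q+6) := by rw [rM_eq, rP_eq]; ring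
  have hB : 2*rMinus (3+q) + q*rPlus (3+q)
      = (q+2)*rMinus (3+q) + q*(2*q+6) := by rw [rM_eq, rP_eq]; ring
  rw [hsplit, hB]
  have h1 : (a+b)*rMinus (3+q) ≤ (q+2)*rMinus (3+q) := Nat.mul_le_mul_right _ hab
  have h2 : b*(2*q+6) ≤ q*(2*q+6) := Nat.mul_le_mul_right _ hb
  omega

lemma vB_le_B (q : ℕ) :
    (q+2)*rMinus (3+q) ≤ 2*rMinus (3+q) + q*rPlus (3+q) := by
  rw [rM_eq, rP_eq]; nlinarith [sq_nonneg q]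

lemma vP_le_B (q : ℕ) :
    (q+1)*rPlus (3+q) ≤ 2*rMinus (3+q) + q*rPlus (3+q) := by
  rw [rM_eq, rP_eq]; nlinarith [sq_nonneg q]

/-- elements of the block interval are in S -/
lemma block_in_S (q : ℕ) {a b c z : ℕ} (hca : c ≤ a) (hcb : c ≤ b)
    (hz1 : a*rMinus (3+q) + b*rPlus (3+q) ≤ z + c)
    (hz2 : z ≤ a*rMinus (3+q) + b*rPlus (3+q)) (hzN : z ≤ NP (3+q)) : z ∈ SYp (3+q) := by
  set v := a*rMinus (3+q) + b*rPlus (3+q) with hv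
  exact Srep q (a := a) (b := b) (c := v - z) (by omega) (by omega) (by omega) hzN

lemma run_eq (q : ℕ) {a b : ℕ} (ha : a ≤ q+1) (hb : b ≤ q) (hab : a+b ≤ q+2) :
    dsRun (XYp (3+q)) (ΔYp (3+q)) (a*rMinus (3+q) + b*rPlus (3+q))
      = Finset.Icc (a*rMinus (3+q) + b*rPlus (3+q) - min a b)
          (a*rMinus (3+q) + b*rPlus (3+q)) := by
  set v := a*rMinus (3+q) + b*rPlus (3+q) with hv
  have hrm : rMinus (3+q) = 2*q^2+11*q+15 := rM_eq q
  have hrp : rPlus (3+q) = 2*q^2+13*q+21 := rP_eq q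
  have hmv : min a b ≤ v := by
    have : min a b ≤ a * rMinus (3+q) + b * rPlus (3+q) := by
      rcases Nat.le_total a b with h | h
      · calc min a b ≤ a := min_le_left _ _
          _ ≤ a * rMinus (3+q) := Nat.le_mul_of_pos_right _ (by rw [hrm]; omega)
          _ ≤ _ := Nat.le_add_right _ _
      · calc min a b ≤ b := min_le_right _ _
          _ ≤ b * rPlus (3+q) := Nat.le_mul_of_pos_right _ (by rw [hrp]; omega)
          _ ≤ _ := Nat.le_add_left _ _
    exact this
  have hvB : v ≤ 2*rMinus (3+q) + q*rPlus (3+q) := v_le_B q hab hb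
  have hvN : v ≤ NP (3+q) := by have := B_le_NP q; omega
  have hSblock : ∀ z, v ≤ z + min a b → z ≤ v → z ∈ SYp (3+q) :=
    fun z h1 h2 => block_in_S q (min_le_left a b) (min_le_right a b) h1 h2 (by omega)
  have hvS : v ∈ SYp (3+q) := hSblock v (by omega) le_rfl
  -- upper witness
  have hq0Q : v + (q+4) ∈ QYp (3+q) := Wup q (by omega) hb
  have hq0S : v + (q+4) ∉ SYp (3+q) := by
    intro hmem
    have := notS_above q hab (by omega) hvB hmem (by omega)
    omega
  -- consequences of S-membership above/below
  have habove : ∀ y ∈ SYp (3+q), v < y → v + (q+5) ≤ y :=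
    fun y hy h => notS_above q hab (by omega) hvB hy h
  ext y
  rw [mem_dsRun, Finset.mem_Icc]
  constructor
  · rintro ⟨hyX, hcond⟩
    have hyv : y ≤ v := by
      by_contra hgt
      push_neg at hgt
      have hminvy : min v y = v := min_eq_left (le_of_lt hgt)
      have hmaxvy : max v y = y := max_eq_right (le_of_lt hgt)
      by_cases hyS : y ∈ SYp (3+q)
      · have hge := habove y hyS hgt
        have := hcond (v + (q+4)) (Q_sub_X hq0Q) (by omega) (by omega)
        rw [delta_neg hq0S, delta_pos hvS] at this
        omega
      · have := hcond y hyX (by omega) (by omega)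
        rw [delta_neg hyS, delta_pos hvS] at this
        omega
    refine ⟨?_, hyv⟩
    by_contra hlow
    push_neg at hlow
    -- y < v - min a b
    have hab1 : 1 ≤ a + b := by
      by_contra hc
      push_neg at hc
      have ha0 : a = 0 := by omega
      have hb0 : b = 0 := by omega
      subst ha0; subst hb0
      simp only [zero_mul, Nat.add_zero, Nat.zero_add] at hv
      omega
    obtain ⟨t, htv, htQ⟩ := Wdown q (by omega) (by omega) hab1
    have htS : t ∉ SYp (3+q) := by
      intro hmem
      have := notS_below q hab (by omega) hvB hmem (by omega)
      omega
    have hminvy : min v y = y := min_eq_right (by omega)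
    have hmaxvy : max v y = v := max_eq_left (by omega)
    by_cases hyS : y ∈ SYp (3+q)
    · have hyb := notS_below q hab (by omega) hvB hyS (by omega)
      have := hcond t (Q_sub_X htQ) (by omega) (by omega)
      rw [delta_neg htS, delta_pos hvS] at this
      omega
    · have := hcond y hyX (by omega) (by omega)
      rw [delta_neg hyS, delta_pos hvS] at this
      omega
  · rintro ⟨hy1, hy2⟩
    have hyS : y ∈ SYp (3+q) := hSblock y (by omega) hy2
    refine ⟨S_sub_X hyS, ?_⟩
    intro z hzX hz1 hz2
    have hminvy : min v y = y := min_eq_right hy2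
    have hmaxvy : max v y = v := max_eq_left hy2
    have hzS : z ∈ SYp (3+q) := hSblock z (by omega) (by omega)
    rw [delta_pos hzS, delta_pos hvS]

end S4
set_option maxHeartbeats 400000
namespace S4

lemma mem_redSet {p x : ℕ} :
    x ∈ redSet (XYp p) (ΔYp p) ↔ x ∈ XYp p ∧
      ((0 < ΔYp p x ∧ ∀ y ∈ dsRun (XYp p) (ΔYp p) x, y ≤ x) ∨
       (ΔYp p x < 0 ∧ ∀ y ∈ dsRun (XYp p) (ΔYp p) x, x ≤ y)) := by
  simp [redSet, Finset.mem_filter]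

lemma redDelta_run (q : ℕ) {a b : ℕ} (ha : a ≤ q+1) (hb : b ≤ q) (hab : a+b ≤ q+2) :
    redDelta (XYp (3+q)) (ΔYp (3+q)) (a*rMinus (3+q) + b*rPlus (3+q))
      = (min a b : ℤ) + 1 := by
  set v := a*rMinus (3+q) + b*rPlus (3+q) with hv
  have hmv : min a b ≤ v := by
    have h1 : min a b ≤ a + b := by omega
    have h2 : a + b ≤ v := by
      rw [hv, rM_eq, rP_eq]
      nlinarith [Nat.mul_le_mul_left a (show 1 ≤ 2*q^2+11*q+15 by omega),
        Nat.mul_le_mul_left b (show 1 ≤ 2*q^2+13*q+21 by omega)]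
    omega
  rw [redDelta, run_eq q ha hb hab]
  have hvN : v ≤ NP (3+q) := by
    have h1 := v_le_B q hab hb
    have := B_le_NP q
    omega
  have hone : ∀ y ∈ Finset.Icc (v - min a b) v, ΔYp (3+q) y = 1 := by
    intro y hy
    rw [Finset.mem_Icc] at hy
    exact delta_pos (block_in_S q (min_le_left a b) (min_le_right a b)
      (by omega) hy.2 (by omega))
  rw [Finset.sum_congr rfl hone, Finset.sum_const, Nat.card_Icc]
  have : v + 1 - (v - min a b) = min a b + 1 := by omega
  rw [this, nsmul_eq_mul]
  push_cast
  ring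

lemma redSet_run (q : ℕ) {a b : ℕ} (ha : a ≤ q+1) (hb : b ≤ q) (hab : a+b ≤ q+2) :
    a*rMinus (3+q) + b*rPlus (3+q) ∈ redSet (XYp (3+q)) (ΔYp (3+q)) := by
  set v := a*rMinus (3+q) + b*rPlus (3+q) with hv
  have hvN : v ≤ NP (3+q) := by
    have h1 := v_le_B q hab hb
    have := B_le_NP q
    omega
  have hvS : v ∈ SYp (3+q) := block_in_S q (min_le_left a b) (min_le_right a b)
      (by omega) le_rfl hvN
  rw [mem_redSet]
  refine ⟨S_sub_X hvS, Or.inl ⟨by rw [delta_pos hvS]; omega, ?_⟩⟩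
  intro y hy
  rw [run_eq q ha hb hab, Finset.mem_Icc] at hy
  exact hy.2

/-! merged pair: (q+1)·r₊ and (q+2)·r₋, at distance 3q+9 -/

lemma gap_id (q : ℕ) : (q+1)*rPlus (3+q) + (3*q+9) = (q+2)*rMinus (3+q) := by
  rw [rM_eq, rP_eq]; ring

/-- no element of X strictly between (q+1)r₊ and (q+2)r₋ -/
lemma no_X_between (q : ℕ) {z : ℕ} (hzX : z ∈ XYp (3+q))
    (h1 : (q+1)*rPlus (3+q) < z) (h2 : z < (q+2)*rMinus (3+q)) : False := by
  have hgap := gap_id q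
  rcases mem_XYp.mp hzX with hzS | hzQ
  · -- no S strictly between
    have hzr : z ≤ 2*rMinus (3+q) + q*rPlus (3+q) + 2*(3+q) := by
      have := vB_le_B q
      omega
    obtain ⟨a2, b2, c, hca, hcb, hab2, hb2, hrep⟩ := SE q hzS hzr
    have hc : 2*c ≤ q+2 := by omega
    -- u2 := z + c is a semigroup point in ((q+1)r₊, (q+2)r₋ + c]
    have hu2gt : (q+1)*rPlus (3+q) < a2*rMinus (3+q) + b2*rPlus (3+q) := by omega
    have hstep1 := sep q (a1 := 0) (b1 := q+1) (by omega) (by omega) hab2 hb2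
      (by simpa using hu2gt)
    rcases lt_trichotomy (a2*rMinus (3+q) + b2*rPlus (3+q)) ((q+2)*rMinus (3+q))
      with h | h | h
    · have hstep2 := sep q hab2 hb2 (a2 := q+2) (b2 := 0) (by omega) (by omega)
        (by simpa using h)
      simp only [Nat.zero_mul, Nat.add_zero, Nat.zero_add, Nat.mul_zero] at hstep1 hstep2
      omega
    · obtain ⟨he1, he2⟩ := uniq q hab2 hb2 (a2 := q+2) (b2 := 0) (by omega) (by omega)
        (by simpa using h)
      subst he1; subst he2
      have : c = 0 := by omega
      omega
    · have hstep2 := sep q (a1 := q+2) (b1 := 0) (by omega) (by omega) hab2 hb2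
        (by simpa using h)
      simp only [Nat.zero_mul, Nat.add_zero, Nat.zero_add, Nat.mul_zero] at hstep2
      omega
  · -- no Q in the closed interval even
    obtain ⟨i, hi⟩ : ∃ i, z = (q+1)*rPlus (3+q) + i := ⟨z - (q+1)*rPlus (3+q), by omega⟩
    have hi1 : 1 ≤ i := by omega
    have hi2 : i ≤ 3*q+8 := by omega
    exact QE2 q hi1 hi2 (hi ▸ hzQ)

lemma top_in_S (q : ℕ) : (q+2)*rMinus (3+q) ∈ SYp (3+q) := by
  have h := vB_le_B q
  have := B_le_NP q
  exact block_in_S q (a := q+2) (b := 0) (c := 0) (by omega) (by omega)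
    (by simp) (by simp) (by omega)

lemma snd_in_S (q : ℕ) : (q+1)*rPlus (3+q) ∈ SYp (3+q) := by
  have h := vP_le_B q
  have := B_le_NP q
  exact block_in_S q (a := 0) (b := q+1) (c := 0) (by omega) (by omega)
    (by simp) (by simp) (by omega)

end S4
set_option maxHeartbeats 1000000
namespace S4

lemma top_notQ (q : ℕ) : (q+2)*rMinus (3+q) ∉ QYp (3+q) :=
  QE q (a := q+2) (b := 0) (j := 0) (by omega) (by omega) (by ring)

lemma snd_notQ (q : ℕ) : (q+1)*rPlus (3+q) ∉ QYp (3+q) :=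
  QE q (a := 0) (b := q+1) (j := 0) (by omega) (by omega) (by ring)

/-- any element of X in the closed interval [(q+1)r₊, (q+2)r₋] is in S -/
lemma X_between_S (q : ℕ) {z : ℕ} (hzX : z ∈ XYp (3+q))
    (h1 : (q+1)*rPlus (3+q) ≤ z) (h2 : z ≤ (q+2)*rMinus (3+q)) : z ∈ SYp (3+q) := by
  rcases eq_or_lt_of_le h1 with rfl | h1'
  · exact snd_in_S q
  rcases eq_or_lt_of_le h2 with rfl | h2'
  · exact top_in_S q
  exact absurd hzX (fun h => no_X_between q h h1' h2')

lemma run_top (q : ℕ) :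
    dsRun (XYp (3+q)) (ΔYp (3+q)) ((q+2)*rMinus (3+q))
      = {(q+1)*rPlus (3+q), (q+2)*rMinus (3+q)} := by
  set v := (q+2)*rMinus (3+q) with hv
  set v' := (q+1)*rPlus (3+q) with hv'
  have hgap := gap_id q
  have hvS : v ∈ SYp (3+q) := top_in_S q
  have hv'S : v' ∈ SYp (3+q) := snd_in_S q
  have hvB := vB_le_B q
  have hv'B := vP_le_B q
  -- upper witness at v (a = q+2, b = 0)
  have hq0Q : v + (q+4) ∈ QYp (3+q) := by
    have := Wup q (a := q+2) (b := 0) (by omega) (by omega)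
    simpa using this
  have habove : ∀ y ∈ SYp (3+q), v < y → v + (q+5) ≤ y := by
    intro y hy h
    have := notS_above q (a := q+2) (b := 0) (by omega) (by omega) (by simpa using hvB) hy
      (by simpa using h)
    simpa using this
  have hq0S : v + (q+4) ∉ SYp (3+q) := by
    intro hmem
    have := habove _ hmem (by omega)
    omega
  -- lower witness at v' (a = 0, b = q+1)
  obtain ⟨t, htv, htQ⟩ := Wdown q (a := 0) (b := q+1) (by omega) (by omega) (by omega)
  simp only [Nat.zero_mul, Nat.zero_add] at htv
  have hbelow : ∀ y ∈ SYp (3+q), y < v' → y + 2*(3+q) ≤ v' := by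
    intro y hy h
    have := notS_below q (a := 0) (b := q+1) (by omega) (by omega) (by simpa using hv'B) hy
      (by simpa using (show y + 0 < v' by omega))
    simpa using this
  have htS : t ∉ SYp (3+q) := by
    intro hmem
    have := hbelow _ hmem (by omega)
    omega
  ext y
  rw [mem_dsRun, Finset.mem_insert, Finset.mem_singleton]
  constructor
  · rintro ⟨hyX, hcond⟩
    have hyv : y ≤ v := by
      by_contra hgt
      push_neg at hgt
      have hminvy : min v y = v := min_eq_left (le_of_lt hgt)
      have hmaxvy : max v y = y := max_eq_right (le_of_lt hgt)
      by_cases hyS : y ∈ SYp (3+q)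
      · have hge := habove y hyS hgt
        have := hcond (v + (q+4)) (Q_sub_X hq0Q) (by omega) (by omega)
        rw [delta_neg hq0S, delta_pos hvS] at this
        omega
      · have := hcond y hyX (by omega) (by omega)
        rw [delta_neg hyS, delta_pos hvS] at this
        omega
    have hyv' : v' ≤ y := by
      by_contra hlow
      push_neg at hlow
      have hminvy : min v y = y := min_eq_right (by omega)
      have hmaxvy : max v y = v := max_eq_left (by omega)
      by_cases hyS : y ∈ SYp (3+q)
      · have hyb := hbelow y hyS hlow
        have := hcond t (Q_sub_X htQ) (by omega) (by omega)
        rw [delta_neg htS, delta_pos hvS] at this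
        omega
      · have := hcond y hyX (by omega) (by omega)
        rw [delta_neg hyS, delta_pos hvS] at this
        omega
    rcases eq_or_lt_of_le hyv' with h | h
    · exact Or.inl h.symm
    rcases eq_or_lt_of_le hyv with h2 | h2
    · exact Or.inr h2
    exact absurd hyX (fun hh => no_X_between q hh h h2)
  · intro hy
    have hyS : y ∈ SYp (3+q) := by
      rcases hy with rfl | rfl
      · exact hv'S
      · exact hvS
    have hyv : y ≤ v := by rcases hy with rfl | rfl <;> omega
    refine ⟨S_sub_X hyS, ?_⟩
    intro z hzX hz1 hz2
    have hminvy : min v y = y := min_eq_right hyv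
    have hmaxvy : max v y = v := max_eq_left hyv
    have hzS : z ∈ SYp (3+q) := by
      refine X_between_S q hzX ?_ (by omega)
      rcases hy with rfl | rfl
      · omega
      · omega
    rw [delta_pos hzS, delta_pos hvS]

end S4
set_option maxHeartbeats 1000000
namespace S4

lemma run_mid (q : ℕ) :
    (q+2)*rMinus (3+q) ∈ dsRun (XYp (3+q)) (ΔYp (3+q)) ((q+1)*rPlus (3+q)) := by
  have hgap := gap_id q
  have hvS := top_in_S q
  have hv'S := snd_in_S q
  rw [mem_dsRun]
  refine ⟨S_sub_X hvS, ?_⟩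
  intro z hzX hz1 hz2
  have h1 : min ((q+1)*rPlus (3+q)) ((q+2)*rMinus (3+q)) = (q+1)*rPlus (3+q) :=
    min_eq_left (by omega)
  have h2 : max ((q+1)*rPlus (3+q)) ((q+2)*rMinus (3+q)) = (q+2)*rMinus (3+q) :=
    max_eq_right (by omega)
  have hzS : z ∈ SYp (3+q) := X_between_S q hzX (by omega) (by omega)
  rw [delta_pos hzS, delta_pos hv'S]

lemma redDelta_top (q : ℕ) :
    redDelta (XYp (3+q)) (ΔYp (3+q)) ((q+2)*rMinus (3+q)) = 2 := by
  rw [redDelta, run_top q]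
  have hgap := gap_id q
  have hne : (q+1)*rPlus (3+q) ≠ (q+2)*rMinus (3+q) := by omega
  rw [Finset.sum_pair hne, delta_pos (snd_in_S q), delta_pos (top_in_S q)]
  ring

lemma redSet_top (q : ℕ) :
    (q+2)*rMinus (3+q) ∈ redSet (XYp (3+q)) (ΔYp (3+q)) := by
  have hgap := gap_id q
  rw [mem_redSet]
  refine ⟨S_sub_X (top_in_S q), Or.inl ⟨by rw [delta_pos (top_in_S q)]; omega, ?_⟩⟩
  intro y hy
  rw [run_top q, Finset.mem_insert, Finset.mem_singleton] at hy
  rcases hy with rfl | rfl <;> omega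

/-- a positive point of the reduced sequence lies in S -/
lemma sign_pos (q : ℕ) {x : ℕ} (hX : x ∈ XYp (3+q))
    (hpos : 0 < redDelta (XYp (3+q)) (ΔYp (3+q)) x) : x ∈ SYp (3+q) := by
  by_contra hxS
  have hall : ∀ y ∈ dsRun (XYp (3+q)) (ΔYp (3+q)) x, ΔYp (3+q) y < 0 := by
    intro y hy
    rw [mem_dsRun] at hy
    have := hy.2 y hy.1 (min_le_right _ _) (le_max_right _ _)
    rw [delta_neg hxS] at this
    by_cases hyS : y ∈ SYp (3+q)
    · rw [delta_pos hyS] at this; omega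
    · rw [delta_neg hyS]; omega
  have hne : x ∈ dsRun (XYp (3+q)) (ΔYp (3+q)) x := by
    rw [mem_dsRun]
    exact ⟨hX, fun z hz h1 h2 => by
      simp only [min_self, max_self] at h1 h2
      have : z = x := le_antisymm h2 h1
      rw [this]⟩
  have : redDelta (XYp (3+q)) (ΔYp (3+q)) x < 0 := by
    rw [redDelta]
    exact Finset.sum_neg hall ⟨x, hne⟩
  omega

end S4
set_option maxHeartbeats 1000000
namespace S4

lemma bounds_from_B (q : ℕ) {a b : ℕ}
    (h : a*rMinus (3+q)+b*rPlus (3+q) ≤ 2*rMinus (3+q) + q*rPlus (3+q)) :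
    a+b ≤ q+2 ∧ (b ≤ q ∨ (a = 0 ∧ b = q+1)) := by
  rw [rM_eq, rP_eq] at h
  have hab : a + b ≤ q+2 := by
    by_contra hc
    push_neg at hc
    have h1 : (q+3)*(2*q^2+11*q+15) ≤ (a+b)*(2*q^2+11*q+15) :=
      Nat.mul_le_mul_right _ (by omega)
    have h2 : b*(2*q^2+11*q+15) ≤ b*(2*q^2+13*q+21) :=
      Nat.mul_le_mul_left _ (by omega)
    nlinarith [h1, h2, h]
  refine ⟨hab, ?_⟩
  by_contra hc
  push_neg at hc
  obtain ⟨hb1, hb2⟩ := hc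
  rcases Nat.lt_or_ge b (q+2) with hb | hb
  · -- b = q+1, a ≥ 1
    have hbq : b = q+1 := by omega
    have ha1 : 1 ≤ a := by
      rcases Nat.eq_zero_or_pos a with rfl | h'
      · exact absurd hbq (hb2 rfl)
      · exact h'
    have h1 : 1*(2*q^2+11*q+15) ≤ a*(2*q^2+11*q+15) := Nat.mul_le_mul_right _ ha1
    have h2 : (q+1)*(2*q^2+13*q+21) = b*(2*q^2+13*q+21) := by rw [hbq]
    nlinarith [h1, h2, h]
  · -- b ≥ q+2 so b = q+2, a = 0
    have h1 : (q+2)*(2*q^2+13*q+21) ≤ b*(2*q^2+13*q+21) := Nat.mul_le_mul_right _ hb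
    nlinarith [h1, h]

lemma part1_mpr (q : ℕ) {a b : ℕ}
    (hx : a*rMinus (3+q)+b*rPlus (3+q) ≤ 2*rMinus (3+q) + q*rPlus (3+q))
    (hne : a*rMinus (3+q)+b*rPlus (3+q) ≠ (q+1) * rPlus (3+q)) :
    (a*rMinus (3+q)+b*rPlus (3+q)) ∈ redSet (XYp (3+q)) (ΔYp (3+q)) ∧
      0 < redDelta (XYp (3+q)) (ΔYp (3+q)) (a*rMinus (3+q)+b*rPlus (3+q)) := by
  obtain ⟨hab, hcase⟩ := bounds_from_B q hx
  rcases hcase with hb | ⟨rfl, rfl⟩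
  · rcases Nat.lt_or_ge a (q+2) with ha | ha
    · -- normal block
      refine ⟨redSet_run q (by omega) hb hab, ?_⟩
      rw [redDelta_run q (by omega) hb hab]
      positivity
    · -- a = q+2, b = 0 : merged top
      have ha2 : a = q+2 := by omega
      have hb0 : b = 0 := by omega
      subst ha2; subst hb0
      simp only [Nat.zero_mul, Nat.add_zero]
      exact ⟨redSet_top q, by rw [redDelta_top q]; omega⟩
  · -- (0, q+1) : excluded point
    simp only [Nat.zero_mul, Nat.zero_add] at hne
    exact absurd rfl hne

lemma part1_mp (q : ℕ) {x : ℕ}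
    (hx : x ≤ 2*rMinus (3+q) + q*rPlus (3+q))
    (hred : x ∈ redSet (XYp (3+q)) (ΔYp (3+q)))
    (hpos : 0 < redDelta (XYp (3+q)) (ΔYp (3+q)) x) :
    (∃ a b : ℕ, x = a*rMinus (3+q)+b*rPlus (3+q)) ∧ x ≠ (q+1) * rPlus (3+q) := by
  have hX : x ∈ XYp (3+q) := (mem_redSet.mp hred).1
  have hxS : x ∈ SYp (3+q) := sign_pos q hX hpos
  have hmax : ∀ y ∈ dsRun (XYp (3+q)) (ΔYp (3+q)) x, y ≤ x := by
    rcases (mem_redSet.mp hred).2 with h | h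
    · exact h.2
    · rw [delta_pos hxS] at h; omega
  obtain ⟨a, b, c, hca, hcb, hab, hb, hrep⟩ := SE q hxS (by omega)
  have hc0 : c = 0 := by
    by_contra hc
    have hc1 : 1 ≤ c := by omega
    have hx1S : x + 1 ∈ SYp (3+q) := by
      refine Srep q (a := a) (b := b) (c := c - 1) (by omega) (by omega) (by omega) ?_
      have := B_le_NP q
      omega
    have hx1run : x + 1 ∈ dsRun (XYp (3+q)) (ΔYp (3+q)) x := by
      rw [mem_dsRun]
      refine ⟨S_sub_X hx1S, ?_⟩
      intro z hz h1 h2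
      have hmin : min x (x+1) = x := min_eq_left (by omega)
      have hmax' : max x (x+1) = x+1 := max_eq_right (by omega)
      have : z = x ∨ z = x + 1 := by omega
      rcases this with rfl | rfl
      · rw [delta_pos hxS]
      · rw [delta_pos hx1S, delta_pos hxS]
    have := hmax _ hx1run
    omega
  rw [hc0] at hrep
  refine ⟨⟨a, b, by omega⟩, ?_⟩
  intro heq
  have hrm := run_mid q
  rw [← heq] at hrm
  have := hmax _ hrm
  have hgap := gap_id q
  omega

end S4

/-- description of the positive part `S̃` of the reduced delta sequence
`(X̃_{Y_p}, Δ̃_{Y_p})` of `Σ(p,2p-1,2p+1)` in the range `[0, 2r₋+(p-3)r₊]`: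
(i) `S̃ ∩ [0, 2r₋+(p-3)r₊] = S(r₋,r₊) ∩ [0, 2r₋+(p-3)r₊] \ {(p-2)r₊}`;
(ii) if `x = a·r₋ + b·r₊` lies there and `x ∉ {(p-2)r₊, (p-1)r₋}` then
`Δ̃_{Y_p}(x) = min{a,b} + 1`, while `Δ̃_{Y_p}((p-1)r₋) = 2`. -/
theorem stmt_4 (p : ℕ) (hp : 3 ≤ p) :
    (∀ x : ℕ, x ≤ 2 * rMinus p + (p - 3) * rPlus p →
      ((x ∈ redSet (XYp p) (ΔYp p) ∧ 0 < redDelta (XYp p) (ΔYp p) x) ↔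
        (x ∈ AddSubmonoid.closure ({rMinus p, rPlus p} : Set ℕ) ∧ x ≠ (p - 2) * rPlus p))) ∧
    (∀ a b : ℕ, a * rMinus p + b * rPlus p ≤ 2 * rMinus p + (p - 3) * rPlus p →
      a * rMinus p + b * rPlus p ∈ redSet (XYp p) (ΔYp p) →
      0 < redDelta (XYp p) (ΔYp p) (a * rMinus p + b * rPlus p) →
      a * rMinus p + b * rPlus p ≠ (p - 2) * rPlus p →
      a * rMinus p + b * rPlus p ≠ (p - 1) * rMinus p →
      redDelta (XYp p) (ΔYp p) (a * rMinus p + b * rPlus p) = (min a b : ℤ) + 1) ∧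
    redDelta (XYp p) (ΔYp p) ((p - 1) * rMinus p) = 2 := by
  obtain ⟨q, rfl⟩ : ∃ q, p = 3 + q := ⟨p - 3, by omega⟩
  have e1 : (3+q) - 1 = q+2 := by omega
  have e2 : (3+q) - 2 = q+1 := by omega
  have e3 : (3+q) - 3 = q := by omega
  rw [e1, e2, e3]
  refine ⟨?_, ?_, S4.redDelta_top q⟩
  · intro x hx
    constructor
    · rintro ⟨hred, hpos⟩
      obtain ⟨⟨a, b, rfl⟩, hne⟩ := S4.part1_mp q hx hred hpos
      exact ⟨S4.mem_closure_pair.mpr ⟨a, b, rfl⟩, hne⟩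
    · rintro ⟨hcl, hne⟩
      obtain ⟨a, b, rfl⟩ := S4.mem_closure_pair.mp hcl
      exact S4.part1_mpr q hx hne
  · intro a b hle hred hpos hne1 hne2
    obtain ⟨hab, hcase⟩ := S4.bounds_from_B q hle
    rcases hcase with hb | ⟨rfl, rfl⟩
    · rcases Nat.lt_or_ge a (q+2) with ha | ha
      · exact S4.redDelta_run q (by omega) hb hab
      · exfalso
        have ha2 : a = q+2 := by omega
        have hb0 : b = 0 := by omega
        subst ha2; subst hb0
        simp only [Nat.zero_mul, Nat.add_zero] at hne2
        exact hne2 rfl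
    · exfalso
      simp only [Nat.zero_mul, Nat.zero_add] at hne1
      exact hne1 rfl
end

section
/- Let p = 2ξ+1 with ξ ≥ 1 be odd, r₋ = p(2p−1), r₊ = p(2p+1), N_p = 4p³ − 8p² − p + 1, and K = (ξ−1)(r₋+r₊). Then {x ∈ S(r₋,r₊) : K ≤ x and 2x ≤ N_p} = {a·r₋ + b·r₊ : a,b ≥ 0, a+b = 2ξ−2, b ≥ ξ−1} ∪ {a·r₋ + b·r₊ : a,b ≥ 0, a+b = 2ξ−1, a ≥ ξ}. -/
/-- for odd `p = 2ξ+1`, `r₋ = p(2p-1)`, `r₊ = p(2p+1)`,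
`N_p = 4p³-8p²-p+1`, `K = (ξ-1)(r₋+r₊)`, the elements of `S(r₋,r₊)` in `[K, N_p/2]`
are exactly those `a·r₋ + b·r₊` with `a+b = 2ξ-2, b ≥ ξ-1` or `a+b = 2ξ-1, a ≥ ξ`. -/
theorem stmt_5 (p ξ : ℕ) (hξ : 1 ≤ ξ) (hp : p = 2*ξ + 1) :
    {x : ℕ | x ∈ AddSubmonoid.closure ({p * (2*p - 1), p * (2*p + 1)} : Set ℕ) ∧
        (ξ - 1) * (p * (2*p - 1) + p * (2*p + 1)) ≤ x ∧ 2*x ≤ 4*p^3 - 8*p^2 - p + 1} =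
      {x : ℕ | ∃ a b : ℕ, a + b = 2*ξ - 2 ∧ ξ - 1 ≤ b ∧
          x = a * (p * (2*p - 1)) + b * (p * (2*p + 1))} ∪
      {x : ℕ | ∃ a b : ℕ, a + b = 2*ξ - 1 ∧ ξ ≤ a ∧
          x = a * (p * (2*p - 1)) + b * (p * (2*p + 1))} := by
  obtain ⟨m, rfl⟩ : ∃ m, ξ = m + 1 := ⟨ξ - 1, by omega⟩
  subst hp
  have e1 : 2*(2*(m+1)+1) - 1 = 4*m+5 := by omega
  have e2 : 2*(2*(m+1)+1) + 1 = 4*m+7 := by omega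
  have e3 : (m+1) - 1 = m := by omega
  have e4 : 2*(m+1) - 2 = 2*m := by omega
  have e5 : 2*(m+1) - 1 = 2*m+1 := by omega
  have eN : 4*(2*(m+1)+1)^3 - 8*(2*(m+1)+1)^2 - (2*(m+1)+1) + 1
      = 32*m^3+112*m^2+118*m+34 := by
    have h3 : 4*(2*(m+1)+1)^3 = 32*m^3+144*m^2+216*m+108 := by ring
    have h2 : 8*(2*(m+1)+1)^2 = 32*m^2+96*m+72 := by ring
    omega
  have eR : (2*(m+1)+1) * (4*m+5) = 8*m^2+22*m+15 := by ring
  have eS : (2*(m+1)+1) * (4*m+7) = 8*m^2+26*m+21 := by ring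
  rw [e1, e2, e3, e4, e5, eN, eR, eS]
  ext x
  simp only [Set.mem_setOf_eq, Set.mem_union, AddSubmonoid.mem_closure_pair, smul_eq_mul]
  constructor
  · rintro ⟨⟨a, b, rfl⟩, h1, h2⟩
    have hR : a * (8*m^2+22*m+15) + b * (8*m^2+22*m+15)
        = (a+b) * (8*m^2+22*m+15) := by ring
    have hS : a * (8*m^2+26*m+21) + b * (8*m^2+26*m+21)
        = (a+b) * (8*m^2+26*m+21) := by ring
    have h2m : 2*m ≤ a + b := by
      by_contra h
      push_neg at h
      have hx : a * (8*m^2+22*m+15) ≤ a * (8*m^2+26*m+21) :=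
        Nat.mul_le_mul_left a (by omega)
      have key : (a+b+1) * (8*m^2+26*m+21) ≤ (2*m) * (8*m^2+26*m+21) :=
        Nat.mul_le_mul_right _ (by omega)
      linarith [h1, hx, key, hS]
    have h2m' : a + b ≤ 2*m + 1 := by
      by_contra h
      push_neg at h
      have hx : b * (8*m^2+22*m+15) ≤ b * (8*m^2+26*m+21) :=
        Nat.mul_le_mul_left b (by omega)
      have key : (2*m+2) * (8*m^2+22*m+15) ≤ (a+b) * (8*m^2+22*m+15) :=
        Nat.mul_le_mul_right _ (by omega)
      linarith [h2, hx, key, hR]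
    rcases (by omega : a + b = 2*m ∨ a + b = 2*m+1) with hn | hn
    · left
      refine ⟨a, b, hn, ?_, rfl⟩
      by_contra hb
      push_neg at hb
      have hbd : (a+b) * (8*m^2+22*m+15) = (2*m) * (8*m^2+22*m+15) := by rw [hn]
      have hbb : (b+1) * (4*m+6) ≤ m * (4*m+6) := Nat.mul_le_mul_right _ (by omega)
      linarith [h1, hR, hbd, hbb]
    · right
      refine ⟨a, b, hn, ?_, rfl⟩
      by_contra ha
      push_neg at ha
      have hbd : (a+b) * (8*m^2+22*m+15) = (2*m+1) * (8*m^2+22*m+15) := by rw [hn]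
      have hbb : (m+1) * (4*m+6) ≤ b * (4*m+6) := Nat.mul_le_mul_right _ (by omega)
      linarith [h2, hR, hbd, hbb]
  · rintro (⟨a, b, hab, hb, rfl⟩ | ⟨a, b, hab, ha, rfl⟩)
    · have hR : a * (8*m^2+22*m+15) + b * (8*m^2+22*m+15)
          = (2*m) * (8*m^2+22*m+15) := by rw [← hab]; ring
      refine ⟨⟨a, b, rfl⟩, ?_, ?_⟩
      · have hbb : m * (4*m+6) ≤ b * (4*m+6) := Nat.mul_le_mul_right _ hb
        linarith [hR, hbb, Nat.zero_le (m^2), Nat.zero_le (b*m), Nat.zero_le b]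
      · have hbb : b * (4*m+6) ≤ (2*m) * (4*m+6) := Nat.mul_le_mul_right _ (by omega)
        linarith [hR, hbb, Nat.zero_le (m^2), Nat.zero_le (b*m), Nat.zero_le b]
    · have hR : a * (8*m^2+22*m+15) + b * (8*m^2+22*m+15)
          = (2*m+1) * (8*m^2+22*m+15) := by rw [← hab]; ring
      refine ⟨⟨a, b, rfl⟩, ?_, ?_⟩
      · linarith [hR, Nat.zero_le (m^2), Nat.zero_le (b*m), Nat.zero_le b]
      · have hbb : b * (4*m+6) ≤ m * (4*m+6) := Nat.mul_le_mul_right _ (by omega)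
        linarith [hR, hbb, Nat.zero_le (m^2), Nat.zero_le (b*m), Nat.zero_le b]
end

section
/- Let p = 2ξ+1 with ξ ≥ 1 be odd, r₋ = p(2p−1), r₊ = p(2p+1), N_p = 4p³ − 8p² − p + 1, and K = (ξ−1)(r₋+r₊). Then {x ∈ S(r₋,r₊) : 2x ≥ N_p and x ≤ N_p − K} = {a·r₋ + b·r₊ : a,b ≥ 0, a+b = 2ξ−1, a ≤ ξ−1} ∪ {a·r₋ + b·r₊ : a,b ≥ 0, a+b = 2ξ, a ≥ ξ+1}. -/
/-- for odd `p = 2ξ+1`, `r₋ = p(2p-1)`, `r₊ = p(2p+1)`,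
`N_p = 4p³-8p²-p+1`, `K = (ξ-1)(r₋+r₊)`, the elements of `S(r₋,r₊)` in `[N_p/2, N_p - K]`
are exactly those `a·r₋ + b·r₊` with `a+b = 2ξ-1, a ≤ ξ-1` or `a+b = 2ξ, a ≥ ξ+1`. -/
theorem stmt_6 (p ξ : ℕ) (hξ : 1 ≤ ξ) (hp : p = 2*ξ + 1) :
    {x : ℕ | x ∈ AddSubmonoid.closure ({p * (2*p - 1), p * (2*p + 1)} : Set ℕ) ∧
        4*p^3 - 8*p^2 - p + 1 ≤ 2*x ∧
        x ≤ (4*p^3 - 8*p^2 - p + 1) - (ξ - 1) * (p * (2*p - 1) + p * (2*p + 1))} =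
      {x : ℕ | ∃ a b : ℕ, a + b = 2*ξ - 1 ∧ a ≤ ξ - 1 ∧
          x = a * (p * (2*p - 1)) + b * (p * (2*p + 1))} ∪
      {x : ℕ | ∃ a b : ℕ, a + b = 2*ξ ∧ ξ + 1 ≤ a ∧
          x = a * (p * (2*p - 1)) + b * (p * (2*p + 1))} := by
  obtain ⟨η, rfl⟩ : ∃ η, ξ = η + 1 := ⟨ξ - 1, by omega⟩
  subst hp
  have hm : (2*(η+1) + 1) * (2*(2*(η+1) + 1) - 1) = 8*η^2+22*η+15 := by
    rw [show 2*(2*(η+1) + 1) - 1 = 4*η+5 from by omega]; ring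
  have hM : (2*(η+1) + 1) * (2*(2*(η+1) + 1) + 1) = 8*η^2+26*η+21 := by ring
  have key : 4*(2*(η+1)+1)^3 = 8*(2*(η+1)+1)^2 + (2*(η+1)+1) + (32*η^3+112*η^2+118*η+33) := by
    ring
  have hN : 4*(2*(η+1)+1)^3 - 8*(2*(η+1)+1)^2 - (2*(η+1)+1) + 1
      = 32*η^3+112*η^2+118*η+34 := by omega
  have e2 : 2*(η+1) - 1 = 2*η+1 := by omega
  have e3 : (η+1) - 1 = η := by omega
  ext x
  simp only [Set.mem_setOf_eq, Set.mem_union, AddSubmonoid.mem_closure_pair, smul_eq_mul]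
  rw [hN, hm, hM, e2, e3]
  have hK : η * (8*η^2+22*η+15 + (8*η^2+26*η+21)) = 16*η^3+48*η^2+36*η := by ring
  rw [show 32*η^3+112*η^2+118*η+34 - η * (8*η^2+22*η+15 + (8*η^2+26*η+21))
      = 16*η^3+64*η^2+82*η+34 from by omega]
  constructor
  · rintro ⟨⟨a, b, rfl⟩, h1, h2⟩
    rcases le_or_gt (a+b) (2*η) with hs | hs
    · exfalso
      have f1 : a*(8*η^2+22*η+15) ≤ a*(8*η^2+26*η+21) := Nat.mul_le_mul le_rfl (by omega)
      have f2 : (a+b)*(8*η^2+26*η+21) ≤ (2*η)*(8*η^2+26*η+21) := Nat.mul_le_mul hs le_rfl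
      linarith
    rcases le_or_gt (2*η+3) (a+b) with hs2 | hs2
    · exfalso
      have f1 : b*(8*η^2+22*η+15) ≤ b*(8*η^2+26*η+21) := Nat.mul_le_mul le_rfl (by omega)
      have f2 : (2*η+3)*(8*η^2+22*η+15) ≤ (a+b)*(8*η^2+22*η+15) := Nat.mul_le_mul hs2 le_rfl
      linarith
    rcases (by omega : a+b = 2*η+1 ∨ a+b = 2*η+2) with h | h
    · left
      refine ⟨a, b, h, ?_, rfl⟩
      by_contra ha'
      push_neg at ha'
      have hb : b ≤ η := by omega
      have f1 : (a+b)*(8*η^2+22*η+15) = (2*η+1)*(8*η^2+22*η+15) := by rw [h]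
      have f2 : b*(8*η+12) ≤ η*(8*η+12) := Nat.mul_le_mul hb le_rfl
      linarith
    · right
      refine ⟨a, b, by omega, ?_, rfl⟩
      by_contra ha'
      push_neg at ha'
      have hb : η + 1 ≤ b := by omega
      have f1 : (a+b)*(8*η^2+22*η+15) = (2*η+2)*(8*η^2+22*η+15) := by rw [h]
      have f2 : (η+1)*(4*η+6) ≤ b*(4*η+6) := Nat.mul_le_mul hb le_rfl
      linarith
  · rintro (⟨a, b, hab, ha, rfl⟩ | ⟨a, b, hab, ha, rfl⟩)
    · have hb : η + 1 ≤ b := by omega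
      have f1 : (a+b)*(8*η^2+22*η+15) = (2*η+1)*(8*η^2+22*η+15) := by rw [hab]
      have f1' : (a+b)*(8*η^2+26*η+21) = (2*η+1)*(8*η^2+26*η+21) := by rw [hab]
      have f2 : (η+1)*(4*η+6) ≤ b*(4*η+6) := Nat.mul_le_mul hb le_rfl
      have f3 : a*(8*η^2+22*η+15) ≤ a*(8*η^2+26*η+21) := Nat.mul_le_mul le_rfl (by omega)
      exact ⟨⟨a, b, rfl⟩, by linarith, by linarith⟩
    · have hb : b ≤ η := by omega
      have f1 : (a+b)*(8*η^2+22*η+15) = (2*η+2)*(8*η^2+22*η+15) := by rw [hab]; ring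
      have f2 : b*(4*η+6) ≤ η*(4*η+6) := Nat.mul_le_mul hb le_rfl
      have f3 : b*(8*η^2+22*η+15) ≤ b*(8*η^2+26*η+21) := Nat.mul_le_mul le_rfl (by omega)
      exact ⟨⟨a, b, rfl⟩, by linarith, by linarith⟩
end

section
/- Let p = 2ξ+1 with ξ ≥ 1 be odd, r₋ = p(2p−1), r₊ = p(2p+1), and N_p = 4p³ − 8p² − p + 1. Then the following interleaving inequalities hold (all as inequalities of integers): (a) (ξ−1−j)r₋ + (ξ−1+j)r₊ < N_p − (ξ+1+j)r₋ − (ξ−1−j)r₊ for 0 ≤ j ≤ ξ−1; (b) N_p − (ξ+1+j)r₋ − (ξ−1−j)r₊ < (ξ−2−j)r₋ + (ξ+j)r₊ for 0 ≤ j ≤ ξ−2; (c) j·r₊ + (2ξ−1−j)r₋ < N_p − (j+1)r₋ − (2ξ−2−j)r₊ for 0 ≤ j ≤ ξ−2; (d) N_p − (j+1)r₋ − (2ξ−2−j)r₊ < (j+1)r₊ + (2ξ−2−j)r₋ for 0 ≤ j ≤ ξ−2; (e) N_p − 2ξ·r₋ < (2ξ−1)r₋; (f) N_p − (ξ−1)r₋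 − ξ·r₊ < ξ·r₋ + (ξ−1)r₊. -/
/-- interleaving inequalities for odd `p = 2ξ+1`, `r₋ = p(2p-1)`,
`r₊ = p(2p+1)`, `N_p = 4p³ - 8p² - p + 1`. -/
theorem stmt_7 (p ξ : ℤ) (hξ : 1 ≤ ξ) (hp : p = 2*ξ + 1) :
    (∀ j : ℤ, 0 ≤ j → j ≤ ξ - 1 →
      (ξ - 1 - j) * (p * (2*p - 1)) + (ξ - 1 + j) * (p * (2*p + 1)) <
        (4*p^3 - 8*p^2 - p + 1) - (ξ + 1 + j) * (p * (2*p - 1))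
          - (ξ - 1 - j) * (p * (2*p + 1))) ∧
    (∀ j : ℤ, 0 ≤ j → j ≤ ξ - 2 →
      (4*p^3 - 8*p^2 - p + 1) - (ξ + 1 + j) * (p * (2*p - 1))
          - (ξ - 1 - j) * (p * (2*p + 1)) <
        (ξ - 2 - j) * (p * (2*p - 1)) + (ξ + j) * (p * (2*p + 1))) ∧
    (∀ j : ℤ, 0 ≤ j → j ≤ ξ - 2 →
      j * (p * (2*p + 1)) + (2*ξ - 1 - j) * (p * (2*p - 1)) <
        (4*p^3 - 8*p^2 - p + 1) - (j + 1) * (p * (2*p - 1))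
          - (2*ξ - 2 - j) * (p * (2*p + 1))) ∧
    (∀ j : ℤ, 0 ≤ j → j ≤ ξ - 2 →
      (4*p^3 - 8*p^2 - p + 1) - (j + 1) * (p * (2*p - 1))
          - (2*ξ - 2 - j) * (p * (2*p + 1)) <
        (j + 1) * (p * (2*p + 1)) + (2*ξ - 2 - j) * (p * (2*p - 1))) ∧
    ((4*p^3 - 8*p^2 - p + 1) - 2*ξ * (p * (2*p - 1)) < (2*ξ - 1) * (p * (2*p - 1))) ∧
    ((4*p^3 - 8*p^2 - p + 1) - (ξ - 1) * (p * (2*p - 1)) - ξ * (p * (2*p + 1)) <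
      ξ * (p * (2*p - 1)) + (ξ - 1) * (p * (2*p + 1))) := by
  subst hp
  refine ⟨fun j hj0 hj1 => by nlinarith [sq_nonneg j, sq_nonneg ξ, mul_nonneg hj0 hj0, sq_nonneg (ξ-j)],
    fun j hj0 hj1 => by nlinarith [sq_nonneg j, sq_nonneg ξ, sq_nonneg (ξ-j)],
    fun j hj0 hj1 => by nlinarith [sq_nonneg j, sq_nonneg ξ, sq_nonneg (ξ-j)],
    fun j hj0 hj1 => by nlinarith [sq_nonneg j, sq_nonneg ξ, sq_nonneg (ξ-j)],
    by nlinarith [sq_nonneg ξ],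
    by nlinarith [sq_nonneg ξ]⟩
end

section
/- Let (X, Δ) be a sinking abstract delta sequence with |X| = n ≥ 1. Then its tau function attains its minimum at its last argument and only there: τ_Δ(n) < τ_Δ(i) for every 0 ≤ i ≤ n−1. -/
/-- the tau function of a sinking abstract delta sequence attains its minimum
at, and only at, its last argument: identifying `X` order-preservingly with `{0,…,n-1}`,
one has `τ_Δ(n) < τ_Δ(i)` for all `0 ≤ i ≤ n-1`, where `τ_Δ(i) = ∑_{k<i} Δ(k)`. -/
theorem stmt_8 (n : ℕ) (hn : 1 ≤ n) (Δ : ℕ → ℤ)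
    (hnz : ∀ i < n, Δ i ≠ 0) (hpos : 0 < Δ 0)
    (hsink : IsSinking (Finset.range n) Δ) :
    ∀ i < n, ∑ k ∈ Finset.range n, Δ k < ∑ k ∈ Finset.range i, Δ k := by
  classical
  obtain ⟨h1, h2, h3⟩ := hsink
  have hlast : Δ (n - 1) < 0 := by
    apply h1 (n - 1) (Finset.mem_range.2 (by omega))
    intro x hx
    rw [Finset.mem_range] at hx; omega
  have hrunmem : ∀ x y : ℕ, y ∈ dsRun (Finset.range n) Δ x ↔
      y < n ∧ ∀ z, z < n → min x y ≤ z → z ≤ max x y → (0 < Δ z ↔ 0 < Δ x) := by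
    intro x y
    simp [dsRun, Finset.mem_filter, Finset.mem_range]
  have hselfrun : ∀ x : ℕ, x < n → x ∈ dsRun (Finset.range n) Δ x := by
    intro x hx
    rw [hrunmem]
    refine ⟨hx, fun z hz h1z h2z => ?_⟩
    have : z = x := by simp at h1z h2z; omega
    rw [this]
  have hrunsign : ∀ x y : ℕ, y ∈ dsRun (Finset.range n) Δ x → (0 < Δ y ↔ 0 < Δ x) := by
    intro x y hy
    rw [hrunmem] at hy
    exact hy.2 y hy.1 (min_le_right _ _) (le_max_right _ _)
  have hredsub : ∀ z : ℕ, z ∈ redSet (Finset.range n) Δ → z < n := by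
    intro z hz
    rw [redSet, Finset.mem_filter, Finset.mem_range] at hz
    exact hz.1
  have hsignpos : ∀ x : ℕ, x < n → 0 < Δ x → 0 < redDelta (Finset.range n) Δ x := by
    intro x hx hΔx
    apply Finset.sum_pos
    · intro w hw
      exact (hrunsign x w hw).2 hΔx
    · exact ⟨x, hselfrun x hx⟩
  have hsignneg : ∀ x : ℕ, x < n → Δ x < 0 → redDelta (Finset.range n) Δ x < 0 := by
    intro x hx hΔx
    apply Finset.sum_neg
    · intro w hw
      have hw' : w < n := ((hrunmem x w).1 hw).1
      have := (hrunsign x w hw)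
      have := hnz w hw'
      omega
    · exact ⟨x, hselfrun x hx⟩
  have main : ∀ d : ℕ, ∀ i, i < n → n - i ≤ d → (∑ k ∈ Finset.Ico i n, Δ k) < 0 := by
    intro d
    induction d with
    | zero => intro i hi hd; omega
    | succ d ih =>
      intro i hi hd
      rcases lt_trichotomy (Δ i) 0 with hΔi | hΔi | hΔi
      · -- Δ i < 0
        by_cases hin : i + 1 = n
        · rw [← hin, Finset.sum_Ico_succ_top (le_refl i), Finset.Ico_self,
            Finset.sum_empty]
          simpa using hΔi
        · have hsplit := Finset.sum_Ico_consecutive Δ (by omega : i ≤ i + 1)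
            (by omega : i + 1 ≤ n)
          have h1' : ∑ k ∈ Finset.Ico i (i+1), Δ k = Δ i := by
            rw [Finset.sum_Ico_succ_top (le_refl i), Finset.Ico_self, Finset.sum_empty,
              zero_add]
          have hIH := ih (i+1) (by omega) (by omega)
          linarith [hsplit, h1', hIH]
      · exact absurd hΔi (hnz i hi)
      · -- Δ i > 0
        have hex : ∃ k, Δ (i + k) < 0 ∧ i + k < n :=
          ⟨n - 1 - i, by rw [show i + (n - 1 - i) = n - 1 by omega]; exact ⟨hlast, by omega⟩⟩
        set k0 := Nat.find hex with hk0def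
        obtain ⟨hky, hyn⟩ := Nat.find_spec hex
        set y := i + k0 with hydef
        have hk0pos : 1 ≤ k0 := by
          rcases Nat.eq_zero_or_pos k0 with h | h
          · exfalso; rw [hydef, h] at hky; simp at hky; omega
          · exact h
        set x := y - 1 with hxdef
        have hxy : x + 1 = y := by omega
        have hposrun : ∀ k, i ≤ k → k < y → 0 < Δ k := by
          intro k h1k h2k
          have hne := Nat.find_min hex (m := k - i) (by omega)
          rw [show i + (k - i) = k by omega] at hne
          push_neg at hne
          have : ¬ Δ k < 0 := fun h => by have := hne h; omega
          have := hnz k (by omega)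
          omega
        have hΔx : 0 < Δ x := hposrun x (by omega) (by omega)
        have hΔy : Δ y < 0 := hky
        -- second search
        have hex2 : ∃ k, 0 < Δ (y + k) ∨ y + k = n := ⟨n - y, by right; omega⟩
        set m0 := Nat.find hex2 with hm0def
        have he := Nat.find_spec hex2
        set e := y + m0 with hedef
        have hm0le : m0 ≤ n - y := Nat.find_min' hex2 (by right; omega)
        have hen : e ≤ n := by omega
        have hm0pos : 1 ≤ m0 := by
          rcases Nat.eq_zero_or_pos m0 with h | h
          · exfalso
            have := Nat.find_spec hex2
            rw [hm0def] at h
            rw [h] at this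
            simp at this
            rcases this with h' | h' <;> omega
          · exact h
        have hnegrun : ∀ k, y ≤ k → k < e → Δ k < 0 := by
          intro k h1k h2k
          have hne := Nat.find_min hex2 (m := k - y) (by omega)
          rw [show y + (k - y) = k by omega] at hne
          push_neg at hne
          have := hnz k (by omega)
          omega
        -- memberships in redSet
        have hxred : x ∈ redSet (Finset.range n) Δ := by
          rw [redSet, Finset.mem_filter, Finset.mem_range]
          refine ⟨by omega, Or.inl ⟨hΔx, fun w hw => ?_⟩⟩
          by_contra hxw
          push_neg at hxw
          rw [hrunmem] at hw
          have := hw.2 y hyn (le_trans (min_le_left _ _) (by omega))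
            (le_trans (by omega : y ≤ w) (le_max_right _ _))
          omega
        have hyred : y ∈ redSet (Finset.range n) Δ := by
          rw [redSet, Finset.mem_filter, Finset.mem_range]
          refine ⟨by omega, Or.inr ⟨hΔy, fun w hw => ?_⟩⟩
          by_contra hyw
          push_neg at hyw
          rw [hrunmem] at hw
          have := hw.2 x (by omega) (le_trans (min_le_right _ _) (by omega))
            (le_trans (by omega : x ≤ y) (le_max_left _ _))
          omega
        -- redDelta x bounds
        have hpsum : ∑ k ∈ Finset.Ico i y, Δ k ≤ redDelta (Finset.range n) Δ x := by
          rw [redDelta]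
          apply Finset.sum_le_sum_of_subset_of_nonneg
          · intro k hk
            rw [Finset.mem_Ico] at hk
            rw [hrunmem]
            refine ⟨by omega, fun z hz h1z h2z => ?_⟩
            have hiz : i ≤ z := le_trans (le_min (by omega) (by omega : i ≤ k)) h1z
            have hzx : z ≤ x := le_trans h2z (max_le (le_refl x) (by omega))
            exact iff_of_true (hposrun z hiz (by omega)) hΔx
          · intro w hw _
            exact le_of_lt ((hrunsign x w hw).2 hΔx)
        have hqeq : redDelta (Finset.range n) Δ y = ∑ k ∈ Finset.Ico y e, Δ k := by
          rw [redDelta]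
          congr 1
          apply Finset.ext
          intro w
          rw [hrunmem, Finset.mem_Ico]
          constructor
          · rintro ⟨hwn, hcond⟩
            constructor
            · by_contra hwy
              push_neg at hwy
              have := hcond x (by omega) (le_trans (min_le_right _ _) (by omega))
                (le_trans (by omega : x ≤ y) (le_max_left _ _))
              omega
            · by_contra hwe
              push_neg at hwe
              have hΔe : 0 < Δ e := by
                rcases he with h | h
                · exact h
                · omega
              have := hcond e (by omega) (le_trans (min_le_left _ _) (by omega))
                (le_trans hwe (le_max_right _ _))
              omega
          · rintro ⟨h1w, h2w⟩
            refine ⟨by omega, fun z hz h1z h2z => ?_⟩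
            have hyz : y ≤ z := le_trans (le_min (le_refl y) h1w) h1z
            have hze : z < e := by
              have : z ≤ max y w := h2z
              have : max y w < e := max_lt (by omega) h2w
              omega
            exact iff_of_false (by have := hnegrun z hyz hze; omega) (by omega)
        have hqneg : redDelta (Finset.range n) Δ y < 0 :=
          hsignneg y (by omega) hΔy
        have hppos : 0 < redDelta (Finset.range n) Δ x :=
          hsignpos x (by omega) hΔx
        -- split the sum
        have hsplit1 := Finset.sum_Ico_consecutive Δ (by omega : i ≤ y) (by omega : y ≤ n)
        have hsplit2 := Finset.sum_Ico_consecutive Δ (by omega : y ≤ e) (hen)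
        by_cases hcase : e = n
        · -- last block: use condition (iii)
          have hmaxpos : ∀ z ∈ redSet (Finset.range n) Δ,
              0 < redDelta (Finset.range n) Δ z → z ≤ x := by
            intro z hz hzpos
            have hzn := hredsub z hz
            by_contra hzx
            push_neg at hzx
            have hΔz : Δ z < 0 := hnegrun z (by omega) (by omega)
            have := hsignneg z hzn hΔz
            omega
          have hmaxall : ∀ z ∈ redSet (Finset.range n) Δ, z ≤ y := by
            intro z hz
            have hzn := hredsub z hz
            by_contra hzy
            push_neg at hzy
            have hΔz : Δ z < 0 := hnegrun z (by omega) (by omega)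
            rw [redSet, Finset.mem_filter] at hz
            rcases hz.2 with ⟨h', _⟩ | ⟨_, hall⟩
            · omega
            · have hymem : y ∈ dsRun (Finset.range n) Δ z := by
                rw [hrunmem]
                refine ⟨by omega, fun w hw h1w h2w => ?_⟩
                have hyw : y ≤ w := le_trans (le_min (by omega : y ≤ z) (le_refl y)) h1w
                have hwz : w < e := by
                  have : w ≤ max z y := h2w
                  have : max z y < e := max_lt (by omega) (by omega)
                  omega
                exact iff_of_false (by have := hnegrun w hyw hwz; omega) (by omega)
              have := hall y hymem
              omega
          have hkey := h3 x hxred hppos hmaxpos y hyred hmaxall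
          have hzero : ∑ k ∈ Finset.Ico e n, Δ k = 0 := by
            rw [hcase, Finset.Ico_self, Finset.sum_empty]
          linarith [hsplit1, hsplit2, hpsum, hqeq, hkey, hzero]
        · -- middle block: use condition (ii) and induction
          have hkey := h2 x hxred hppos y hyred (by omega) hqneg
            (fun z _ hz _ => by omega)
          have hIH := ih e (by omega) (by omega)
          linarith [hsplit1, hsplit2, hpsum, hqeq, hkey, hIH]
  intro i hi
  have h0 : ∑ k ∈ Finset.range i, Δ k + ∑ k ∈ Finset.Ico i n, Δ k
      = ∑ k ∈ Finset.range n, Δ k := by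
    rw [Finset.range_eq_Ico, Finset.range_eq_Ico]
    exact Finset.sum_Ico_consecutive Δ (Nat.zero_le i) (le_of_lt hi)
  have := main n i hi (by omega)
  linarith
end

section
/- Let p, q, r be pairwise coprime integers ≥ 2, N = pqr − pq − pr − qr, S_Y = S(pq,pr,qr) ∩ [0,N], Q_Y = {N − s : s ∈ S_Y}, and assume S_Y ∩ Q_Y = ∅ (which holds by a result of Can–Karakurt). Let (X̃, Δ̃) be the reduced form of the abstract delta sequence (X_Y, Δ_Y), where X_Y = S_Y ∪ Q_Y and Δ_Y = +1 on S_Y, −1 on Q_Y. Then the reduced sequence is symmetric under the reflection x ↦ N − x: for every x ∈ X̃, also N − x ∈ X̃, and Δ̃(N − x) = −Δ̃(x). -/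
lemma run_reflect_mem (X : Finset ℤ) (Δ : ℤ → ℤ) (N : ℤ)
    (h1 : ∀ x ∈ X, N - x ∈ X)
    (h2 : ∀ x ∈ X, Δ (N - x) = -Δ x)
    (hnz : ∀ x ∈ X, Δ x ≠ 0)
    (x : ℤ) (hx : x ∈ X) (w : ℤ) (hw : w ∈ dsRun X Δ x) :
    N - w ∈ dsRun X Δ (N - x) := by
  simp only [dsRun, Finset.mem_filter] at hw ⊢
  obtain ⟨hwX, hcond⟩ := hw
  refine ⟨h1 w hwX, fun z hz hz1 hz2 => ?_⟩
  have hNz : N - z ∈ X := h1 z hz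
  have key := hcond (N - z) hNz (by omega) (by omega)
  rw [h2 z hz] at key
  rw [h2 x hx]
  have := hnz z hz
  have := hnz x hx
  omega

lemma run_reflect (X : Finset ℤ) (Δ : ℤ → ℤ) (N : ℤ)
    (h1 : ∀ x ∈ X, N - x ∈ X)
    (h2 : ∀ x ∈ X, Δ (N - x) = -Δ x)
    (hnz : ∀ x ∈ X, Δ x ≠ 0)
    (x : ℤ) (hx : x ∈ X) :
    dsRun X Δ (N - x) = (dsRun X Δ x).image (fun w => N - w) := by
  ext y
  simp only [Finset.mem_image]
  constructor
  · intro hy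
    have hyX : y ∈ X := Finset.mem_of_mem_filter y hy
    refine ⟨N - y, ?_, by ring⟩
    have := run_reflect_mem X Δ N h1 h2 hnz (N - x) (h1 x hx) y hy
    have hxx : N - (N - x) = x := by ring
    rwa [hxx] at this
  · rintro ⟨w, hw, rfl⟩
    exact run_reflect_mem X Δ N h1 h2 hnz x hx w hw

lemma reflect_symm (X : Finset ℤ) (Δ : ℤ → ℤ) (N : ℤ)
    (h1 : ∀ x ∈ X, N - x ∈ X)
    (h2 : ∀ x ∈ X, Δ (N - x) = -Δ x)
    (hnz : ∀ x ∈ X, Δ x ≠ 0) :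
    ∀ x ∈ redSet X Δ,
      (N - x) ∈ redSet X Δ ∧ redDelta X Δ (N - x) = -redDelta X Δ x := by
  intro x hx
  simp only [redSet, Finset.mem_filter] at hx
  obtain ⟨hxX, hcase⟩ := hx
  have hrun := run_reflect X Δ N h1 h2 hnz x hxX
  have hinj : Set.InjOn (fun w => N - w) ↑(dsRun X Δ x) := by
    intro a _ b _ h
    simpa using h
  constructor
  · simp only [redSet, Finset.mem_filter]
    refine ⟨h1 x hxX, ?_⟩
    rw [h2 x hxX]
    rcases hcase with ⟨hpos, hle⟩ | ⟨hneg, hge⟩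
    · right
      refine ⟨by omega, ?_⟩
      intro y hy
      rw [hrun, Finset.mem_image] at hy
      obtain ⟨w, hw, rfl⟩ := hy
      have := hle w hw
      omega
    · left
      refine ⟨by omega, ?_⟩
      intro y hy
      rw [hrun, Finset.mem_image] at hy
      obtain ⟨w, hw, rfl⟩ := hy
      have := hge w hw
      omega
  · rw [redDelta, redDelta, hrun, Finset.sum_image hinj, ← Finset.sum_neg_distrib]
    refine Finset.sum_congr rfl fun w hw => ?_
    exact h2 w (Finset.mem_of_mem_filter w hw)

open Classical in
/-- the reduced form of the abstract delta sequence of the Brieskorn sphere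
`Σ(p,q,r)` is symmetric under the reflection `x ↦ N - x`: with `N = pqr - pq - pr - qr`,
`S_Y = S(pq, pr, qr) ∩ [0, N]`, `Q_Y = {N - s : s ∈ S_Y}` (assumed disjoint from `S_Y`),
`X_Y = S_Y ∪ Q_Y`, `Δ_Y = +1` on `S_Y` and `-1` on `Q_Y`, for every `x` in the reduced
set also `N - x` is in the reduced set and `Δ̃(N - x) = -Δ̃(x)`. -/
theorem stmt_9 (p q r : ℕ) (hp : 2 ≤ p) (hq : 2 ≤ q) (hr : 2 ≤ r)
    (hpq : Nat.Coprime p q) (hpr : Nat.Coprime p r) (hqr : Nat.Coprime q r)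
    (N : ℤ) (hN : N = (p : ℤ) * q * r - p * q - p * r - q * r)
    (SY : Finset ℤ)
    (hSY : SY = (Finset.Icc 0 N).filter
      (fun x => x ∈ AddSubmonoid.closure ({(p : ℤ) * q, (p : ℤ) * r, (q : ℤ) * r} : Set ℤ)))
    (QY : Finset ℤ) (hQY : QY = SY.image (fun s => N - s))
    (hdisj : Disjoint SY QY)
    (XY : Finset ℤ) (hXY : XY = SY ∪ QY)
    (Δ : ℤ → ℤ) (hΔ : ∀ x, Δ x = if x ∈ SY then 1 else -1) :
    ∀ x ∈ redSet XY Δ,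
      (N - x) ∈ redSet XY Δ ∧ redDelta XY Δ (N - x) = -redDelta XY Δ x := by
  have hSQ : ∀ s ∈ SY, N - s ∈ QY := by
    intro s hs
    rw [hQY]
    exact Finset.mem_image_of_mem _ hs
  have hQS : ∀ x ∈ QY, N - x ∈ SY := by
    intro x hx
    rw [hQY, Finset.mem_image] at hx
    obtain ⟨s, hs, rfl⟩ := hx
    simpa using hs
  have hnotboth : ∀ x, x ∈ QY → x ∉ SY := by
    intro x hx hx'
    exact Finset.disjoint_left.mp hdisj hx' hx
  have h1 : ∀ x ∈ XY, N - x ∈ XY := by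
    intro x hx
    rw [hXY, Finset.mem_union] at hx ⊢
    rcases hx with hx | hx
    · exact Or.inr (hSQ x hx)
    · exact Or.inl (hQS x hx)
  have h2 : ∀ x ∈ XY, Δ (N - x) = -Δ x := by
    intro x hx
    rw [hXY, Finset.mem_union] at hx
    rw [hΔ, hΔ]
    rcases hx with hx | hx
    · rw [if_pos hx, if_neg (hnotboth _ (hSQ x hx))]
    · rw [if_neg (hnotboth _ hx), if_pos (hQS x hx)]
      ring
  have hnz : ∀ x ∈ XY, Δ x ≠ 0 := by
    intro x _
    rw [hΔ]
    split <;> omega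
  exact reflect_symm XY Δ N h1 h2 hnz
end

section
/- Let p = 2ξ+1 ≥ 3 be odd, r₋ = p(2p−1), r₊ = p(2p+1), w = (2p−1)(2p+1), N_p = 4p³ − 8p² − p + 1, K = (ξ−1)(r₋+r₊), and let (X̃_{Y_p}, Δ̃_{Y_p}) be the reduced form of the abstract delta sequence of Σ(p,2p−1,2p+1). Then X̃_{Y_p} ∩ [K, N_p/2] has exactly 4ξ−1 elements, and if they are listed in increasing order, the corresponding sequence of values of Δ̃_{Y_p} equals the creature delta sequence Δ_{C_p}. -/
/-- The creature delta sequence `Δ_{C_p}` for `p = 2ξ+1` (indexed by `1 ≤ i ≤ 4ξ-1`):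
`⟨ξ, -ξ, ξ-1, -(ξ-1), …, 2, -2, 1, -2, 1, -2, 2, …, -(ξ-1), ξ-1, -ξ, ξ⟩`; explicitly, for
`1 ≤ i ≤ ξ-1` the `(2i-1)`-st entry is `ξ+1-i` and the `(2i)`-th entry is `-(ξ+1-i)`, the
`(2ξ-1)`-st, `(2ξ)`-th, `(2ξ+1)`-st entries are `1, -2, 1`, and for `1 ≤ i ≤ ξ-1` the
`(2ξ+2i)`-th entry is `-(i+1)` and the `(2ξ+2i+1)`-st entry is `i+1`. -/
def creature (ξ : ℕ) (i : ℕ) : ℤ :=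
  if i ≤ 2*ξ - 2 then
    (if i % 2 = 1 then (ξ : ℤ) + 1 - (((i + 1) / 2 : ℕ) : ℤ)
     else -((ξ : ℤ) + 1 - ((i / 2 : ℕ) : ℤ)))
  else if i = 2*ξ - 1 then 1
  else if i = 2*ξ then -2
  else if i = 2*ξ + 1 then 1
  else
    (if i % 2 = 0 then -((((i - 2*ξ) / 2 : ℕ) : ℤ) + 1)
     else (((i - 2*ξ) / 2 : ℕ) : ℤ) + 1)

lemma mem_closure3 (x y z n : ℕ) :
    n ∈ AddSubmonoid.closure ({x, y, z} : Set ℕ) ↔ ∃ a b c : ℕ, n = a*x + b*y + c*z := by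
  constructor
  · intro h
    induction h using AddSubmonoid.closure_induction with
    | mem u hu =>
      rcases hu with h|h|h
      · exact ⟨1, 0, 0, by simp [h]⟩
      · exact ⟨0, 1, 0, by simp [h]⟩
      · exact ⟨0, 0, 1, by simp at h; simp [h]⟩
    | zero => exact ⟨0, 0, 0, by simp⟩
    | add u v _ _ hu hv =>
      obtain ⟨a, b, c, rfl⟩ := hu
      obtain ⟨a', b', c', rfl⟩ := hv
      exact ⟨a + a', b + b', c + c', by ring⟩
  · rintro ⟨a, b, c, rfl⟩
    have hx : x ∈ AddSubmonoid.closure ({x, y, z} : Set ℕ) :=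
      AddSubmonoid.subset_closure (by simp)
    have hy : y ∈ AddSubmonoid.closure ({x, y, z} : Set ℕ) :=
      AddSubmonoid.subset_closure (by simp)
    have hz : z ∈ AddSubmonoid.closure ({x, y, z} : Set ℕ) :=
      AddSubmonoid.subset_closure (by simp)
    exact add_mem (add_mem (nsmul_mem hx a) (nsmul_mem hy b)) (nsmul_mem hz c)

lemma sandwich {P i i' x y : ℕ} (hx : x < P) (hy : y < P) (h : P*i + x = P*i' + y) :
    i = i' ∧ x = y := by
  rcases Nat.lt_trichotomy i i' with hlt | heq | hgt
  · have := Nat.mul_le_mul_left P hlt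
    rw [Nat.mul_succ] at this; omega
  · subst heq; omega
  · have := Nat.mul_le_mul_left P hgt
    rw [Nat.mul_succ] at this; omega

lemma dsRun_eq (X : Finset ℕ) (Δ : ℕ → ℤ) (x l r : ℕ) (R : Finset ℕ)
    (hx : x ∈ R)
    (hR : ∀ y ∈ R, y ∈ X ∧ (0 < Δ y ↔ 0 < Δ x))
    (hz : ∀ z ∈ X, l < z → z < r → z ∈ R)
    (hl : l ∈ X) (hr : r ∈ X)
    (hlR : ∀ y ∈ R, l < y) (hrR : ∀ y ∈ R, y < r)
    (hsl : ¬(0 < Δ l ↔ 0 < Δ x)) (hsr : ¬(0 < Δ r ↔ 0 < Δ x)) :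
    dsRun X Δ x = R := by
  ext y
  simp only [dsRun, Finset.mem_filter]
  constructor
  · rintro ⟨hyX, hy⟩
    by_cases hly : l < y
    · by_cases hyr : y < r
      · exact hz y hyX hly hyr
      · exfalso
        have hxr := hrR x hx
        exact hsr (hy r hr (by omega) (by omega))
    · exfalso
      have hlx := hlR x hx
      exact hsl (hy l hl (by omega) (by omega))
  · intro hyR
    refine ⟨(hR y hyR).1, fun z hzX h1 h2 => ?_⟩
    have hly := hlR y hyR
    have hyr := hrR y hyR
    have hlx := hlR x hx
    have hxr := hrR x hx
    have := hz z hzX (by omega) (by omega)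
    exact (hR z this).2
lemma mem_redSet_iff (X : Finset ℕ) (Δ : ℕ → ℤ) (x : ℕ) (R : Finset ℕ)
    (h : dsRun X Δ x = R) (hx : x ∈ X) :
    x ∈ redSet X Δ ↔ ((0 < Δ x ∧ ∀ y ∈ R, y ≤ x) ∨ (Δ x < 0 ∧ ∀ y ∈ R, x ≤ y)) := by
  simp [redSet, hx, h]
lemma redDelta_eq (X : Finset ℕ) (Δ : ℕ → ℤ) (x : ℕ) (R : Finset ℕ)
    (h : dsRun X Δ x = R) : redDelta X Δ x = ∑ y ∈ R, Δ y := by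
  rw [redDelta, h]

lemma classify (m a b c n : ℕ)
    (hn : n = a*(8*m*m+22*m+15) + b*(8*m*m+26*m+21) + c*(16*m*m+48*m+35))
    (hlo : 16*m*m*m+48*m*m+36*m ≤ n + (m+1))
    (hhi : n ≤ 16*m*m*m+48*m*m+36*m + 16*(m*m)+47*m+35) :
    (∃ i j, i + j ≤ m ∧ n + j = 16*m*m*m+48*m*m+36*m + (4*m+6)*i) ∨
    (∃ i j, i ≤ m ∧ j ≤ i ∧ n + j = 16*m*m*m+48*m*m+36*m + (4*(m*m)+16*m+15) + (4*m+6)*i) ∨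
    (∃ i j, i ≤ m ∧ j ≤ i ∧ n + j + (4*m+6)*i = 16*m*m*m+48*m*m+36*m + (12*(m*m)+32*m+21)) ∨
    (∃ i j, i + j ≤ m+1 ∧ n + j + (4*m+6)*i = 16*m*m*m+48*m*m+36*m + (16*(m*m)+48*m+36)) := by
  have master : n + c + (2*m+3)*a = (8*m*m+24*m+18)*(a+b+2*c) + (2*m+3)*b := by
    rw [hn]; ring
  have h2low : 2*n = (a+b+2*c)*(16*m*m+44*m+30) + b*(8*m+12) + c*(8*m+10) := by
    rw [hn]; ring
  have h2up : 2*n + a*(8*m+12) + c*(8*m+14) = (a+b+2*c)*(16*m*m+52*m+42) := by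
    rw [hn]; ring
  -- u bounds
  have hu2 : a+b+2*c ≤ 2*m+2 := by
    by_contra h
    push_neg at h
    have h1 : (2*m+3)*(16*m*m+44*m+30) ≤ (a+b+2*c)*(16*m*m+44*m+30) :=
      Nat.mul_le_mul_right _ h
    have h2 : (2*m+3)*(16*m*m+44*m+30) = 32*(m*m*m)+136*(m*m)+192*m+90 := by ring
    nlinarith [Nat.zero_le (b*(8*m+12)), Nat.zero_le (c*(8*m+10))]
  have hu1 : 2*m ≤ a+b+2*c := by
    by_contra h
    push_neg at h
    have h1 : (a+b+2*c+1)*(16*m*m+52*m+42) ≤ (2*m)*(16*m*m+52*m+42) :=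
      Nat.mul_le_mul_right _ h
    have h2 : (a+b+2*c+1)*(16*m*m+52*m+42)
        = (a+b+2*c)*(16*m*m+52*m+42) + 16*m*m+52*m+42 := by ring
    have h3 : (2*m)*(16*m*m+52*m+42) = 32*(m*m*m)+104*(m*m)+84*m := by ring
    nlinarith [Nat.zero_le (a*(8*m+12)), Nat.zero_le (c*(8*m+14))]
  have hcase : a+b+2*c = 2*m ∨ a+b+2*c = 2*m+1 ∨ a+b+2*c = 2*m+2 := by omega
  rcases hcase with hu | hu | hu
  · -- u = 2m : branch P1
    left
    have hbase : (8*m*m+24*m+18)*(a+b+2*c) = 16*m*m*m+48*m*m+36*m := by rw [hu]; ring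
    have hba : a ≤ b := by
      by_contra h
      push_neg at h
      have h1 : (2*m+3)*(b+1) ≤ (2*m+3)*a := Nat.mul_le_mul_left _ h
      have h2 : (2*m+3)*(b+1) = (2*m+3)*b + (2*m+3) := by ring
      linarith
    obtain ⟨i, hb, hic⟩ : ∃ i, b = a + 2*i ∧ i + c + a = m := ⟨m - c - a, by omega, by omega⟩
    refine ⟨i, c, by omega, ?_⟩
    have h5 : (2*m+3)*b = (2*m+3)*a + (4*m+6)*i := by rw [hb]; ring
    linarith
  · -- u = 2m+1
    have hbase : (8*m*m+24*m+18)*(a+b+2*c) = 16*m*m*m+56*m*m+60*m+18 := by rw [hu]; ring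
    rcases Nat.lt_or_ge a b with hab | hab
    · -- b ≥ a+1 : branch P3
      right; right; left
      refine ⟨a + c, c, by omega, by omega, ?_⟩
      have hb : b + 2*(a+c) = a + (2*m+1) := by omega
      have h5 : (2*m+3)*(b+2*(a+c)) = (2*m+3)*(a+(2*m+1)) := by rw [hb]
      have h6 : (2*m+3)*(b+2*(a+c)) = (2*m+3)*b + (4*m+6)*(a+c) := by ring
      have h7 : (2*m+3)*(a+(2*m+1)) = (2*m+3)*a + 4*(m*m)+8*m+3 := by ring
      have h8 : (16*m*m*m:ℕ)+56*m*m+60*m+18 + 4*(m*m)+8*m+3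
          = 16*m*m*m+60*(m*m)+68*m+21 := by ring
      linarith
    · -- a ≥ b, and a ≠ b by parity: branch P2
      right; left
      have hne : b < a := by
        rcases Nat.lt_or_ge b a with h | h
        · exact h
        · exfalso; omega
      refine ⟨b + c, c, by omega, by omega, ?_⟩
      have ha : a = b + (2*m+1) - 2*(b+c) := by omega
      have ha' : a + 2*(b+c) = b + (2*m+1) := by omega
      have h5 : (2*m+3)*(a+2*(b+c)) = (2*m+3)*(b+(2*m+1)) := by rw [ha']
      have h6 : (2*m+3)*(a+2*(b+c)) = (2*m+3)*a + (4*m+6)*(b+c) := by ring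
      have h7 : (2*m+3)*(b+(2*m+1)) = (2*m+3)*b + 4*(m*m)+8*m+3 := by ring
      have h8 : (16*m*m*m:ℕ)+56*m*m+60*m+18
          = 16*m*m*m+52*(m*m)+52*m+15 + 4*(m*m)+8*m+3 := by ring
      linarith
  · -- u = 2m+2 : branch P4
    right; right; right
    have hbase : (8*m*m+24*m+18)*(a+b+2*c) = 16*m*m*m+64*m*m+84*m+36 := by rw [hu]; ring
    have hba : b ≤ a := by
      by_contra h
      push_neg at h
      have h1 : (2*m+3)*(a+1) ≤ (2*m+3)*b := Nat.mul_le_mul_left _ h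
      have h2 : (2*m+3)*(a+1) = (2*m+3)*a + (2*m+3) := by ring
      linarith
    obtain ⟨i, ha, hic⟩ : ∃ i, a = b + 2*i ∧ i + c + b = m+1 :=
      ⟨m+1 - c - b, by omega, by omega⟩
    refine ⟨i, c, by omega, ?_⟩
    have h5 : (2*m+3)*a = (2*m+3)*b + (4*m+6)*i := by rw [ha]; ring
    linarith

def Km (m : ℕ) : ℕ := 16*m*m*m+48*m*m+36*m
def Nm (m : ℕ) : ℕ := 2*Km m + 16*(m*m)+46*m+34

lemma rm_eq (m : ℕ) : rMinus (2*m+3) = 8*m*m+22*m+15 := by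
  show (2*m+3)*(2*(2*m+3)-1) = _
  have h : 2*(2*m+3)-1 = 4*m+5 := by omega
  rw [h]; ring

lemma rp_eq (m : ℕ) : rPlus (2*m+3) = 8*m*m+26*m+21 := by
  show (2*m+3)*(2*(2*m+3)+1) = _; ring

lemma w_eq (m : ℕ) : wP (2*m+3) = 16*m*m+48*m+35 := by
  show (2*(2*m+3)-1)*(2*(2*m+3)+1) = _
  have h : 2*(2*m+3)-1 = 4*m+5 := by omega
  rw [h]; ring

lemma NP_eq (m : ℕ) : NP (2*m+3) = Nm m := by
  show 4*(2*m+3)^3 - 8*(2*m+3)^2 - (2*m+3) + 1 = _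
  have h1 : 4*(2*m+3)^3 = 32*(m*m*m)+144*(m*m)+216*m+108 := by ring
  have h2 : 8*(2*m+3)^2 = 32*(m*m)+96*m+72 := by ring
  rw [h1, h2]
  show _ = 2*(16*m*m*m+48*m*m+36*m) + 16*(m*m)+46*m+34
  have hA : 16*m*m*m = 16*(m*m*m) := by ring
  have hB : 48*m*m = 48*(m*m) := by ring
  omega

lemma mem_SYp_iff (m x : ℕ) : x ∈ SYp (2*m+3) ↔ x ≤ Nm m ∧
    ∃ a b c : ℕ, x = a*(8*m*m+22*m+15) + b*(8*m*m+26*m+21) + c*(16*m*m+48*m+35) := by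
  classical
  simp only [SYp, Finset.mem_filter, Finset.mem_range, Nat.lt_succ_iff, NP_eq,
    rm_eq, rp_eq, w_eq, mem_closure3]

lemma mem_QYp_iff (m z : ℕ) : z ∈ QYp (2*m+3) ↔
    ∃ s, s ∈ SYp (2*m+3) ∧ z = Nm m - s := by
  rw [QYp, Finset.mem_image, NP_eq]
  constructor
  · rintro ⟨s, hs, rfl⟩; exact ⟨s, hs, rfl⟩
  · rintro ⟨s, hs, rfl⟩; exact ⟨s, hs, rfl⟩

lemma S_le_N (m x : ℕ) (h : x ∈ SYp (2*m+3)) : x ≤ Nm m := ((mem_SYp_iff m x).1 h).1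

lemma mem_QYp_of (m s : ℕ) (hs : s ∈ SYp (2*m+3)) (z : ℕ) (hz : z + s = Nm m) :
    z ∈ QYp (2*m+3) := by
  rw [mem_QYp_iff]
  exact ⟨s, hs, by omega⟩

lemma classify4 (m n : ℕ) (hS : n ∈ SYp (2*m+3))
    (h1 : Km m ≤ n + (m+1)) (h2 : n + Km m ≤ Nm m + (m+1)) :
    (∃ i j, i + j ≤ m ∧ n + j = Km m + (4*m+6)*i) ∨
    (∃ i j, i ≤ m ∧ j ≤ i ∧ n + j = Km m + 4*(m*m)+16*m+15 + (4*m+6)*i) ∨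
    (∃ i j, i ≤ m ∧ j ≤ i ∧ n + j + (4*m+6)*i = Km m + 12*(m*m)+32*m+21) ∨
    (∃ i j, i + j ≤ m+1 ∧ n + j + (4*m+6)*i = Km m + 16*(m*m)+48*m+36) := by
  obtain ⟨hN, a, b, c, hn⟩ := (mem_SYp_iff m n).1 hS
  have hKm : Km m = 16*m*m*m+48*m*m+36*m := rfl
  have hNm : Nm m = 2*(16*m*m*m+48*m*m+36*m) + 16*(m*m)+46*m+34 := rfl
  rw [hKm] at h1 ⊢
  rw [hNm, hKm] at h2
  have := classify m a b c n hn (by omega) (by omega)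
  rcases this with ⟨i, j, h3, h4⟩ | ⟨i, j, h3, h3', h4⟩ | ⟨i, j, h3, h3', h4⟩ | ⟨i, j, h3, h4⟩
  · exact Or.inl ⟨i, j, h3, by omega⟩
  · exact Or.inr (Or.inl ⟨i, j, h3, h3', by omega⟩)
  · exact Or.inr (Or.inr (Or.inl ⟨i, j, h3, h3', by omega⟩))
  · exact Or.inr (Or.inr (Or.inr ⟨i, j, h3, by omega⟩))

def Am (m i : ℕ) : ℕ := Km m + (4*m+6)*i
def Bm (m i : ℕ) : ℕ := Km m + (4*m+6)*i + (2*m+4)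
def Gm (m : ℕ) : ℕ := Km m + 4*(m*m)+14*m+13
def Cm (m i : ℕ) : ℕ := Km m + 4*(m*m)+16*m+15 + (4*m+6)*i
def Dm (m i : ℕ) : ℕ := Cm m i + (2*m+4)
def E6 (m : ℕ) : ℕ := Km m + 8*(m*m)+24*m+19

lemma tmax (m i bb : ℕ) (h : i ≤ bb) : (4*m+6)*i ≤ (4*m+6)*bb := Nat.mul_le_mul_left _ h

lemma teq (m i bb : ℕ) (hle : i ≤ bb) (h : (4*m+6)*bb ≤ (4*m+6)*i) : i = bb :=
  le_antisymm hle (Nat.le_of_mul_le_mul_left h (by omega))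

lemma memS (m a b c x : ℕ)
    (hx : x = a*(8*m*m+22*m+15) + b*(8*m*m+26*m+21) + c*(16*m*m+48*m+35))
    (hN : x ≤ Nm m) : x ∈ SYp (2*m+3) := (mem_SYp_iff m x).2 ⟨hN, a, b, c, hx⟩

lemma memS_A (m i j x : ℕ) (hij : i + j ≤ m) (hx : x + j = Am m i) :
    x ∈ SYp (2*m+3) := by
  obtain ⟨a, ha⟩ : ∃ a, a + i + j = m := ⟨m - i - j, by omega⟩
  have hKm : Km m = 16*m*m*m+48*m*m+36*m := rfl
  have hNm : Nm m = 2*(Km m) + 16*(m*m)+46*m+34 := rfl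
  rw [Am, hKm] at hx
  apply memS m a (a+2*i) j
  · have e1 : (a+i+j)*(16*m*m+48*m+36) = m*(16*m*m+48*m+36) := by rw [ha]
    linarith [e1, hx]
  · have h2 : (4*m+6)*i ≤ (4*m+6)*m := tmax m i m (by omega)
    have h3 : (4*m+6)*m = 4*(m*m)+6*m := by ring
    omega

lemma memS_C (m i j x : ℕ) (hi : i ≤ m) (hj : j ≤ i) (hx : x + j = Cm m i) :
    x ∈ SYp (2*m+3) := by
  obtain ⟨a, ha⟩ : ∃ a, a + (i + j) = 2*m+1 := ⟨2*m+1 - i - j, by omega⟩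
  obtain ⟨b, hb⟩ : ∃ b, b + j = i := ⟨i - j, by omega⟩
  have hKm : Km m = 16*m*m*m+48*m*m+36*m := rfl
  have hNm : Nm m = 2*(Km m) + 16*(m*m)+46*m+34 := rfl
  rw [Cm, hKm] at hx
  apply memS m a b j
  · have e1 : (a+(i+j))*(8*m*m+22*m+15) = (2*m+1)*(8*m*m+22*m+15) := by rw [ha]
    have e2 : (b+j)*(8*m*m+26*m+21) = i*(8*m*m+26*m+21) := by rw [hb]
    linarith [e1, e2, hx]
  · have h2 : (4*m+6)*i ≤ (4*m+6)*m := tmax m i m hi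
    have h3 : (4*m+6)*m = 4*(m*m)+6*m := by ring
    omega

lemma memS_P3 (m i j x : ℕ) (hi : i ≤ m) (hj : j ≤ i)
    (hx : x + j + (4*m+6)*i = Km m + 12*(m*m)+32*m+21) : x ∈ SYp (2*m+3) := by
  obtain ⟨a, ha⟩ : ∃ a, a + j = i := ⟨i - j, by omega⟩
  obtain ⟨b, hb⟩ : ∃ b, b + (i + j) = 2*m+1 := ⟨2*m+1 - i - j, by omega⟩
  have hKm : Km m = 16*m*m*m+48*m*m+36*m := rfl
  have hNm : Nm m = 2*(Km m) + 16*(m*m)+46*m+34 := rfl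
  rw [hKm] at hx
  apply memS m a b j
  · have e1 : (a+j)*(8*m*m+22*m+15) = i*(8*m*m+22*m+15) := by rw [ha]
    have e2 : (b+(i+j))*(8*m*m+26*m+21) = (2*m+1)*(8*m*m+26*m+21) := by rw [hb]
    linarith [e1, e2, hx]
  · omega

lemma memS_P4 (m i j x : ℕ) (hij : i + j ≤ m+1)
    (hx : x + j + (4*m+6)*i = Km m + 16*(m*m)+48*m+36) (hN : x ≤ Nm m) :
    x ∈ SYp (2*m+3) := by
  obtain ⟨b, hb⟩ : ∃ b, b + (i + j) = m+1 := ⟨m+1 - i - j, by omega⟩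
  have hKm : Km m = 16*m*m*m+48*m*m+36*m := rfl
  rw [hKm] at hx
  refine memS m (b+2*i) b j x ?_ hN
  have e1 : (b+(i+j))*(16*m*m+48*m+36) = (m+1)*(16*m*m+48*m+36) := by rw [hb]
  linarith [e1, hx]

def ExtP (m z : ℕ) : Prop :=
  (z + (m+1) = Km m) ∨
  (∃ i j, i + j ≤ m ∧ z + j = Am m i) ∨
  (∃ i j, i + j ≤ m ∧ z = Bm m i + j) ∨
  z = Gm m ∨
  (∃ i j, i ≤ m ∧ j ≤ i ∧ z + j = Cm m i) ∨
  (∃ i j, i + 1 ≤ m ∧ j ≤ i + 1 ∧ z = Dm m i + j) ∨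
  z = E6 m

lemma windowS (m n : ℕ) (hS : n ∈ SYp (2*m+3)) (h1 : Km m ≤ n + (m+1)) (h2 : n ≤ E6 m) :
    (∃ i j, i + j ≤ m ∧ n + j = Am m i) ∨ (∃ i j, i ≤ m ∧ j ≤ i ∧ n + j = Cm m i) := by
  have hKm : Km m = 16*m*m*m+48*m*m+36*m := rfl
  have hNm : Nm m = 2*(Km m) + 16*(m*m)+46*m+34 := rfl
  have hE6 : E6 m = Km m + 8*(m*m)+24*m+19 := rfl
  have := classify4 m n hS h1 (by omega)
  rcases this with h | h | ⟨i, j, hi, hj, h⟩ | ⟨i, j, hij, h⟩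
  · exact Or.inl h
  · obtain ⟨i, j, hi, hj, h⟩ := h
    exact Or.inr ⟨i, j, hi, hj, by rw [Cm]; omega⟩
  · exfalso
    have h2' : (4*m+6)*i ≤ (4*m+6)*m := tmax m i m hi
    have h3 : (4*m+6)*m = 4*(m*m)+6*m := by ring
    omega
  · exfalso
    have h2' : (4*m+6)*i ≤ (4*m+6)*(m+1) := tmax m i (m+1) (by omega)
    have h3 : (4*m+6)*(m+1) = 4*(m*m)+10*m+6 := by ring
    omega

lemma windowQ (m z : ℕ) (hQ : z ∈ QYp (2*m+3)) (h1 : Km m ≤ z + (m+1)) (h2 : z ≤ E6 m) :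
    (z + (m+1) = Km m) ∨
    (∃ i j, i + j ≤ m ∧ z = Bm m i + j) ∨
    z = Gm m ∨
    (∃ i j, i + 1 ≤ m ∧ j ≤ i + 1 ∧ z = Dm m i + j) ∨
    z = E6 m := by
  obtain ⟨s, hs, hzs⟩ := (mem_QYp_iff m z).1 hQ
  have hsN := S_le_N m s hs
  have hzs' : z + s = Nm m := by omega
  have hKm : Km m = 16*m*m*m+48*m*m+36*m := rfl
  have hNm : Nm m = 2*(Km m) + 16*(m*m)+46*m+34 := rfl
  have hE6 : E6 m = Km m + 8*(m*m)+24*m+19 := rfl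
  have := classify4 m s hs (by omega) (by omega)
  rcases this with ⟨i, j, hij, h⟩ | ⟨i, j, hi, hj, h⟩ | ⟨i, j, hi, hj, h⟩ | ⟨i, j, hij, h⟩
  · exfalso
    have h2' : (4*m+6)*i ≤ (4*m+6)*m := tmax m i m (by omega)
    have h3 : (4*m+6)*m = 4*(m*m)+6*m := by ring
    omega
  · -- P2 ↦ e6
    right; right; right; right
    have h2' : (4*m+6)*i ≤ (4*m+6)*m := tmax m i m hi
    have h3 : (4*m+6)*m = 4*(m*m)+6*m := by ring
    have him : i = m := teq m i m hi (by omega)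
    rw [him] at h
    omega
  · -- P3 ↦ e3 or e5
    rcases Nat.eq_zero_or_pos i with hi0 | hipos
    · right; right; left
      rw [hi0] at h hj
      simp at h hj
      rw [Gm]
      omega
    · right; right; right; left
      obtain ⟨i', rfl⟩ : ∃ i', i = i' + 1 := ⟨i - 1, by omega⟩
      refine ⟨i', j, by omega, by omega, ?_⟩
      have h4 : (4*m+6)*(i'+1) = (4*m+6)*i' + (4*m+6) := by ring
      rw [Dm, Cm]
      omega
  · -- P4 ↦ e0 or e2
    rcases Nat.eq_zero_or_pos i with hi0 | hipos
    · left
      rw [hi0] at h hij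
      simp at h hij
      omega
    · right; left
      obtain ⟨i', rfl⟩ : ∃ i', i = i' + 1 := ⟨i - 1, by omega⟩
      refine ⟨i', j, by omega, ?_⟩
      have h4 : (4*m+6)*(i'+1) = (4*m+6)*i' + (4*m+6) := by ring
      rw [Bm]
      omega

lemma windowX (m z : ℕ) (hX : z ∈ XYp (2*m+3)) (h1 : Km m ≤ z + (m+1)) (h2 : z ≤ E6 m) :
    ExtP m z := by
  rw [XYp, Finset.mem_union] at hX
  rcases hX with hS | hQ
  · rcases windowS m z hS h1 h2 with h | h
    · exact Or.inr (Or.inl h)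
    · exact Or.inr (Or.inr (Or.inr (Or.inr (Or.inl h))))
  · rcases windowQ m z hQ h1 h2 with h | h | h | h | h
    · exact Or.inl h
    · exact Or.inr (Or.inr (Or.inl h))
    · exact Or.inr (Or.inr (Or.inr (Or.inl h)))
    · exact Or.inr (Or.inr (Or.inr (Or.inr (Or.inr (Or.inl h)))))
    · exact Or.inr (Or.inr (Or.inr (Or.inr (Or.inr (Or.inr h)))))

section
variable (m : ℕ)

lemma memQ_B (i j : ℕ) (hij : i + j ≤ m) : Bm m i + j ∈ QYp (2*m+3) := by
  have hKm : Km m = 16*m*m*m+48*m*m+36*m := rfl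
  have hNm : Nm m = 2*(Km m) + 16*(m*m)+46*m+34 := rfl
  have r1 : (4*m+6)*(i+1) = (4*m+6)*i + (4*m+6) := by ring
  have r2 : (4*m+6)*i ≤ (4*m+6)*m := tmax m i m (by omega)
  have r3 : (4*m+6)*m = 4*(m*m)+6*m := by ring
  obtain ⟨s, hs⟩ : ∃ s, s + j + (4*m+6)*(i+1) = Km m + 16*(m*m)+48*m+36 :=
    ⟨Km m + 16*(m*m)+48*m+36 - j - (4*m+6)*(i+1), by omega⟩
  have hsS : s ∈ SYp (2*m+3) := memS_P4 m (i+1) j s (by omega) hs (by omega)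
  exact mem_QYp_of m s hsS _ (by rw [Bm]; omega)

lemma memQ_G : Gm m ∈ QYp (2*m+3) := by
  have hKm : Km m = 16*m*m*m+48*m*m+36*m := rfl
  have hNm : Nm m = 2*(Km m) + 16*(m*m)+46*m+34 := rfl
  obtain ⟨s, hs⟩ : ∃ s, s + 0 + (4*m+6)*0 = Km m + 12*(m*m)+32*m+21 :=
    ⟨Km m + 12*(m*m)+32*m+21, by omega⟩
  have hsS : s ∈ SYp (2*m+3) := memS_P3 m 0 0 s (by omega) (by omega) hs
  exact mem_QYp_of m s hsS _ (by rw [Gm]; omega)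

lemma memQ_D (i j : ℕ) (hi : i + 1 ≤ m) (hj : j ≤ i + 1) : Dm m i + j ∈ QYp (2*m+3) := by
  have hKm : Km m = 16*m*m*m+48*m*m+36*m := rfl
  have hNm : Nm m = 2*(Km m) + 16*(m*m)+46*m+34 := rfl
  have r1 : (4*m+6)*(i+1) = (4*m+6)*i + (4*m+6) := by ring
  have r2 : (4*m+6)*(i+1) ≤ (4*m+6)*m := tmax m (i+1) m hi
  have r3 : (4*m+6)*m = 4*(m*m)+6*m := by ring
  obtain ⟨s, hs⟩ : ∃ s, s + j + (4*m+6)*(i+1) = Km m + 12*(m*m)+32*m+21 :=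
    ⟨Km m + 12*(m*m)+32*m+21 - j - (4*m+6)*(i+1), by omega⟩
  have hsS : s ∈ SYp (2*m+3) := memS_P3 m (i+1) j s hi hj hs
  exact mem_QYp_of m s hsS _ (by rw [Dm, Cm]; omega)

lemma memQ_E6 : E6 m ∈ QYp (2*m+3) := by
  have hKm : Km m = 16*m*m*m+48*m*m+36*m := rfl
  have hNm : Nm m = 2*(Km m) + 16*(m*m)+46*m+34 := rfl
  have r3 : (4*m+6)*m = 4*(m*m)+6*m := by ring
  have hsS : Cm m m ∈ SYp (2*m+3) := memS_C m m 0 _ (le_refl m) (by omega) (by omega)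
  exact mem_QYp_of m _ hsS _ (by rw [E6, Cm]; omega)

lemma memQ_e0 (hm : 1 ≤ m) (z : ℕ) (hz : z + (m+1) = Km m) : z ∈ QYp (2*m+3) := by
  have hKm : Km m = 16*m*m*m+48*m*m+36*m := rfl
  have hNm : Nm m = 2*(Km m) + 16*(m*m)+46*m+34 := rfl
  obtain ⟨s, hs⟩ : ∃ s, s + (m+1) + (4*m+6)*0 = Km m + 16*(m*m)+48*m+36 :=
    ⟨Km m + 16*(m*m)+48*m+36 - (m+1), by omega⟩
  have hsS : s ∈ SYp (2*m+3) := memS_P4 m 0 (m+1) s (by omega) hs (by omega)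
  exact mem_QYp_of m s hsS _ (by omega)

lemma notS_B (i j : ℕ) (hij : i + j ≤ m) : Bm m i + j ∉ SYp (2*m+3) := by
  intro hS
  have hKm : Km m = 16*m*m*m+48*m*m+36*m := rfl
  have hE6 : E6 m = Km m + 8*(m*m)+24*m+19 := rfl
  have hB : Bm m i = Km m + (4*m+6)*i + (2*m+4) := rfl
  have r2 : (4*m+6)*i ≤ (4*m+6)*m := tmax m i m (by omega)
  have r3 : (4*m+6)*m = 4*(m*m)+6*m := by ring
  rcases windowS m _ hS (by omega) (by omega) with ⟨i', j', hij', h⟩ | ⟨i', j', hi', hj', h⟩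
  · rw [Am] at h
    have := (sandwich (P := 4*m+6) (i := i) (i' := i') (x := 2*m+4+j+j') (y := 0)
      (by omega) (by omega) (by omega)).2
    omega
  · rw [Cm] at h
    have r4 : (4*m+6)*(i'+m+2) = (4*m+6)*i' + (4*(m*m)+14*m+12) := by ring
    have r5 : (4*m+6)*i' ≤ (4*m+6)*m := tmax m i' m hi'
    have := (sandwich (P := 4*m+6) (i := i) (i' := i'+m+2) (x := 2*m+4+j+j') (y := 2*m+3)
      (by omega) (by omega) (by omega)).2
    omega

lemma notS_G : Gm m ∉ SYp (2*m+3) := by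
  intro hS
  have hKm : Km m = 16*m*m*m+48*m*m+36*m := rfl
  have hE6 : E6 m = Km m + 8*(m*m)+24*m+19 := rfl
  have hG : Gm m = Km m + 4*(m*m)+14*m+13 := rfl
  rcases windowS m _ hS (by omega) (by omega) with ⟨i', j', hij', h⟩ | ⟨i', j', hi', hj', h⟩
  · rw [Am] at h
    have r4 : (4*m+6)*(m+2) = 4*(m*m)+14*m+12 := by ring
    have := (sandwich (P := 4*m+6) (i := m+2) (i' := i') (x := 1+j') (y := 0)
      (by omega) (by omega) (by omega)).2
    omega
  · rw [Cm] at h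
    have r5 : (4*m+6)*i' ≤ (4*m+6)*m := tmax m i' m hi'
    have r3 : (4*m+6)*m = 4*(m*m)+6*m := by ring
    omega

lemma notS_D (i j : ℕ) (hi : i + 1 ≤ m) (hj : j ≤ i + 1) : Dm m i + j ∉ SYp (2*m+3) := by
  intro hS
  have hKm : Km m = 16*m*m*m+48*m*m+36*m := rfl
  have hE6 : E6 m = Km m + 8*(m*m)+24*m+19 := rfl
  have hD : Dm m i = Km m + 4*(m*m)+16*m+15 + (4*m+6)*i + (2*m+4) := rfl
  have r2 : (4*m+6)*(i+1) ≤ (4*m+6)*m := tmax m (i+1) m hi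
  have r1 : (4*m+6)*(i+1) = (4*m+6)*i + (4*m+6) := by ring
  have r3 : (4*m+6)*m = 4*(m*m)+6*m := by ring
  rcases windowS m _ hS (by omega) (by omega) with ⟨i', j', hij', h⟩ | ⟨i', j', hi', hj', h⟩
  · rw [Am] at h
    have r5 : (4*m+6)*i' ≤ (4*m+6)*m := tmax m i' m (by omega)
    omega
  · rw [Cm] at h
    have r5 : (4*m+6)*i' ≤ (4*m+6)*m := tmax m i' m hi'
    have := (sandwich (P := 4*m+6) (i := i) (i' := i') (x := 2*m+4+j+j') (y := 0)
      (by omega) (by omega) (by omega)).2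
    omega

lemma notS_E6 : E6 m ∉ SYp (2*m+3) := by
  intro hS
  have hKm : Km m = 16*m*m*m+48*m*m+36*m := rfl
  have hE6 : E6 m = Km m + 8*(m*m)+24*m+19 := rfl
  rcases windowS m _ hS (by omega) (by omega) with ⟨i', j', hij', h⟩ | ⟨i', j', hi', hj', h⟩
  · rw [Am] at h
    have r5 : (4*m+6)*i' ≤ (4*m+6)*m := tmax m i' m (by omega)
    have r3 : (4*m+6)*m = 4*(m*m)+6*m := by ring
    omega
  · rw [Cm] at h
    have r5 : (4*m+6)*i' ≤ (4*m+6)*m := tmax m i' m hi'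
    have r3 : (4*m+6)*m = 4*(m*m)+6*m := by ring
    omega

lemma notS_e0 (z : ℕ) (hz : z + (m+1) = Km m) : z ∉ SYp (2*m+3) := by
  intro hS
  have hKm : Km m = 16*m*m*m+48*m*m+36*m := rfl
  have hE6 : E6 m = Km m + 8*(m*m)+24*m+19 := rfl
  rcases windowS m _ hS (by omega) (by omega) with ⟨i', j', hij', h⟩ | ⟨i', j', hi', hj', h⟩
  · rw [Am] at h
    omega
  · rw [Cm] at h
    omega

end

lemma dsRun_eq_min (X : Finset ℕ) (Δ : ℕ → ℤ) (x r : ℕ) (R : Finset ℕ)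
    (hx : x ∈ R)
    (hR : ∀ y ∈ R, y ∈ X ∧ (0 < Δ y ↔ 0 < Δ x))
    (hz : ∀ z ∈ X, z < r → z ∈ R)
    (hr : r ∈ X) (hrR : ∀ y ∈ R, y < r)
    (hsr : ¬(0 < Δ r ↔ 0 < Δ x)) :
    dsRun X Δ x = R := by
  ext y
  simp only [dsRun, Finset.mem_filter]
  constructor
  · rintro ⟨hyX, hy⟩
    by_cases hyr : y < r
    · exact hz y hyX hyr
    · exfalso
      have hxr := hrR x hx
      exact hsr (hy r hr (by omega) (by omega))
  · intro hyR
    refine ⟨(hR y hyR).1, fun z hzX h1 h2 => ?_⟩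
    have hyr := hrR y hyR
    have hxr := hrR x hx
    exact (hR z (hz z hzX (by omega))).2

lemma X_of_S (m x : ℕ) (h : x ∈ SYp (2*m+3)) : x ∈ XYp (2*m+3) :=
  Finset.mem_union_left _ h
lemma X_of_Q (m x : ℕ) (h : x ∈ QYp (2*m+3)) : x ∈ XYp (2*m+3) :=
  Finset.mem_union_right _ h
lemma delta_pos (m x : ℕ) (h : x ∈ SYp (2*m+3)) : ΔYp (2*m+3) x = 1 := if_pos h
lemma delta_neg (m x : ℕ) (h : x ∉ SYp (2*m+3)) : ΔYp (2*m+3) x = -1 := if_neg h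

def RA (m i : ℕ) : Finset ℕ := (Finset.range (m+1-i)).image (fun j => Am m i - j)
def RB (m i : ℕ) : Finset ℕ :=
  if i = m then {Bm m m, Gm m}
  else (Finset.range (m+1-i)).image (fun j => Bm m i + j)
def RC (m i : ℕ) : Finset ℕ := (Finset.range (i+1)).image (fun j => Cm m i - j)
def RD (m i : ℕ) : Finset ℕ := (Finset.range (i+2)).image (fun j => Dm m i + j)

lemma Km_ge (m : ℕ) : 36*m ≤ Km m := by
  have hKm : Km m = 16*m*m*m+48*m*m+36*m := rfl
  omega

lemma mem_RA (m i y : ℕ) (hi : i ≤ m) :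
    y ∈ RA m i ↔ ∃ j, i + j ≤ m ∧ y + j = Am m i := by
  have hA : Am m i = Km m + (4*m+6)*i := rfl
  have := Km_ge m
  simp only [RA, Finset.mem_image, Finset.mem_range]
  constructor
  · rintro ⟨j, hj, rfl⟩; exact ⟨j, by omega, by omega⟩
  · rintro ⟨j, hj, hy⟩; exact ⟨j, by omega, by omega⟩

lemma run_A (m i x : ℕ) (hi : i ≤ m) (hx : ∃ j, i + j ≤ m ∧ x + j = Am m i) :
    dsRun (XYp (2*m+3)) (ΔYp (2*m+3)) x = RA m i := by
  obtain ⟨j0, hj0, hx0⟩ := hx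
  have hKm : Km m = 16*m*m*m+48*m*m+36*m := rfl
  have hA : ∀ k, Am m k = Km m + (4*m+6)*k := fun _ => rfl
  have hB : ∀ k, Bm m k = Km m + (4*m+6)*k + (2*m+4) := fun _ => rfl
  have hC : ∀ k, Cm m k = Km m + 4*(m*m)+16*m+15 + (4*m+6)*k := fun _ => rfl
  have hD : ∀ k, Dm m k = Km m + 4*(m*m)+16*m+15 + (4*m+6)*k + (2*m+4) := fun _ => rfl
  have hG : Gm m = Km m + 4*(m*m)+14*m+13 := rfl
  have hE6 : E6 m = Km m + 8*(m*m)+24*m+19 := rfl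
  have r3 : (4*m+6)*m = 4*(m*m)+6*m := by ring
  have rim : (4*m+6)*i ≤ (4*m+6)*m := tmax m i m hi
  have hxS : x ∈ SYp (2*m+3) := memS_A m i j0 x hj0 hx0
  have hΔx : ΔYp (2*m+3) x = 1 := delta_pos m x hxS
  have hxR : x ∈ RA m i := (mem_RA m i x hi).2 ⟨j0, hj0, hx0⟩
  have hRmem : ∀ y ∈ RA m i, y ∈ XYp (2*m+3) ∧
      (0 < ΔYp (2*m+3) y ↔ 0 < ΔYp (2*m+3) x) := by
    intro y hy
    obtain ⟨j, hj, hyA⟩ := (mem_RA m i y hi).1 hy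
    have hyS := memS_A m i j y hj hyA
    rw [delta_pos m y hyS, hΔx]
    exact ⟨X_of_S m y hyS, Iff.rfl⟩
  have hrX : Bm m i ∈ XYp (2*m+3) := X_of_Q m _ (by simpa using memQ_B m i 0 (by omega))
  have hsr : ¬(0 < ΔYp (2*m+3) (Bm m i) ↔ 0 < ΔYp (2*m+3) x) := by
    rw [delta_neg m _ (by simpa using notS_B m i 0 (by omega)), hΔx]
    simp
  have hrR : ∀ y ∈ RA m i, y < Bm m i := by
    intro y hy
    obtain ⟨j, hj, hyA⟩ := (mem_RA m i y hi).1 hy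
    rw [hA] at hyA
    rw [hB]; omega
  -- the interval classification step
  have hclass : ∀ z ∈ XYp (2*m+3), Km m ≤ z + m → z < Bm m i → z ∈ RA m i ∨
      (z + (m+1) = Km m ∨ ∃ i'', i = i'' + 1 ∧ z ≤ Bm m i'' + (m - i'')) := by
    intro z hzX hz1 hz2
    rw [hB] at hz2
    have hwin := windowX m z hzX (by omega) (by omega)
    rcases hwin with h | ⟨i', j', hij', h⟩ | ⟨i', j', hij', h⟩ | h | ⟨i', j', hi', hj', h⟩ |
      ⟨i', j', hi', hj', h⟩ | h
    · exact Or.inr (Or.inl h)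
    · -- A family
      rw [hA] at h
      rcases Nat.lt_trichotomy i' i with hlt | heq | hgt
      · right; right
        refine ⟨i - 1, by omega, ?_⟩
        have m1 : (4*m+6)*(i'+1) ≤ (4*m+6)*(i-1+1) := tmax m (i'+1) (i-1+1) (by omega)
        have m4 : (4*m+6)*(i'+1) = (4*m+6)*i' + (4*m+6) := by ring
        have m5 : (4*m+6)*(i-1+1) = (4*m+6)*(i-1) + (4*m+6) := by ring
        rw [hB]; omega
      · left
        subst heq
        exact (mem_RA m i' z hi).2 ⟨j', hij', by rw [hA]; omega⟩
      · exfalso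
        have m1 : (4*m+6)*(i+1) ≤ (4*m+6)*i' := tmax m (i+1) i' hgt
        have m2 : (4*m+6)*(i+1) = (4*m+6)*i + (4*m+6) := by ring
        have m3 : (4*m+6)*i' ≤ (4*m+6)*m := tmax m i' m (by omega)
        omega
    · -- B family: must be below (i' < i)
      rw [hB] at h
      have hii' : i' < i := by
        by_contra hcon
        have m1 : (4*m+6)*i ≤ (4*m+6)*i' := tmax m i i' (by omega)
        omega
      right; right
      refine ⟨i - 1, by omega, ?_⟩
      rw [hB]
      rcases Nat.lt_trichotomy i' (i-1) with hlt | heq | hgt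
      · have m1 : (4*m+6)*(i'+1) ≤ (4*m+6)*(i-1) := tmax m (i'+1) (i-1) (by omega)
        have m4 : (4*m+6)*(i'+1) = (4*m+6)*i' + (4*m+6) := by ring
        omega
      · subst heq; omega
      · omega
    · exfalso; rw [hG] at h; omega
    · exfalso
      rw [hC] at h
      have m3 : (4*m+6)*i' ≤ (4*m+6)*m := tmax m i' m hi'
      omega
    · exfalso
      rw [hD] at h; omega
    · exfalso; rw [hE6] at h; omega
  rcases Nat.eq_zero_or_pos (i + m) with him | him
  · -- i = 0, m = 0 : left-end run
    have hi0 : i = 0 := by omega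
    have hm0 : m = 0 := by omega
    apply dsRun_eq_min _ _ x (Bm m i) _ hxR hRmem _ hrX hrR hsr
    intro z hzX hzr
    have := hclass z hzX (by subst hm0; subst hi0; have h0 : Km 0 = 0 := rfl; omega) hzr
    rcases this with h | h | ⟨i'', hi'', _⟩
    · exact h
    · exfalso; subst hm0; have h0 : Km 0 = 0 := rfl; omega
    · exfalso; omega
  · -- there is a left neighbour
    rcases Nat.eq_zero_or_pos i with hi0 | hipos
    · -- i = 0, m ≥ 1 : left neighbour is Km - (m+1)
      have hm1 : 1 ≤ m := by omega
      set l := Km m - (m+1) with hl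
      have hlval : l + (m+1) = Km m := by have := Km_ge m; omega
      have hlX : l ∈ XYp (2*m+3) := X_of_Q m l (memQ_e0 m hm1 l hlval)
      have hsl : ¬(0 < ΔYp (2*m+3) l ↔ 0 < ΔYp (2*m+3) x) := by
        rw [delta_neg m l (notS_e0 m l hlval), hΔx]; simp
      apply dsRun_eq _ _ x l (Bm m i) _ hxR hRmem _ hlX hrX _ hrR hsl hsr
      · intro z hzX h1 h2
        rcases hclass z hzX (by omega) h2 with h | h | ⟨i'', hi'', _⟩
        · exact h
        · exfalso; omega
        · exfalso; omega
      · intro y hy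
        obtain ⟨j, hj, hyA⟩ := (mem_RA m i y hi).1 hy
        rw [hA] at hyA; omega
    · -- i ≥ 1 : left neighbour is top of previous B run
      obtain ⟨i'', rfl⟩ : ∃ i'', i = i'' + 1 := ⟨i - 1, by omega⟩
      set l := Bm m i'' + (m - i'') with hl
      have hlQ : l ∈ QYp (2*m+3) := memQ_B m i'' (m - i'') (by omega)
      have hlX : l ∈ XYp (2*m+3) := X_of_Q m l hlQ
      have hsl : ¬(0 < ΔYp (2*m+3) l ↔ 0 < ΔYp (2*m+3) x) := by
        rw [delta_neg m l (notS_B m i'' (m - i'') (by omega)), hΔx]; simp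
      have hlKm : l = Km m + (4*m+6)*i'' + (2*m+4) + (m - i'') := by rw [hl, hB]
      have m2 : (4*m+6)*(i''+1) = (4*m+6)*i'' + (4*m+6) := by ring
      apply dsRun_eq _ _ x l (Bm m (i''+1)) _ hxR hRmem _ hlX hrX _ hrR hsl hsr
      · intro z hzX h1 h2
        rcases hclass z hzX (by omega) h2 with h | h | ⟨i3, hi3, hzb⟩
        · exact h
        · exfalso; omega
        · exfalso
          have : i3 = i'' := by omega
          subst this
          omega
      · intro y hy
        obtain ⟨j, hj, hyA⟩ := (mem_RA m (i''+1) y hi).1 hy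
        rw [hA] at hyA; omega

lemma mem_RC (m i y : ℕ) (hi : i ≤ m) :
    y ∈ RC m i ↔ ∃ j, j ≤ i ∧ y + j = Cm m i := by
  have hC : Cm m i = Km m + 4*(m*m)+16*m+15 + (4*m+6)*i := rfl
  simp only [RC, Finset.mem_image, Finset.mem_range]
  constructor
  · rintro ⟨j, hj, rfl⟩; exact ⟨j, by omega, by omega⟩
  · rintro ⟨j, hj, hy⟩; exact ⟨j, by omega, by omega⟩

lemma run_C (m i x : ℕ) (hi : i ≤ m) (hx : ∃ j, j ≤ i ∧ x + j = Cm m i) :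
    dsRun (XYp (2*m+3)) (ΔYp (2*m+3)) x = RC m i := by
  obtain ⟨j0, hj0, hx0⟩ := hx
  have hKm : Km m = 16*m*m*m+48*m*m+36*m := rfl
  have hA : ∀ k, Am m k = Km m + (4*m+6)*k := fun _ => rfl
  have hB : ∀ k, Bm m k = Km m + (4*m+6)*k + (2*m+4) := fun _ => rfl
  have hC : ∀ k, Cm m k = Km m + 4*(m*m)+16*m+15 + (4*m+6)*k := fun _ => rfl
  have hD : ∀ k, Dm m k = Km m + 4*(m*m)+16*m+15 + (4*m+6)*k + (2*m+4) := fun _ => rfl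
  have hG : Gm m = Km m + 4*(m*m)+14*m+13 := rfl
  have hE6 : E6 m = Km m + 8*(m*m)+24*m+19 := rfl
  have r3 : (4*m+6)*m = 4*(m*m)+6*m := by ring
  have rim : (4*m+6)*i ≤ (4*m+6)*m := tmax m i m hi
  have hxS : x ∈ SYp (2*m+3) := memS_C m i j0 x hi hj0 hx0
  have hΔx : ΔYp (2*m+3) x = 1 := delta_pos m x hxS
  have hxR : x ∈ RC m i := (mem_RC m i x hi).2 ⟨j0, hj0, hx0⟩
  have hRmem : ∀ y ∈ RC m i, y ∈ XYp (2*m+3) ∧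
      (0 < ΔYp (2*m+3) y ↔ 0 < ΔYp (2*m+3) x) := by
    intro y hy
    obtain ⟨j, hj, hyC⟩ := (mem_RC m i y hi).1 hy
    have hyS := memS_C m i j y hi hj hyC
    rw [delta_pos m y hyS, hΔx]
    exact ⟨X_of_S m y hyS, Iff.rfl⟩
  -- classification helper
  have hclass : ∀ z ∈ XYp (2*m+3), Gm m < z → z < E6 m → z ∈ RC m i ∨
      ((∃ i'', i = i'' + 1 ∧ z ≤ Dm m i'' + (i''+1)) ∨ (i+1 ≤ m ∧ Dm m i ≤ z)) := by
    intro z hzX hz1 hz2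
    rw [hG] at hz1; rw [hE6] at hz2
    have hwin := windowX m z hzX (by omega) (by omega)
    rcases hwin with h | ⟨i', j', hij', h⟩ | ⟨i', j', hij', h⟩ | h | ⟨i', j', hi', hj', h⟩ |
      ⟨i', j', hi', hj', h⟩ | h
    · exfalso; omega
    · exfalso
      rw [hA] at h
      have m3 : (4*m+6)*i' ≤ (4*m+6)*m := tmax m i' m (by omega)
      omega
    · exfalso
      rw [hB] at h
      have m3 : (4*m+6)*i' ≤ (4*m+6)*m := tmax m i' m (by omega)
      omega
    · exfalso; rw [hG] at h; omega
    · -- C family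
      rw [hC] at h
      rcases Nat.lt_trichotomy i' i with hlt | heq | hgt
      · right; left
        refine ⟨i - 1, by omega, ?_⟩
        have m1 : (4*m+6)*(i'+1) ≤ (4*m+6)*(i-1+1) := tmax m (i'+1) (i-1+1) (by omega)
        have m4 : (4*m+6)*(i'+1) = (4*m+6)*i' + (4*m+6) := by ring
        have m5 : (4*m+6)*(i-1+1) = (4*m+6)*(i-1) + (4*m+6) := by ring
        rw [hD]; omega
      · left
        subst heq
        exact (mem_RC m i' z hi).2 ⟨j', hj', by rw [hC]; omega⟩
      · right; right
        have m1 : (4*m+6)*(i+1) ≤ (4*m+6)*i' := tmax m (i+1) i' hgt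
        have m2 : (4*m+6)*(i+1) = (4*m+6)*i + (4*m+6) := by ring
        have m3 : (4*m+6)*i' ≤ (4*m+6)*m := tmax m i' m hi'
        constructor
        · omega
        · rw [hD]; omega
    · -- D family
      rw [hD] at h
      rcases Nat.lt_trichotomy i' i with hlt | heq | hgt
      · right; left
        refine ⟨i - 1, by omega, ?_⟩
        rcases Nat.lt_trichotomy i' (i-1) with hlt2 | heq2 | hgt2
        · have m1 : (4*m+6)*(i'+1) ≤ (4*m+6)*(i-1) := tmax m (i'+1) (i-1) (by omega)
          have m4 : (4*m+6)*(i'+1) = (4*m+6)*i' + (4*m+6) := by ring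
          rw [hD]; omega
        · subst heq2; rw [hD]; omega
        · omega
      · subst heq
        right; right
        exact ⟨by omega, by rw [hD]; omega⟩
      · right; right
        have m1 : (4*m+6)*(i+1) ≤ (4*m+6)*i' := tmax m (i+1) i' hgt
        have m2 : (4*m+6)*(i+1) = (4*m+6)*i + (4*m+6) := by ring
        exact ⟨by omega, by rw [hD]; omega⟩
    · exfalso; rw [hE6] at h; omega
  -- left neighbour
  have hL : ∃ l, l ∈ XYp (2*m+3) ∧ l ∉ SYp (2*m+3) ∧ Gm m ≤ l ∧
      (∀ i'', i = i'' + 1 → Dm m i'' + (i''+1) ≤ l) ∧ (∀ y ∈ RC m i, l < y) := by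
    rcases Nat.eq_zero_or_pos i with hi0 | hipos
    · refine ⟨Gm m, X_of_Q m _ (memQ_G m), notS_G m, le_refl _, by omega, ?_⟩
      intro y hy
      obtain ⟨j, hj, hyC⟩ := (mem_RC m i y hi).1 hy
      rw [hC] at hyC; rw [hG]; omega
    · obtain ⟨i'', rfl⟩ : ∃ i'', i = i'' + 1 := ⟨i - 1, by omega⟩
      refine ⟨Dm m i'' + (i''+1), X_of_Q m _ (memQ_D m i'' (i''+1) (by omega) (by omega)),
        notS_D m i'' (i''+1) (by omega) (by omega), ?_, ?_, ?_⟩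
      · rw [hG, hD]; omega
      · intro k hk
        obtain rfl : k = i'' := by omega
        omega
      · intro y hy
        obtain ⟨j, hj, hyC⟩ := (mem_RC m (i''+1) y hi).1 hy
        rw [hC] at hyC; rw [hD]
        have m2 : (4*m+6)*(i''+1) = (4*m+6)*i'' + (4*m+6) := by ring
        omega
  -- right neighbour
  have hR : ∃ r, r ∈ XYp (2*m+3) ∧ r ∉ SYp (2*m+3) ∧ r ≤ E6 m ∧
      (i+1 ≤ m → r ≤ Dm m i) ∧ (∀ y ∈ RC m i, y < r) := by
    rcases Nat.lt_or_ge i m with him | him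
    · refine ⟨Dm m i, X_of_Q m _ (by simpa using memQ_D m i 0 (by omega) (by omega)),
        by simpa using notS_D m i 0 (by omega) (by omega), ?_, fun _ => le_refl _, ?_⟩
      · rw [hD, hE6]; omega
      · intro y hy
        obtain ⟨j, hj, hyC⟩ := (mem_RC m i y hi).1 hy
        rw [hC] at hyC; rw [hD]; omega
    · have him' : i = m := by omega
      refine ⟨E6 m, X_of_Q m _ (memQ_E6 m), notS_E6 m, le_refl _, by omega, ?_⟩
      intro y hy
      obtain ⟨j, hj, hyC⟩ := (mem_RC m i y hi).1 hy
      rw [hC] at hyC; rw [hE6]; omega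
  obtain ⟨l, hlX, hlnS, hGl, hlD, hlR⟩ := hL
  obtain ⟨r, hrX, hrnS, hrE, hrD, hrR⟩ := hR
  have hsl : ¬(0 < ΔYp (2*m+3) l ↔ 0 < ΔYp (2*m+3) x) := by
    rw [delta_neg m l hlnS, hΔx]; simp
  have hsr : ¬(0 < ΔYp (2*m+3) r ↔ 0 < ΔYp (2*m+3) x) := by
    rw [delta_neg m r hrnS, hΔx]; simp
  apply dsRun_eq _ _ x l r _ hxR hRmem _ hlX hrX _ hrR hsl hsr
  · intro z hzX h1 h2
    rcases hclass z hzX (by omega) (by omega) with h | ⟨i'', hi'', hzD⟩ | ⟨him, hzD⟩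
    · exact h
    · exfalso
      have := hlD i'' hi''
      omega
    · exfalso
      have := hrD him
      omega
  · exact hlR

lemma mem_RB_lt (m i y : ℕ) (him : i < m) :
    y ∈ RB m i ↔ ∃ j, i + j ≤ m ∧ y = Bm m i + j := by
  rw [RB, if_neg (by omega)]
  simp only [Finset.mem_image, Finset.mem_range]
  constructor
  · rintro ⟨j, hj, rfl⟩; exact ⟨j, by omega, rfl⟩
  · rintro ⟨j, hj, rfl⟩; exact ⟨j, by omega, rfl⟩

lemma mem_RB_eq (m y : ℕ) : y ∈ RB m m ↔ y = Bm m m ∨ y = Gm m := by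
  rw [RB, if_pos rfl]; simp

lemma RB_notS (m i y : ℕ) (hi : i ≤ m) (hy : y ∈ RB m i) :
    y ∈ QYp (2*m+3) ∧ y ∉ SYp (2*m+3) := by
  rcases Nat.lt_or_ge i m with him | him
  · obtain ⟨j, hj, rfl⟩ := (mem_RB_lt m i y him).1 hy
    exact ⟨memQ_B m i j hj, notS_B m i j hj⟩
  · have him' : i = m := by omega
    rw [him'] at hy
    rcases (mem_RB_eq m y).1 hy with rfl | rfl
    · exact ⟨by simpa using memQ_B m m 0 (by omega), by simpa using notS_B m m 0 (by omega)⟩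
    · exact ⟨memQ_G m, notS_G m⟩

lemma run_B (m i x : ℕ) (hi : i ≤ m) (hx : x ∈ RB m i) :
    dsRun (XYp (2*m+3)) (ΔYp (2*m+3)) x = RB m i := by
  have hKm : Km m = 16*m*m*m+48*m*m+36*m := rfl
  have hA : ∀ k, Am m k = Km m + (4*m+6)*k := fun _ => rfl
  have hB : ∀ k, Bm m k = Km m + (4*m+6)*k + (2*m+4) := fun _ => rfl
  have hC : ∀ k, Cm m k = Km m + 4*(m*m)+16*m+15 + (4*m+6)*k := fun _ => rfl
  have hD : ∀ k, Dm m k = Km m + 4*(m*m)+16*m+15 + (4*m+6)*k + (2*m+4) := fun _ => rfl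
  have hG : Gm m = Km m + 4*(m*m)+14*m+13 := rfl
  have hE6 : E6 m = Km m + 8*(m*m)+24*m+19 := rfl
  have r3 : (4*m+6)*m = 4*(m*m)+6*m := by ring
  have rim : (4*m+6)*i ≤ (4*m+6)*m := tmax m i m hi
  obtain ⟨hxQ, hxnS⟩ := RB_notS m i x hi hx
  have hΔx : ΔYp (2*m+3) x = -1 := delta_neg m x hxnS
  have hRmem : ∀ y ∈ RB m i, y ∈ XYp (2*m+3) ∧
      (0 < ΔYp (2*m+3) y ↔ 0 < ΔYp (2*m+3) x) := by
    intro y hy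
    obtain ⟨hyQ, hynS⟩ := RB_notS m i y hi hy
    rw [delta_neg m y hynS, hΔx]
    exact ⟨X_of_Q m y hyQ, Iff.rfl⟩
  -- left neighbour
  have hlS : Am m i ∈ SYp (2*m+3) := memS_A m i 0 _ (by omega) (by omega)
  have hlX : Am m i ∈ XYp (2*m+3) := X_of_S m _ hlS
  have hsl : ¬(0 < ΔYp (2*m+3) (Am m i) ↔ 0 < ΔYp (2*m+3) x) := by
    rw [delta_pos m _ hlS, hΔx]; simp
  have hlR : ∀ y ∈ RB m i, Am m i < y := by
    intro y hy
    rcases Nat.lt_or_ge i m with him | him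
    · obtain ⟨j, hj, rfl⟩ := (mem_RB_lt m i y him).1 hy
      rw [hA, hB]; omega
    · have him' : i = m := by omega
      rw [him'] at hy ⊢
      rcases (mem_RB_eq m y).1 hy with rfl | rfl
      · rw [hA, hB]; omega
      · rw [hA, hG]; omega
  -- right neighbour
  have hR : ∃ r, r ∈ SYp (2*m+3) ∧ r ≤ Cm m 0 ∧
      ((i < m ∧ r + (m-i-1) = Am m (i+1)) ∨ (i = m ∧ r = Cm m 0)) ∧
      (∀ y ∈ RB m i, y < r) := by
    rcases Nat.lt_or_ge i m with him | him
    · obtain ⟨r, hr⟩ : ∃ r, r + (m-i-1) = Am m (i+1) :=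
        ⟨Am m (i+1) - (m-i-1), by rw [hA]; omega⟩
      have m2 : (4*m+6)*(i+1) = (4*m+6)*i + (4*m+6) := by ring
      refine ⟨r, memS_A m (i+1) (m-i-1) r (by omega) hr, ?_, Or.inl ⟨him, hr⟩, ?_⟩
      · rw [hA] at hr
        have m1 : (4*m+6)*(i+1) ≤ (4*m+6)*m := tmax m (i+1) m him
        rw [hC]; omega
      · intro y hy
        obtain ⟨j, hj, rfl⟩ := (mem_RB_lt m i y him).1 hy
        rw [hA] at hr; rw [hB]; omega
    · have heq : i = m := by omega
      refine ⟨Cm m 0, memS_C m 0 0 _ (by omega) (by omega) (by omega), le_refl _,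
        Or.inr ⟨heq, rfl⟩, ?_⟩
      intro y hy
      rw [heq] at hy
      rcases (mem_RB_eq m y).1 hy with rfl | rfl
      · rw [hB, hC]; omega
      · rw [hG, hC]; omega
  obtain ⟨r, hrS, hrC0, hrspec, hrR⟩ := hR
  have hrX : r ∈ XYp (2*m+3) := X_of_S m r hrS
  have hsr : ¬(0 < ΔYp (2*m+3) r ↔ 0 < ΔYp (2*m+3) x) := by
    rw [delta_pos m r hrS, hΔx]; simp
  apply dsRun_eq _ _ x (Am m i) r _ hx hRmem _ hlX hrX ?_ hrR hsl hsr
  · intro z hzX h1 h2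
    rw [hA] at h1
    have hwin := windowX m z hzX (by omega) (by
      rcases hrspec with ⟨him, hr⟩ | ⟨him, rfl⟩
      · rw [hA] at hr
        have m1 : (4*m+6)*(i+1) ≤ (4*m+6)*m := tmax m (i+1) m him
        rw [hE6]; omega
      · rw [hC] at h2; rw [hE6]; omega)
    rcases hwin with h | ⟨i', j', hij', h⟩ | ⟨i', j', hij', h⟩ | h | ⟨i', j', hi', hj', h⟩ |
      ⟨i', j', hi', hj', h⟩ | h
    · exfalso; omega
    · -- A family
      exfalso
      rw [hA] at h
      rcases Nat.lt_or_ge i' (i+1) with hlt | hgt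
      · have m1 : (4*m+6)*i' ≤ (4*m+6)*i := tmax m i' i (by omega)
        omega
      · rcases hrspec with ⟨him, hr⟩ | ⟨him, rfl⟩
        · rw [hA] at hr
          have m1 : (4*m+6)*(i+1) ≤ (4*m+6)*i' := tmax m (i+1) i' hgt
          omega
        · omega
    · -- B family
      rw [hB] at h
      rcases Nat.lt_trichotomy i' i with hlt | heq | hgt
      · exfalso
        have m1 : (4*m+6)*(i'+1) ≤ (4*m+6)*i := tmax m (i'+1) i (by omega)
        have m4 : (4*m+6)*(i'+1) = (4*m+6)*i' + (4*m+6) := by ring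
        omega
      · subst heq
        rcases Nat.lt_or_ge i' m with him | him
        · exact (mem_RB_lt m i' z him).2 ⟨j', hij', by rw [hB]; omega⟩
        · have him2 : i' = m := by omega
          rw [him2] at h hij' ⊢
          exact (mem_RB_eq m z).2 (Or.inl (by rw [hB]; omega))
      · exfalso
        have m1 : (4*m+6)*(i+1) ≤ (4*m+6)*i' := tmax m (i+1) i' hgt
        have m2 : (4*m+6)*(i+1) = (4*m+6)*i + (4*m+6) := by ring
        rcases hrspec with ⟨him, hr⟩ | ⟨him, rfl⟩
        · rw [hA] at hr; omega
        · rw [hC] at h2; omega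
    · -- G
      rcases hrspec with ⟨him, hr⟩ | ⟨him, rfl⟩
      · exfalso
        rw [hA] at hr; rw [hG] at h
        have m1 : (4*m+6)*(i+1) ≤ (4*m+6)*m := tmax m (i+1) m him
        omega
      · rw [him, h]
        exact (mem_RB_eq m (Gm m)).2 (Or.inr rfl)
    · -- C family
      exfalso
      rw [hC] at h
      have m5 : i' ≤ (4*m+6)*i' := Nat.le_mul_of_pos_left i' (by omega)
      rcases hrspec with ⟨him, hr⟩ | ⟨him, rfl⟩
      · rw [hA] at hr
        have m1 : (4*m+6)*(i+1) ≤ (4*m+6)*m := tmax m (i+1) m him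
        omega
      · rw [hC] at h2; omega
    · -- D family
      exfalso
      rw [hD] at h
      rcases hrspec with ⟨him, hr⟩ | ⟨him, rfl⟩
      · rw [hA] at hr
        have m1 : (4*m+6)*(i+1) ≤ (4*m+6)*m := tmax m (i+1) m him
        omega
      · rw [hC] at h2; omega
    · -- E6
      exfalso
      rw [hE6] at h
      rcases hrspec with ⟨him, hr⟩ | ⟨him, rfl⟩
      · rw [hA] at hr
        have m1 : (4*m+6)*(i+1) ≤ (4*m+6)*m := tmax m (i+1) m him
        omega
      · rw [hC] at h2; omega
  · exact hlR

lemma mem_RD (m i y : ℕ) : y ∈ RD m i ↔ ∃ j, j ≤ i+1 ∧ y = Dm m i + j := by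
  simp only [RD, Finset.mem_image, Finset.mem_range]
  constructor
  · rintro ⟨j, hj, rfl⟩; exact ⟨j, by omega, rfl⟩
  · rintro ⟨j, hj, rfl⟩; exact ⟨j, by omega, rfl⟩

lemma run_D (m i x : ℕ) (hi : i + 1 ≤ m) (hx : ∃ j, j ≤ i+1 ∧ x = Dm m i + j) :
    dsRun (XYp (2*m+3)) (ΔYp (2*m+3)) x = RD m i := by
  obtain ⟨j0, hj0, hx0⟩ := hx
  have hKm : Km m = 16*m*m*m+48*m*m+36*m := rfl
  have hA : ∀ k, Am m k = Km m + (4*m+6)*k := fun _ => rfl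
  have hB : ∀ k, Bm m k = Km m + (4*m+6)*k + (2*m+4) := fun _ => rfl
  have hC : ∀ k, Cm m k = Km m + 4*(m*m)+16*m+15 + (4*m+6)*k := fun _ => rfl
  have hD : ∀ k, Dm m k = Km m + 4*(m*m)+16*m+15 + (4*m+6)*k + (2*m+4) := fun _ => rfl
  have hG : Gm m = Km m + 4*(m*m)+14*m+13 := rfl
  have hE6 : E6 m = Km m + 8*(m*m)+24*m+19 := rfl
  have r3 : (4*m+6)*m = 4*(m*m)+6*m := by ring
  have rim : (4*m+6)*(i+1) ≤ (4*m+6)*m := tmax m (i+1) m hi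
  have m2 : (4*m+6)*(i+1) = (4*m+6)*i + (4*m+6) := by ring
  have hxnS : x ∉ SYp (2*m+3) := by rw [hx0]; exact notS_D m i j0 hi hj0
  have hΔx : ΔYp (2*m+3) x = -1 := delta_neg m x hxnS
  have hxR : x ∈ RD m i := (mem_RD m i x).2 ⟨j0, hj0, hx0⟩
  have hRmem : ∀ y ∈ RD m i, y ∈ XYp (2*m+3) ∧
      (0 < ΔYp (2*m+3) y ↔ 0 < ΔYp (2*m+3) x) := by
    intro y hy
    obtain ⟨j, hj, rfl⟩ := (mem_RD m i y).1 hy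
    rw [delta_neg m _ (notS_D m i j hi hj), hΔx]
    exact ⟨X_of_Q m _ (memQ_D m i j hi hj), Iff.rfl⟩
  -- left neighbour : Cm m i
  have hlS : Cm m i ∈ SYp (2*m+3) := memS_C m i 0 _ (by omega) (by omega) (by omega)
  have hlX : Cm m i ∈ XYp (2*m+3) := X_of_S m _ hlS
  have hsl : ¬(0 < ΔYp (2*m+3) (Cm m i) ↔ 0 < ΔYp (2*m+3) x) := by
    rw [delta_pos m _ hlS, hΔx]; simp
  have hlR : ∀ y ∈ RD m i, Cm m i < y := by
    intro y hy
    obtain ⟨j, hj, rfl⟩ := (mem_RD m i y).1 hy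
    rw [hC, hD]; omega
  -- right neighbour : bottom of next C run
  obtain ⟨r, hr⟩ : ∃ r, r + (i+1) = Cm m (i+1) := ⟨Cm m (i+1) - (i+1), by rw [hC]; omega⟩
  have hrS : r ∈ SYp (2*m+3) := memS_C m (i+1) (i+1) r hi (le_refl _) hr
  have hrX : r ∈ XYp (2*m+3) := X_of_S m r hrS
  have hsr : ¬(0 < ΔYp (2*m+3) r ↔ 0 < ΔYp (2*m+3) x) := by
    rw [delta_pos m r hrS, hΔx]; simp
  have hrR : ∀ y ∈ RD m i, y < r := by
    intro y hy
    obtain ⟨j, hj, rfl⟩ := (mem_RD m i y).1 hy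
    rw [hC] at hr; rw [hD]; omega
  apply dsRun_eq _ _ x (Cm m i) r _ hxR hRmem _ hlX hrX ?_ hrR hsl hsr
  · intro z hzX h1 h2
    rw [hC] at h1
    rw [hC] at hr
    have hwin := windowX m z hzX (by omega) (by rw [hE6]; omega)
    rcases hwin with h | ⟨i', j', hij', h⟩ | ⟨i', j', hij', h⟩ | h | ⟨i', j', hi', hj', h⟩ |
      ⟨i', j', hi', hj', h⟩ | h
    · exfalso; omega
    · exfalso
      rw [hA] at h
      have m3 : (4*m+6)*i' ≤ (4*m+6)*m := tmax m i' m (by omega)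
      omega
    · exfalso
      rw [hB] at h
      have m3 : (4*m+6)*i' ≤ (4*m+6)*m := tmax m i' m (by omega)
      omega
    · exfalso; rw [hG] at h; omega
    · -- C family
      exfalso
      rw [hC] at h
      rcases Nat.lt_trichotomy i' (i+1) with hlt | heq | hgt
      · have m1 : (4*m+6)*i' ≤ (4*m+6)*i := tmax m i' i (by omega)
        omega
      · rw [heq] at h; omega
      · have m1 : (4*m+6)*(i+2) ≤ (4*m+6)*i' := tmax m (i+2) i' hgt
        have m4 : (4*m+6)*(i+2) = (4*m+6)*i + (8*m+12) := by ring
        omega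
    · -- D family
      rw [hD] at h
      rcases Nat.lt_trichotomy i' i with hlt | heq | hgt
      · exfalso
        have m1 : (4*m+6)*(i'+1) ≤ (4*m+6)*i := tmax m (i'+1) i (by omega)
        have m4 : (4*m+6)*(i'+1) = (4*m+6)*i' + (4*m+6) := by ring
        omega
      · subst heq
        exact (mem_RD m i' z).2 ⟨j', hj', by rw [hD]; omega⟩
      · exfalso
        have m1 : (4*m+6)*(i+1) ≤ (4*m+6)*i' := tmax m (i+1) i' hgt
        omega
    · exfalso; rw [hE6] at h; omega
  · exact hlR

lemma card_RA (m i : ℕ) (hi : i ≤ m) : (RA m i).card = m+1-i := by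
  rw [RA, Finset.card_image_of_injOn, Finset.card_range]
  intro a ha b hb hab
  simp only [Finset.mem_range, Finset.coe_range, Set.mem_Iio] at ha hb
  dsimp only at hab
  have hA : Am m i = Km m + (4*m+6)*i := rfl
  have := Km_ge m
  omega

lemma card_RC (m i : ℕ) (hi : i ≤ m) : (RC m i).card = i+1 := by
  rw [RC, Finset.card_image_of_injOn, Finset.card_range]
  intro a ha b hb hab
  simp only [Finset.coe_range, Set.mem_Iio] at ha hb
  dsimp only at hab
  have hC : Cm m i = Km m + 4*(m*m)+16*m+15 + (4*m+6)*i := rfl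
  have := Km_ge m
  omega

lemma card_RD (m i : ℕ) : (RD m i).card = i+2 := by
  rw [RD, Finset.card_image_of_injOn, Finset.card_range]
  intro a ha b hb hab
  dsimp only at hab
  omega

lemma card_RB (m i : ℕ) (hi : i + 1 ≤ m) : (RB m i).card = m+1-i := by
  rw [RB, if_neg (by omega), Finset.card_image_of_injOn, Finset.card_range]
  intro a ha b hb hab
  dsimp only at hab
  omega

lemma redDelta_A (m i : ℕ) (hi : i ≤ m) :
    redDelta (XYp (2*m+3)) (ΔYp (2*m+3)) (Am m i) = ((m+1-i : ℕ) : ℤ) := by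
  rw [redDelta_eq _ _ _ _ (run_A m i (Am m i) hi ⟨0, by omega, by omega⟩)]
  have hconst : ∀ y ∈ RA m i, ΔYp (2*m+3) y = 1 := by
    intro y hy
    obtain ⟨j, hj, hyA⟩ := (mem_RA m i y hi).1 hy
    exact delta_pos m y (memS_A m i j y hj hyA)
  rw [Finset.sum_congr rfl hconst, Finset.sum_const, card_RA m i hi]
  simp

lemma redDelta_C (m i : ℕ) (hi : i ≤ m) :
    redDelta (XYp (2*m+3)) (ΔYp (2*m+3)) (Cm m i) = ((i+1 : ℕ) : ℤ) := by
  rw [redDelta_eq _ _ _ _ (run_C m i (Cm m i) hi ⟨0, by omega, by omega⟩)]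
  have hconst : ∀ y ∈ RC m i, ΔYp (2*m+3) y = 1 := by
    intro y hy
    obtain ⟨j, hj, hyC⟩ := (mem_RC m i y hi).1 hy
    exact delta_pos m y (memS_C m i j y hi hj hyC)
  rw [Finset.sum_congr rfl hconst, Finset.sum_const, card_RC m i hi]
  simp

lemma redDelta_B (m i : ℕ) (hi : i + 1 ≤ m) :
    redDelta (XYp (2*m+3)) (ΔYp (2*m+3)) (Bm m i) = -((m+1-i : ℕ) : ℤ) := by
  rw [redDelta_eq _ _ _ _ (run_B m i (Bm m i) (by omega)
    ((mem_RB_lt m i _ (by omega)).2 ⟨0, by omega, by omega⟩))]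
  have hconst : ∀ y ∈ RB m i, ΔYp (2*m+3) y = -1 := by
    intro y hy
    exact delta_neg m y (RB_notS m i y (by omega) hy).2
  rw [Finset.sum_congr rfl hconst, Finset.sum_const, card_RB m i hi]
  simp

lemma redDelta_Bm (m : ℕ) :
    redDelta (XYp (2*m+3)) (ΔYp (2*m+3)) (Bm m m) = -2 := by
  rw [redDelta_eq _ _ _ _ (run_B m m (Bm m m) (le_refl m)
    ((mem_RB_eq m _).2 (Or.inl rfl)))]
  have hne : Bm m m ≠ Gm m := by
    have hB : Bm m m = Km m + (4*m+6)*m + (2*m+4) := rfl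
    have hG : Gm m = Km m + 4*(m*m)+14*m+13 := rfl
    have r3 : (4*m+6)*m = 4*(m*m)+6*m := by ring
    omega
  rw [RB, if_pos rfl, Finset.sum_pair hne]
  rw [delta_neg m _ (RB_notS m m _ (le_refl m) ((mem_RB_eq m _).2 (Or.inl rfl))).2,
    delta_neg m _ (notS_G m)]
  norm_num

lemma redDelta_D (m i : ℕ) (hi : i + 1 ≤ m) :
    redDelta (XYp (2*m+3)) (ΔYp (2*m+3)) (Dm m i) = -((i+2 : ℕ) : ℤ) := by
  rw [redDelta_eq _ _ _ _ (run_D m i (Dm m i) hi ⟨0, by omega, by omega⟩)]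
  have hconst : ∀ y ∈ RD m i, ΔYp (2*m+3) y = -1 := by
    intro y hy
    obtain ⟨j, hj, rfl⟩ := (mem_RD m i y).1 hy
    exact delta_neg m _ (notS_D m i j hi hj)
  rw [Finset.sum_congr rfl hconst, Finset.sum_const, card_RD m i]
  simp

lemma mem_redSet_A (m i : ℕ) (hi : i ≤ m) :
    Am m i ∈ redSet (XYp (2*m+3)) (ΔYp (2*m+3)) := by
  have hS := memS_A m i 0 (Am m i) (by omega) (by omega)
  rw [mem_redSet_iff _ _ _ _ (run_A m i (Am m i) hi ⟨0, by omega, by omega⟩) (X_of_S m _ hS)]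
  refine Or.inl ⟨by rw [delta_pos m _ hS]; omega, fun y hy => ?_⟩
  obtain ⟨j, hj, hyA⟩ := (mem_RA m i y hi).1 hy
  omega

lemma mem_redSet_C (m i : ℕ) (hi : i ≤ m) :
    Cm m i ∈ redSet (XYp (2*m+3)) (ΔYp (2*m+3)) := by
  have hS := memS_C m i 0 (Cm m i) hi (by omega) (by omega)
  rw [mem_redSet_iff _ _ _ _ (run_C m i (Cm m i) hi ⟨0, by omega, by omega⟩) (X_of_S m _ hS)]
  refine Or.inl ⟨by rw [delta_pos m _ hS]; omega, fun y hy => ?_⟩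
  obtain ⟨j, hj, hyC⟩ := (mem_RC m i y hi).1 hy
  omega

lemma mem_redSet_B (m i : ℕ) (hi : i ≤ m) :
    Bm m i ∈ redSet (XYp (2*m+3)) (ΔYp (2*m+3)) := by
  have hxB : Bm m i ∈ RB m i := by
    rcases Nat.lt_or_ge i m with him | him
    · exact (mem_RB_lt m i _ him).2 ⟨0, by omega, by omega⟩
    · have : i = m := by omega
      rw [this]; exact (mem_RB_eq m _).2 (Or.inl rfl)
  obtain ⟨hQ, hnS⟩ := RB_notS m i _ hi hxB
  rw [mem_redSet_iff _ _ _ _ (run_B m i (Bm m i) hi hxB) (X_of_Q m _ hQ)]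
  refine Or.inr ⟨by rw [delta_neg m _ hnS]; omega, fun y hy => ?_⟩
  rcases Nat.lt_or_ge i m with him | him
  · obtain ⟨j, hj, rfl⟩ := (mem_RB_lt m i y him).1 hy
    omega
  · have heq : i = m := by omega
    rw [heq] at hy ⊢
    rcases (mem_RB_eq m y).1 hy with rfl | rfl
    · omega
    · have hB : Bm m m = Km m + (4*m+6)*m + (2*m+4) := rfl
      have hG : Gm m = Km m + 4*(m*m)+14*m+13 := rfl
      have r3 : (4*m+6)*m = 4*(m*m)+6*m := by ring
      omega

lemma mem_redSet_D (m i : ℕ) (hi : i + 1 ≤ m) :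
    Dm m i ∈ redSet (XYp (2*m+3)) (ΔYp (2*m+3)) := by
  have hQ := memQ_D m i 0 hi (by omega)
  simp only [Nat.add_zero] at hQ
  rw [mem_redSet_iff _ _ _ _ (run_D m i (Dm m i) hi ⟨0, by omega, by omega⟩)
    (X_of_Q m _ hQ)]
  refine Or.inr ⟨by rw [delta_neg m _ (by simpa using notS_D m i 0 hi (by omega))]; omega,
    fun y hy => ?_⟩
  obtain ⟨j, hj, rfl⟩ := (mem_RD m i y).1 hy
  omega

lemma not_redSet_A (m i j x : ℕ) (hij : i + j ≤ m) (hj : 1 ≤ j) (hx : x + j = Am m i) :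
    x ∉ redSet (XYp (2*m+3)) (ΔYp (2*m+3)) := by
  intro hmem
  rw [mem_redSet_iff _ _ _ _ (run_A m i x (by omega) ⟨j, hij, hx⟩)
    (X_of_S m _ (memS_A m i j x hij hx))] at hmem
  have hΔ := delta_pos m x (memS_A m i j x hij hx)
  rcases hmem with ⟨_, hall⟩ | ⟨hneg, _⟩
  · have := hall (Am m i) ((mem_RA m i _ (by omega)).2 ⟨0, by omega, by omega⟩)
    omega
  · omega

lemma not_redSet_C (m i j x : ℕ) (hi : i ≤ m) (hj : 1 ≤ j) (hji : j ≤ i)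
    (hx : x + j = Cm m i) : x ∉ redSet (XYp (2*m+3)) (ΔYp (2*m+3)) := by
  intro hmem
  rw [mem_redSet_iff _ _ _ _ (run_C m i x hi ⟨j, hji, hx⟩)
    (X_of_S m _ (memS_C m i j x hi hji hx))] at hmem
  have hΔ := delta_pos m x (memS_C m i j x hi hji hx)
  rcases hmem with ⟨_, hall⟩ | ⟨hneg, _⟩
  · have := hall (Cm m i) ((mem_RC m i _ hi).2 ⟨0, by omega, by omega⟩)
    omega
  · omega

lemma not_redSet_B (m i j : ℕ) (hij : i + j ≤ m) (hj : 1 ≤ j) :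
    Bm m i + j ∉ redSet (XYp (2*m+3)) (ΔYp (2*m+3)) := by
  intro hmem
  have him : i < m := by omega
  have hxB : Bm m i + j ∈ RB m i := (mem_RB_lt m i _ him).2 ⟨j, hij, rfl⟩
  obtain ⟨hQ, hnS⟩ := RB_notS m i _ (by omega) hxB
  rw [mem_redSet_iff _ _ _ _ (run_B m i _ (by omega) hxB) (X_of_Q m _ hQ)] at hmem
  have hΔ := delta_neg m _ hnS
  rcases hmem with ⟨hpos, _⟩ | ⟨_, hall⟩
  · omega
  · have := hall (Bm m i) ((mem_RB_lt m i _ him).2 ⟨0, by omega, by omega⟩)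
    omega

lemma not_redSet_G (m : ℕ) : Gm m ∉ redSet (XYp (2*m+3)) (ΔYp (2*m+3)) := by
  intro hmem
  have hxB : Gm m ∈ RB m m := (mem_RB_eq m _).2 (Or.inr rfl)
  rw [mem_redSet_iff _ _ _ _ (run_B m m _ (le_refl m) hxB) (X_of_Q m _ (memQ_G m))] at hmem
  have hΔ := delta_neg m _ (notS_G m)
  rcases hmem with ⟨hpos, _⟩ | ⟨_, hall⟩
  · omega
  · have := hall (Bm m m) ((mem_RB_eq m _).2 (Or.inl rfl))
    have hB : Bm m m = Km m + (4*m+6)*m + (2*m+4) := rfl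
    have hG : Gm m = Km m + 4*(m*m)+14*m+13 := rfl
    have r3 : (4*m+6)*m = 4*(m*m)+6*m := by ring
    omega

lemma not_redSet_D (m i j : ℕ) (hi : i + 1 ≤ m) (hj : 1 ≤ j) (hji : j ≤ i + 1) :
    Dm m i + j ∉ redSet (XYp (2*m+3)) (ΔYp (2*m+3)) := by
  intro hmem
  have hQ := memQ_D m i j hi hji
  rw [mem_redSet_iff _ _ _ _ (run_D m i _ hi ⟨j, hji, rfl⟩) (X_of_Q m _ hQ)] at hmem
  have hΔ := delta_neg m _ (notS_D m i j hi hji)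
  rcases hmem with ⟨hpos, _⟩ | ⟨_, hall⟩
  · omega
  · have := hall (Dm m i) ((mem_RD m i _).2 ⟨0, by omega, by omega⟩)
    omega

def pt (m k : ℕ) : ℕ :=
  if k < 2*m+2 then (if k % 2 = 0 then Am m (k/2) else Bm m (k/2))
  else (if k % 2 = 0 then Cm m ((k-(2*m+2))/2) else Dm m ((k-(2*m+3))/2))

lemma pt_A (m i : ℕ) (hi : i ≤ m) : pt m (2*i) = Am m i := by
  unfold pt
  rw [if_pos (by omega : 2*i < 2*m+2), if_pos (by omega : 2*i % 2 = 0)]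
  congr 1; omega

lemma pt_B (m i : ℕ) (hi : i ≤ m) : pt m (2*i+1) = Bm m i := by
  unfold pt
  rw [if_pos (by omega : 2*i+1 < 2*m+2), if_neg (by omega : ¬(2*i+1) % 2 = 0)]
  congr 1; omega

lemma pt_C (m i : ℕ) : pt m (2*m+2+2*i) = Cm m i := by
  unfold pt
  rw [if_neg (by omega : ¬(2*m+2+2*i < 2*m+2)), if_pos (by omega : (2*m+2+2*i) % 2 = 0)]
  congr 1; omega

lemma pt_D (m i : ℕ) : pt m (2*m+3+2*i) = Dm m i := by
  unfold pt
  rw [if_neg (by omega : ¬(2*m+3+2*i < 2*m+2)), if_neg (by omega : ¬(2*m+3+2*i) % 2 = 0)]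
  congr 1; omega

lemma pt_step (m a : ℕ) (ha : a + 1 < 4*m+3) : pt m a < pt m (a+1) := by
  have hKm : Km m = 16*m*m*m+48*m*m+36*m := rfl
  have hA : ∀ k, Am m k = Km m + (4*m+6)*k := fun _ => rfl
  have hB : ∀ k, Bm m k = Km m + (4*m+6)*k + (2*m+4) := fun _ => rfl
  have hC : ∀ k, Cm m k = Km m + 4*(m*m)+16*m+15 + (4*m+6)*k := fun _ => rfl
  have hD : ∀ k, Dm m k = Km m + 4*(m*m)+16*m+15 + (4*m+6)*k + (2*m+4) := fun _ => rfl
  have r3 : (4*m+6)*m = 4*(m*m)+6*m := by ring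
  have hcases : (∃ i, i ≤ m ∧ a = 2*i) ∨ (∃ i, i + 1 ≤ m ∧ a = 2*i+1) ∨ (a = 2*m+1) ∨
      (∃ i, i + 1 ≤ m ∧ a = 2*m+2+2*i) ∨
      (∃ i, i + 1 ≤ m ∧ a = 2*m+3+2*i) := by
    rcases Nat.lt_or_ge a (2*m+2) with h1 | h1 <;>
      rcases Nat.mod_two_eq_zero_or_one a with h2 | h2
    · exact Or.inl ⟨a/2, by omega, by omega⟩
    · rcases Nat.lt_or_ge a (2*m+1) with h3 | h3
      · exact Or.inr (Or.inl ⟨a/2, by omega, by omega⟩)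
      · exact Or.inr (Or.inr (Or.inl (by omega)))
    · exact Or.inr (Or.inr (Or.inr (Or.inl ⟨(a-(2*m+2))/2, by omega, by omega⟩)))
    · exact Or.inr (Or.inr (Or.inr (Or.inr ⟨(a-(2*m+3))/2, by omega, by omega⟩)))
  rcases hcases with ⟨i, hi, rfl⟩ | ⟨i, hi, rfl⟩ | rfl | ⟨i, hi, rfl⟩ | ⟨i, hi, rfl⟩
  · rw [pt_A m i hi, show 2*i+1 = 2*i+1 from rfl, pt_B m i hi, hA, hB]; omega
  · rw [pt_B m i (by omega), show 2*i+1+1 = 2*(i+1) from by ring, pt_A m (i+1) hi,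
      hA, hB]
    have m1 : (4*m+6)*(i+1) = (4*m+6)*i + (4*m+6) := by ring
    omega
  · rw [show 2*m+1 = 2*m+1 from rfl, pt_B m m (le_refl m),
      show 2*m+1+1 = 2*m+2+2*0 from by ring, pt_C m 0, hB, hC]
    omega
  · rw [pt_C m i, show 2*m+2+2*i+1 = 2*m+3+2*i from by ring, pt_D m i, hC, hD]; omega
  · rw [pt_D m i, show 2*m+3+2*i+1 = 2*m+2+2*(i+1) from by ring, pt_C m (i+1), hC, hD]
    have m1 : (4*m+6)*(i+1) = (4*m+6)*i + (4*m+6) := by ring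
    omega

lemma pt_mono (m : ℕ) : ∀ a b, a < b → b < 4*m+3 → pt m a < pt m b := by
  intro a b
  induction b with
  | zero => omega
  | succ n ih =>
    intro hab hn
    rcases Nat.lt_or_ge a n with h | h
    · exact lt_trans (ih h (by omega)) (pt_step m n hn)
    · have : a = n := by omega
      subst this
      exact pt_step m a hn

lemma creature_A (m i : ℕ) (hi : i ≤ m) : creature (m+1) (2*i+1) = ((m+1-i : ℕ) : ℤ) := by
  rcases Nat.lt_or_ge i m with him | him
  · rw [creature, if_pos (by omega : 2*i+1 ≤ 2*(m+1)-2), if_pos (by omega : (2*i+1) % 2 = 1),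
      show (2*i+1+1)/2 = i+1 from by omega]
    push_cast; omega
  · have : i = m := by omega
    subst this
    rw [creature, if_neg (by omega : ¬(2*i+1 ≤ 2*(i+1)-2)),
      if_pos (by omega : 2*i+1 = 2*(i+1)-1)]
    have : i+1-i = 1 := by omega
    rw [this]; norm_num

lemma creature_B (m i : ℕ) (him : i + 1 ≤ m) :
    creature (m+1) (2*i+2) = -((m+1-i : ℕ) : ℤ) := by
  rw [creature, if_pos (by omega : 2*i+2 ≤ 2*(m+1)-2), if_neg (by omega : ¬(2*i+2) % 2 = 1),
    show (2*i+2)/2 = i+1 from by omega]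
  push_cast; omega

lemma creature_Bm (m : ℕ) : creature (m+1) (2*m+2) = -2 := by
  rw [creature, if_neg (by omega : ¬(2*m+2 ≤ 2*(m+1)-2)),
    if_neg (by omega : ¬(2*m+2 = 2*(m+1)-1)), if_pos (by omega : 2*m+2 = 2*(m+1))]

lemma creature_C (m i : ℕ) : creature (m+1) (2*m+3+2*i) = ((i+1 : ℕ) : ℤ) := by
  rcases Nat.eq_zero_or_pos i with rfl | hi
  · rw [creature, if_neg (by omega : ¬(2*m+3+2*0 ≤ 2*(m+1)-2)),
      if_neg (by omega : ¬(2*m+3+2*0 = 2*(m+1)-1)), if_neg (by omega : ¬(2*m+3+2*0 = 2*(m+1))),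
      if_pos (by omega : 2*m+3+2*0 = 2*(m+1)+1)]
    norm_num
  · rw [creature, if_neg (by omega : ¬(2*m+3+2*i ≤ 2*(m+1)-2)),
      if_neg (by omega : ¬(2*m+3+2*i = 2*(m+1)-1)), if_neg (by omega : ¬(2*m+3+2*i = 2*(m+1))),
      if_neg (by omega : ¬(2*m+3+2*i = 2*(m+1)+1)),
      if_neg (by omega : ¬(2*m+3+2*i) % 2 = 0),
      show (2*m+3+2*i-2*(m+1))/2 = i from by omega]
    push_cast; ring

lemma creature_D (m i : ℕ) : creature (m+1) (2*m+4+2*i) = -((i+2 : ℕ) : ℤ) := by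
  rw [creature, if_neg (by omega : ¬(2*m+4+2*i ≤ 2*(m+1)-2)),
    if_neg (by omega : ¬(2*m+4+2*i = 2*(m+1)-1)), if_neg (by omega : ¬(2*m+4+2*i = 2*(m+1))),
    if_neg (by omega : ¬(2*m+4+2*i = 2*(m+1)+1)),
    if_pos (by omega : (2*m+4+2*i) % 2 = 0),
    show (2*m+4+2*i-2*(m+1))/2 = i+1 from by omega]
  push_cast; ring

def ptL (m : ℕ) : List ℕ := List.ofFn (fun k : Fin (4*m+3) => pt m k.1)

lemma F_eq (m : ℕ) :
    (redSet (XYp (2*m+3)) (ΔYp (2*m+3))).filter (fun x => Km m ≤ x ∧ 2*x ≤ Nm m)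
      = (ptL m).toFinset := by
  have hKm : Km m = 16*m*m*m+48*m*m+36*m := rfl
  have hNm : Nm m = 2*(Km m) + 16*(m*m)+46*m+34 := rfl
  have hA : ∀ k, Am m k = Km m + (4*m+6)*k := fun _ => rfl
  have hB : ∀ k, Bm m k = Km m + (4*m+6)*k + (2*m+4) := fun _ => rfl
  have hC : ∀ k, Cm m k = Km m + 4*(m*m)+16*m+15 + (4*m+6)*k := fun _ => rfl
  have hD : ∀ k, Dm m k = Km m + 4*(m*m)+16*m+15 + (4*m+6)*k + (2*m+4) := fun _ => rfl
  have hG : Gm m = Km m + 4*(m*m)+14*m+13 := rfl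
  have hE6 : E6 m = Km m + 8*(m*m)+24*m+19 := rfl
  have r3 : (4*m+6)*m = 4*(m*m)+6*m := by ring
  ext x
  simp only [Finset.mem_filter, ptL, List.mem_toFinset, List.mem_ofFn]
  constructor
  · rintro ⟨hred, hKx, hNx⟩
    have hX : x ∈ XYp (2*m+3) := Finset.mem_of_mem_filter x hred
    have hwin := windowX m x hX (by omega) (by omega)
    rcases hwin with h | ⟨i, j, hij, h⟩ | ⟨i, j, hij, h⟩ | h | ⟨i, j, hi, hj, h⟩ |
      ⟨i, j, hi, hj, h⟩ | h
    · exfalso; omega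
    · rcases Nat.eq_zero_or_pos j with hj0 | hj0
      · subst hj0
        exact ⟨⟨2*i, by omega⟩, by show pt m (2*i) = x; rw [pt_A m i (by omega)]; omega⟩
      · exact absurd hred (not_redSet_A m i j x hij hj0 h)
    · rcases Nat.eq_zero_or_pos j with hj0 | hj0
      · subst hj0
        exact ⟨⟨2*i+1, by omega⟩, by show pt m (2*i+1) = x; rw [pt_B m i (by omega)]; omega⟩
      · rw [h] at hred
        exact absurd hred (not_redSet_B m i j hij hj0)
    · rw [h] at hred
      exact absurd hred (not_redSet_G m)
    · rcases Nat.eq_zero_or_pos j with hj0 | hj0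
      · subst hj0
        exact ⟨⟨2*m+2+2*i, by omega⟩, by show pt m (2*m+2+2*i) = x; rw [pt_C m i]; omega⟩
      · exact absurd hred (not_redSet_C m i j x hi hj0 hj h)
    · rcases Nat.eq_zero_or_pos j with hj0 | hj0
      · subst hj0
        exact ⟨⟨2*m+3+2*i, by omega⟩, by show pt m (2*m+3+2*i) = x; rw [pt_D m i]; omega⟩
      · rw [h] at hred
        exact absurd hred (not_redSet_D m i j hi hj0 hj)
    · exfalso; omega
  · rintro ⟨k, rfl⟩
    have hk := k.2
    have hcases : (∃ i, i ≤ m ∧ k.1 = 2*i) ∨ (∃ i, i ≤ m ∧ k.1 = 2*i+1) ∨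
        (∃ i, i ≤ m ∧ k.1 = 2*m+2+2*i) ∨ (∃ i, i + 1 ≤ m ∧ k.1 = 2*m+3+2*i) := by
      rcases Nat.lt_or_ge k.1 (2*m+2) with h1 | h1 <;>
        rcases Nat.mod_two_eq_zero_or_one k.1 with h2 | h2
      · exact Or.inl ⟨k.1/2, by omega, by omega⟩
      · exact Or.inr (Or.inl ⟨k.1/2, by omega, by omega⟩)
      · exact Or.inr (Or.inr (Or.inl ⟨(k.1-(2*m+2))/2, by omega, by omega⟩))
      · exact Or.inr (Or.inr (Or.inr ⟨(k.1-(2*m+3))/2, by omega, by omega⟩))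
    rcases hcases with ⟨i, hi, hk1⟩ | ⟨i, hi, hk1⟩ | ⟨i, hi, hk1⟩ | ⟨i, hi, hk1⟩ <;>
      rw [hk1]
    · rw [pt_A m i hi]
      have rim : (4*m+6)*i ≤ (4*m+6)*m := tmax m i m hi
      have hAi := hA i
      exact ⟨mem_redSet_A m i hi, by omega, by omega⟩
    · rw [pt_B m i hi]
      have rim : (4*m+6)*i ≤ (4*m+6)*m := tmax m i m hi
      have hBi := hB i
      exact ⟨mem_redSet_B m i hi, by omega, by omega⟩
    · rw [pt_C m i]
      have rim : (4*m+6)*i ≤ (4*m+6)*m := tmax m i m hi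
      have hCi := hC i
      exact ⟨mem_redSet_C m i hi, by omega, by omega⟩
    · rw [pt_D m i]
      have rim : (4*m+6)*i ≤ (4*m+6)*m := tmax m i m (by omega)
      have hDi := hD i
      have rim2 : (4*m+6)*(i+1) ≤ (4*m+6)*m := tmax m (i+1) m hi
      have m1 : (4*m+6)*(i+1) = (4*m+6)*i + (4*m+6) := by ring
      exact ⟨mem_redSet_D m i hi, by omega, by omega⟩

lemma master (m : ℕ) :
    ((redSet (XYp (2*m+3)) (ΔYp (2*m+3))).filter (fun x => Km m ≤ x ∧ 2*x ≤ Nm m)).card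
      = 4*m+3 ∧
    (((redSet (XYp (2*m+3)) (ΔYp (2*m+3))).filter
        (fun x => Km m ≤ x ∧ 2*x ≤ Nm m)).sort (· ≤ ·)).map
          (redDelta (XYp (2*m+3)) (ΔYp (2*m+3)))
      = List.ofFn (fun k : Fin (4*m+3) => creature (m+1) (k.1+1)) := by
  have hpair : (ptL m).Pairwise (· < ·) :=
    List.pairwise_ofFn.2 (fun i j hij => pt_mono m i.1 j.1 hij j.2)
  have hnodup : (ptL m).Nodup := hpair.imp ne_of_lt
  have hsorted : (ptL m).Pairwise (· ≤ ·) := hpair.imp le_of_lt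
  have hsort : (ptL m).toFinset.sort (· ≤ ·) = ptL m :=
    (List.toFinset_sort _ hnodup).2 hsorted
  constructor
  · rw [F_eq, List.toFinset_card_of_nodup hnodup]
    simp [ptL]
  · rw [F_eq, hsort, ptL, List.map_ofFn]
    refine congrArg List.ofFn (funext fun k => ?_)
    have hk := k.2
    have hcases : (∃ i, i ≤ m ∧ k.1 = 2*i) ∨ (∃ i, i ≤ m ∧ k.1 = 2*i+1) ∨
        (∃ i, i ≤ m ∧ k.1 = 2*m+2+2*i) ∨ (∃ i, i + 1 ≤ m ∧ k.1 = 2*m+3+2*i) := by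
      rcases Nat.lt_or_ge k.1 (2*m+2) with h1 | h1 <;>
        rcases Nat.mod_two_eq_zero_or_one k.1 with h2 | h2
      · exact Or.inl ⟨k.1/2, by omega, by omega⟩
      · exact Or.inr (Or.inl ⟨k.1/2, by omega, by omega⟩)
      · exact Or.inr (Or.inr (Or.inl ⟨(k.1-(2*m+2))/2, by omega, by omega⟩))
      · exact Or.inr (Or.inr (Or.inr ⟨(k.1-(2*m+3))/2, by omega, by omega⟩))
    show redDelta (XYp (2*m+3)) (ΔYp (2*m+3)) (pt m k.1) = creature (m+1) (k.1+1)
    rcases hcases with ⟨i, hi, hk1⟩ | ⟨i, hi, hk1⟩ | ⟨i, hi, hk1⟩ | ⟨i, hi, hk1⟩ <;>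
      rw [hk1]
    · rw [pt_A m i hi, redDelta_A m i hi, creature_A m i hi]
    · rw [pt_B m i hi]
      rcases Nat.lt_or_ge i m with him | him
      · rw [redDelta_B m i him, show 2*i+1+1 = 2*i+2 from rfl, creature_B m i him]
      · rw [show i = m from by omega]
        rw [redDelta_Bm m, show 2*m+1+1 = 2*m+2 from rfl, creature_Bm m]
    · rw [pt_C m i, redDelta_C m i hi, show 2*m+2+2*i+1 = 2*m+3+2*i from by ring,
        creature_C m i]
    · rw [pt_D m i, redDelta_D m i hi, show 2*m+3+2*i+1 = 2*m+4+2*i from by ring,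
        creature_D m i]


/-- for odd `p = 2ξ+1 ≥ 3` and `K = (ξ-1)(r₋+r₊)`, the part of the reduced
delta sequence `(X̃_{Y_p}, Δ̃_{Y_p})` of `Σ(p,2p-1,2p+1)` lying in `[K, N_p/2]` has exactly
`4ξ-1` elements, and, listed in increasing order, its values form the creature sequence
`Δ_{C_p}`. -/
theorem stmt_11 (p ξ : ℕ) (hξ : 1 ≤ ξ) (hp : p = 2*ξ + 1) :
    ((redSet (XYp p) (ΔYp p)).filter
        (fun x => (ξ - 1) * (rMinus p + rPlus p) ≤ x ∧ 2*x ≤ NP p)).card = 4*ξ - 1 ∧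
    (((redSet (XYp p) (ΔYp p)).filter
        (fun x => (ξ - 1) * (rMinus p + rPlus p) ≤ x ∧ 2*x ≤ NP p)).sort (· ≤ ·)).map
          (redDelta (XYp p) (ΔYp p))
      = List.ofFn (fun i : Fin (4*ξ - 1) => creature ξ (i.1 + 1)) := by
  obtain ⟨m, rfl⟩ : ∃ m, ξ = m + 1 := ⟨ξ - 1, by omega⟩
  subst hp
  have h23 : 2*(m+1)+1 = 2*m+3 := by ring
  rw [h23]
  have hfil : ((redSet (XYp (2*m+3)) (ΔYp (2*m+3))).filter
      (fun x => (m+1-1) * (rMinus (2*m+3) + rPlus (2*m+3)) ≤ x ∧ 2*x ≤ NP (2*m+3)))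
      = ((redSet (XYp (2*m+3)) (ΔYp (2*m+3))).filter
      (fun x => Km m ≤ x ∧ 2*x ≤ Nm m)) := by
    apply Finset.filter_congr
    intro x _
    have e1 : (m+1-1) * (rMinus (2*m+3) + rPlus (2*m+3)) = Km m := by
      rw [rm_eq, rp_eq]
      show m * (8*m*m+22*m+15 + (8*m*m+26*m+21)) = Km m
      show _ = 16*m*m*m+48*m*m+36*m
      ring
    rw [e1, NP_eq]
  rw [hfil]
  obtain ⟨hcard, hmap⟩ := master m
  refine ⟨by rw [hcard]; omega, ?_⟩
  rw [hmap]
  have hlen : 4*(m+1)-1 = 4*m+3 := by omega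
  rw [hlen]
end
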